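/- arXiv:1011.6082 — 10 statements merged into one kernel-verified Lean document; each statement's English description precedes it below -/
import Mathlib

section
/- Let B ∈ {-1,1}^t and let R^0 = B, R^1, …, R^t = -B be a sequence of sign vectors such that for each k, R^{k-1} and R^k differ in exactly one coordinate l_k, and the coordinates l_1, …, l_t are pairwise distinct (hence a permutation of {1,…,t}). Then the t × t matrix M whose rows are R^0, R^1, …, R^{t-1} is nonsingular and |det M| = 2^{t-1}. -/
open Finset Matrix

lemma fin_sub_one_val {t : ℕ} [NeZero t] (i : Fin t) (hi : i ≠ 0) :
    ((i - 1 : Fin t) : ℕ) = (i : ℕ) - 1 := by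
  have hv : (i : ℕ) ≠ 0 := Fin.val_ne_zero_iff.mpr hi
  have hlt := i.isLt
  have h1 : ((1 : Fin t) : ℕ) = 1 % t := rfl
  rw [Fin.sub_def]
  simp only [h1]
  rcases Nat.lt_or_ge 1 t with h | h
  · rw [Nat.mod_eq_of_lt h]
    have h2 : t - 1 + (i : ℕ) = ((i : ℕ) - 1) + t := by omega
    rw [h2, Nat.add_mod_right, Nat.mod_eq_of_lt (by omega)]
  · omega

theorem stmt_2 (t : ℕ) (ht : 0 < t)
    (B : Fin t → ℝ) (hB : ∀ j, B j = -1 ∨ B j = 1)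
    (R : Fin (t + 1) → Fin t → ℝ)
    (hsign : ∀ k j, R k j = -1 ∨ R k j = 1)
    (hR0 : R 0 = B) (hRt : R (Fin.last t) = -B)
    (l : Fin t → Fin t) (hl : Function.Injective l)
    (hstep : ∀ (k : Fin t) (j : Fin t), R k.castSucc j ≠ R k.succ j ↔ j = l k) :
    (Matrix.of fun i j : Fin t => R i.castSucc j).det ≠ 0 ∧
    |(Matrix.of fun i j : Fin t => R i.castSucc j).det| = 2 ^ (t - 1) := by
  haveI : NeZero t := ⟨ht.ne'⟩
  have h0val : ((0 : Fin t) : ℕ) = 0 := by simp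
  have hvne : ∀ i : Fin t, i ≠ 0 → (i : ℕ) ≠ 0 := by
    intro i hi; exact Fin.val_ne_zero_iff.mpr hi
  set M : Matrix (Fin t) (Fin t) ℝ := Matrix.of fun i j : Fin t => R i.castSucc j with hM
  -- the permutation π i = l (i - 1)
  set lE : Fin t ≃ Fin t := Equiv.ofBijective l (Finite.injective_iff_bijective.mp hl) with hlE
  set π : Equiv.Perm (Fin t) := (Equiv.subRight (1 : Fin t)).trans lE with hπ
  have hπ_apply : ∀ i, π i = l (i - 1) := fun i => rfl
  -- key step fact rewritten for i ≠ 0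
  have hsucc : ∀ i : Fin t, i ≠ 0 → (i - 1).succ = i.castSucc := by
    intro i hi
    have h1 := fin_sub_one_val i hi
    have h2 : 0 < (i : ℕ) := Nat.pos_of_ne_zero (hvne i hi)
    ext
    simp [h1]
    omega
  have hstep' : ∀ i : Fin t, i ≠ 0 → ∀ j,
      R (i - 1).castSucc j ≠ R i.castSucc j ↔ j = π i := by
    intro i hi j
    rw [hπ_apply, ← hsucc i hi]
    exact hstep (i - 1) j
  -- the entries of the difference matrix
  set g : Fin t → ℝ := fun i =>
    if i = 0 then B (π 0) else R i.castSucc (π i) - R (i - 1).castSucc (π i) with hg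
  have hg0 : g 0 = B (π 0) := by simp [hg]
  have hgne : ∀ i, i ≠ 0 → |g i| = 2 := by
    intro i hi
    have hne : R (i - 1).castSucc (π i) ≠ R i.castSucc (π i) := (hstep' i hi (π i)).2 rfl
    have h1 := hsign i.castSucc (π i)
    have h2 := hsign (i - 1).castSucc (π i)
    simp only [hg, if_neg hi]
    rcases h1 with h1 | h1 <;> rcases h2 with h2 | h2
    · exact absurd (h2.trans h1.symm) hne
    · rw [h1, h2]; norm_num
    · rw [h1, h2]; norm_num
    · exact absurd (h2.trans h1.symm) hne
  have hgabs0 : |g 0| = 1 := by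
    rw [hg0]; rcases hB (π 0) with h | h <;> rw [h] <;> norm_num
  have hgnz : ∀ i, g i ≠ 0 := by
    intro i
    by_cases hi : i = 0
    · subst hi; intro h; rw [h] at hgabs0; norm_num at hgabs0
    · intro h; have := hgne i hi; rw [h] at this; norm_num at this
  -- the generalized permutation matrix
  set N : Matrix (Fin t) (Fin t) ℝ :=
    Matrix.of fun i j => g i * if j = π i then 1 else 0 with hN
  -- N = diagonal g * permMatrix
  have hNfact : N = Matrix.diagonal g * (π.permMatrix ℝ) := by
    ext i j
    rw [Matrix.diagonal_mul]
    simp [hN, Equiv.Perm.permMatrix, PEquiv.toMatrix_apply, Equiv.toPEquiv_apply, eq_comm]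
  have hNdet : |N.det| = |g 0| * 2 ^ (t - 1) := by
    rw [hNfact, Matrix.det_mul, Matrix.det_diagonal, Matrix.det_permutation]
    rw [abs_mul]
    have hsgn : |((Equiv.Perm.sign π : ℤ) : ℝ)| = 1 := by
      rcases Int.units_eq_one_or (Equiv.Perm.sign π) with h | h <;> rw [h] <;> norm_num
    rw [hsgn, mul_one, Finset.abs_prod,
      ← Finset.mul_prod_erase Finset.univ _ (Finset.mem_univ (0 : Fin t))]
    congr 1
    rw [Finset.prod_congr rfl (fun i hi => hgne i (Finset.ne_of_mem_erase hi)),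
      Finset.prod_const, Finset.card_erase_of_mem (Finset.mem_univ _), Finset.card_univ,
      Fintype.card_fin]
  -- the difference (elementary) matrix S, lower triangular with unit diagonal
  set S : Matrix (Fin t) (Fin t) ℝ :=
    Matrix.of fun i k : Fin t => if k = i then 1 else if (k : ℕ) + 1 = (i : ℕ) then -1 else 0
      with hS
  have hSdet : S.det = 1 := by
    have htri : S.BlockTriangular OrderDual.toDual := by
      intro i k h
      have hik : (i : ℕ) < (k : ℕ) := h
      simp only [hS, Matrix.of_apply]
      rw [if_neg (by intro hk; subst hk; omega), if_neg (by omega)]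
    rw [Matrix.det_of_lowerTriangular S htri]
    simp [hS]
  -- S * M = updateRow 0 B of N
  have hSM : S * M = N.updateRow 0 B := by
    ext i j
    rw [Matrix.mul_apply]
    have hsplit : ∀ k : Fin t, S i k * M k j =
        (if k = i then M k j else 0) + (if (k : ℕ) + 1 = (i : ℕ) then -M k j else 0) := by
      intro k
      simp only [hS, Matrix.of_apply]
      by_cases h1 : k = i
      · rw [if_pos h1, if_pos h1, if_neg (by subst h1; omega)]; ring
      · rw [if_neg h1, if_neg h1]
        by_cases h2 : (k : ℕ) + 1 = (i : ℕ)
        · rw [if_pos h2, if_pos h2]; ring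
        · rw [if_neg h2, if_neg h2]; ring
    rw [Finset.sum_congr rfl fun k _ => hsplit k, Finset.sum_add_distrib,
      Finset.sum_ite_eq' Finset.univ i (fun k => M k j), if_pos (Finset.mem_univ _)]
    by_cases hi : i = 0
    · subst hi
      rw [Finset.sum_eq_zero (fun k _ => by rw [if_neg (by omega)])]
      simp [hM, hR0]
    · have hi1 : ((i - 1 : Fin t) : ℕ) = (i : ℕ) - 1 := fin_sub_one_val i hi
      have hipos : 0 < (i : ℕ) := Nat.pos_of_ne_zero (hvne i hi)
      rw [Finset.sum_eq_single (i - 1)]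
      · rw [if_pos (by omega)]
        rw [Matrix.updateRow_ne hi]
        simp only [hN, Matrix.of_apply, hM]
        by_cases hj : j = π i
        · rw [if_pos hj, mul_one]
          simp only [hg]
          rw [if_neg hi, hj]
          ring
        · rw [if_neg hj, mul_zero]
          have heq : R (i - 1).castSucc j = R i.castSucc j := by
            by_contra hne
            exact hj ((hstep' i hi j).1 hne)
          rw [heq]; ring
      · intro k _ hk
        rw [if_neg (by intro h; apply hk; ext; omega)]
      · intro h; exact absurd (Finset.mem_univ _) h
  -- B is a linear combination of the rows of N
  set c : Fin t → ℝ := fun i => B (π i) / g i with hc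
  have hc0 : c 0 = 1 := by
    rw [hc]; simp only [hg0]
    exact div_self (by rw [← hg0]; exact hgnz 0)
  have hBcomb : B = ∑ k, c k • N k := by
    funext j
    have hterm : ∀ k : Fin t, (c k • N k) j = if k = π.symm j then B j else 0 := by
      intro k
      simp only [Pi.smul_apply, smul_eq_mul, hN, Matrix.of_apply]
      by_cases hk : k = π.symm j
      · rw [if_pos hk, if_pos (by rw [hk, Equiv.apply_symm_apply]), mul_one, hc,
          div_mul_cancel₀ _ (hgnz k), hk, Equiv.apply_symm_apply]
      · rw [if_neg hk, if_neg (by intro h; exact hk (by rw [h, Equiv.symm_apply_apply])),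
          mul_zero, mul_zero]
    rw [Finset.sum_apply, Finset.sum_congr rfl fun k _ => hterm k,
      Finset.sum_ite_eq' Finset.univ (π.symm j) (fun _ => B j), if_pos (Finset.mem_univ _)]
  have hdetMN : |M.det| = |N.det| := by
    have hdd : S.det * M.det = (N.updateRow 0 B).det := by rw [← Matrix.det_mul, hSM]
    rw [hSdet, one_mul] at hdd
    rw [hdd, hBcomb, Matrix.det_updateRow_sum, hc0, one_smul]
  constructor
  · intro h
    rw [h] at hdetMN
    rw [hNdet, hgabs0, one_mul] at hdetMN
    simp at hdetMN
    exact absurd hdetMN.symm (by positivity)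
  · rw [hdetMN, hNdet, hgabs0, one_mul]
end

section
/- Let B ∈ {-1,1}^t and let R^0 = B, R^1, …, R^t = -B be sign vectors such that R^{k-1} and R^k differ exactly in coordinate l_k, with l_1,…,l_t a permutation of {1,…,t}. Let M be the matrix with rows R^0,…,R^{t-1}. Then the i-th row of M^{-1} equals (1/2)·B(i)·(σ(k) - σ(k+1)) if i = l_k for some k < t, and equals (1/2)·B(i)·(σ(1) + σ(t)) if i = l_t, where σ(j) is the j-th standard basis row vector. -/
open Finset Matrix

private lemma sign_flip {a b : ℝ} (ha : a = -1 ∨ a = 1) (hb : b = -1 ∨ b = 1)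
    (hab : a ≠ b) : b = -a := by
  rcases ha with h | h <;> rcases hb with h' | h' <;> subst h <;> subst h' <;> norm_num at *

theorem stmt_3 (t : ℕ) (ht : 0 < t)
    (B : Fin t → ℝ) (hB : ∀ j, B j = -1 ∨ B j = 1)
    (R : Fin (t + 1) → Fin t → ℝ)
    (hsign : ∀ k j, R k j = -1 ∨ R k j = 1)
    (hR0 : R 0 = B) (hRt : R (Fin.last t) = -B)
    (l : Fin t → Fin t) (hl : Function.Bijective l)
    (hstep : ∀ (k : Fin t) (j : Fin t), R k.castSucc j ≠ R k.succ j ↔ j = l k) :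
    (∀ k : Fin t, (k : ℕ) + 1 < t → ∀ j : Fin t,
      (Matrix.of fun i j : Fin t => R i.castSucc j)⁻¹ (l k) j
        = 1 / 2 * B (l k) *
            ((if j = k then (1 : ℝ) else 0) - (if (j : ℕ) = (k : ℕ) + 1 then 1 else 0))) ∧
    (∀ k : Fin t, (k : ℕ) + 1 = t → ∀ j : Fin t,
      (Matrix.of fun i j : Fin t => R i.castSucc j)⁻¹ (l k) j
        = 1 / 2 * B (l k) *
            ((if (j : ℕ) = 0 then (1 : ℝ) else 0) + (if (j : ℕ) = t - 1 then 1 else 0))) := by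
  set M : Matrix (Fin t) (Fin t) ℝ := Matrix.of fun i j : Fin t => R i.castSucc j with hM
  set e : Fin t ≃ Fin t := Equiv.ofBijective l hl with he
  have hel : ∀ k, e k = l k := fun k => rfl
  have hes : ∀ k, e.symm (l k) = k := fun k => by
    rw [← hel k, Equiv.symm_apply_apply]
  -- key: value of coordinate j at time m
  have key : ∀ (m : Fin (t+1)) (j : Fin t),
      R m j = if (m : ℕ) ≤ (e.symm j : ℕ) then B j else -B j := by
    intro m
    induction m using Fin.induction with
    | zero => intro j; simp [hR0]
    | succ m ih =>
      intro j
      by_cases hj : j = l m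
      · have hne : R m.castSucc j ≠ R m.succ j := (hstep m j).2 hj
        have h1 : R m.castSucc j = B j := by
          rw [ih j]; subst hj; simp [hes]
        have h2 : R m.succ j = -B j := by
          rw [sign_flip (hsign _ _) (hsign _ _) hne, h1]
        rw [h2]
        subst hj
        have : ¬ ((m : ℕ) + 1 ≤ ((e.symm (l m)) : ℕ)) := by
          rw [hes]; omega
        rw [Fin.val_succ, if_neg this]
      · have heq : R m.castSucc j = R m.succ j := by
          by_contra hne
          exact hj ((hstep m j).1 hne)
        have hnk : (e.symm j : ℕ) ≠ (m : ℕ) := by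
          intro h
          apply hj
          have : e.symm j = m := Fin.ext h
          rw [← hel, ← this, Equiv.apply_symm_apply]
        rw [← heq, ih j]
        have hms : (m.succ : ℕ) = (m : ℕ) + 1 := rfl
        have hmc : (m.castSucc : ℕ) = (m : ℕ) := rfl
        rw [hms, hmc]
        have : ((m : ℕ) ≤ (e.symm j : ℕ)) ↔ ((m : ℕ) + 1 ≤ (e.symm j : ℕ)) := by omega
        by_cases hc : (m : ℕ) ≤ (e.symm j : ℕ)
        · rw [if_pos hc, if_pos (this.1 hc)]
        · rw [if_neg hc, if_neg (fun h => hc (this.2 h))]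
  set N : Matrix (Fin t) (Fin t) ℝ := fun i j =>
    if ((e.symm i : ℕ)) + 1 < t then
      1/2 * B i * ((if j = e.symm i then 1 else 0)
        - (if (j:ℕ) = (e.symm i : ℕ) + 1 then 1 else 0))
    else
      1/2 * B i * ((if (j:ℕ) = 0 then 1 else 0) + (if (j:ℕ) = t - 1 then 1 else 0))
    with hN
  have hBsq : ∀ i, B i * B i = 1 := by
    intro i; rcases hB i with h | h <;> rw [h] <;> norm_num
  have hNM : N * M = 1 := by
    ext i j
    rw [Matrix.mul_apply, Matrix.one_apply]
    set k : Fin t := e.symm i with hk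
    have hik : i = l k := by rw [← hel, hk, Equiv.apply_symm_apply]
    by_cases hc : (k : ℕ) + 1 < t
    · set k1 : Fin t := ⟨(k : ℕ) + 1, hc⟩ with hk1
      have hval : ∀ x : Fin t, N i x
          = 1/2 * B i * ((if x = k then 1 else 0) - (if x = k1 then 1 else 0)) := by
        intro x
        rw [hN]
        simp only [← hk]
        rw [if_pos hc]
        congr 2
        have : ((x : ℕ) = (k : ℕ) + 1) ↔ x = k1 := by
          constructor
          · intro h; exact Fin.ext h
          · intro h; rw [h]
        by_cases hx : x = k1
        · rw [if_pos hx, if_pos (this.2 hx)]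
        · rw [if_neg hx, if_neg (fun h => hx (this.1 h))]
      have hsum : ∑ x, N i x * M x j
          = 1/2 * B i * (M k j - M k1 j) := by
        simp only [hval, sub_mul, ite_mul, one_mul, zero_mul, mul_sub, mul_assoc]
        rw [Finset.sum_sub_distrib]
        simp [← Finset.mul_sum, Finset.sum_ite_eq', mul_sub]
      rw [hsum]
      have hMk : M k j = R k.castSucc j := rfl
      have hMk1 : M k1 j = R k1.castSucc j := rfl
      rw [hMk, hMk1, key, key]
      have hck : ((k.castSucc : Fin (t+1)) : ℕ) = (k : ℕ) := rfl
      have hck1 : ((k1.castSucc : Fin (t+1)) : ℕ) = (k : ℕ) + 1 := rfl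
      rw [hck, hck1]
      by_cases hij : i = j
      · have hje : (e.symm j : ℕ) = (k : ℕ) := by rw [← hij, ← hk]
        rw [hje, if_pos (le_refl _), if_neg (by omega)]
        rw [if_pos hij]
        have : B j = B i := by rw [hij]
        rw [this]
        have := hBsq i
        ring_nf
        ring_nf at this
        linarith [this]
      · have hje : (e.symm j : ℕ) ≠ (k : ℕ) := by
          intro h
          apply hij
          have : e.symm j = k := Fin.ext h
          rw [hk] at this
          exact (e.symm.injective this).symm
        rw [if_neg hij]
        by_cases hle : (k : ℕ) ≤ (e.symm j : ℕ)
        · rw [if_pos hle, if_pos (by omega)]; ring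
        · rw [if_neg hle, if_neg (by omega)]; ring
    · -- last row: (k : ℕ) = t - 1
      have hkt : (k : ℕ) = t - 1 := by have := k.isLt; omega
      set z0 : Fin t := ⟨0, ht⟩ with hz0
      have hval : ∀ x : Fin t, N i x
          = 1/2 * B i * ((if x = z0 then 1 else 0) + (if x = k then 1 else 0)) := by
        intro x
        rw [hN]
        simp only [← hk]
        rw [if_neg hc]
        congr 2
        · by_cases hx : x = z0
          · rw [if_pos hx, if_pos (by rw [hx])]
          · rw [if_neg hx, if_neg (fun h => hx (Fin.ext h))]
        · by_cases hx : x = k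
          · rw [if_pos hx, if_pos (by rw [hx, hkt])]
          · rw [if_neg hx, if_neg (fun h => hx (Fin.ext (by rw [h, hkt])))]
      have hsum : ∑ x, N i x * M x j
          = 1/2 * B i * (M z0 j + M k j) := by
        simp only [hval, add_mul, ite_mul, one_mul, zero_mul, mul_add, mul_assoc]
        rw [Finset.sum_add_distrib]
        simp [Finset.sum_ite_eq', mul_add]
      rw [hsum]
      have hMz : M z0 j = R z0.castSucc j := rfl
      have hMk : M k j = R k.castSucc j := rfl
      rw [hMz, hMk, key, key]
      have hcz : ((z0.castSucc : Fin (t+1)) : ℕ) = 0 := rfl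
      have hck : ((k.castSucc : Fin (t+1)) : ℕ) = (k : ℕ) := rfl
      rw [hcz, hck]
      rw [if_pos (Nat.zero_le _)]
      by_cases hij : i = j
      · have hje : (e.symm j : ℕ) = (k : ℕ) := by rw [← hij, ← hk]
        rw [hje, if_pos (le_refl _), if_pos hij]
        have : B j = B i := by rw [hij]
        rw [this]
        have := hBsq i
        linarith [this]
      · have hje : (e.symm j : ℕ) ≠ (k : ℕ) := by
          intro h
          apply hij
          have : e.symm j = k := Fin.ext h
          rw [hk] at this
          exact (e.symm.injective this).symm
        have hlt : ¬ ((k : ℕ) ≤ (e.symm j : ℕ)) := by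
          have := (e.symm j).isLt; omega
        rw [if_neg hlt, if_neg hij]
        ring
  have hinv : M⁻¹ = N := Matrix.inv_eq_left_inv hNM
  constructor
  · intro k hk j
    rw [hinv, hN]
    simp only [hes]
    rw [if_pos hk]
  · intro k hk j
    rw [hinv, hN]
    simp only [hes]
    rw [if_neg (by omega)]
end

section
/- Let B ∈ {-1,1}^t, let (R^0 = B, R^1, …, R^t = -B) be a sequence of sign vectors with R^{k-1}, R^k differing in exactly one coordinate l_k and l_1,…,l_t a permutation of {1,…,t}, and let M be the matrix with rows R^0,…,R^{t-1}. Then for every T ∈ {-1,1}^t, the coordinate vector x := T·M^{-1} satisfies x ∈ {-1,0,1}^t. -/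
open Finset Matrix

theorem stmt_4 (t : ℕ) (ht : 0 < t)
    (B : Fin t → ℝ) (hB : ∀ j, B j = -1 ∨ B j = 1)
    (R : Fin (t + 1) → Fin t → ℝ)
    (hsign : ∀ k j, R k j = -1 ∨ R k j = 1)
    (hR0 : R 0 = B) (hRt : R (Fin.last t) = -B)
    (l : Fin t → Fin t) (hl : Function.Bijective l)
    (hstep : ∀ (k : Fin t) (j : Fin t), R k.castSucc j ≠ R k.succ j ↔ j = l k)
    (T : Fin t → ℝ) (hT : ∀ j, T j = -1 ∨ T j = 1) :
    ∀ i : Fin t,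
      Matrix.vecMul T (Matrix.of fun i j : Fin t => R i.castSucc j)⁻¹ i = -1 ∨
      Matrix.vecMul T (Matrix.of fun i j : Fin t => R i.castSucc j)⁻¹ i = 0 ∨
      Matrix.vecMul T (Matrix.of fun i j : Fin t => R i.castSucc j)⁻¹ i = 1 := by
  classical
  have hBsq : ∀ j, B j * B j = 1 := fun j => by rcases hB j with h | h <;> rw [h] <;> ring
  set M : Matrix (Fin t) (Fin t) ℝ := Matrix.of fun i j : Fin t => R i.castSucc j with hMdef
  let e : Fin t ≃ Fin t := Equiv.ofBijective l hl
  have he : ∀ k, e k = l k := fun _ => rfl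
  have hRval : ∀ (i : Fin (t + 1)) (j : Fin t),
      R i j = if (i : ℕ) ≤ (e.symm j : ℕ) then B j else -B j := by
    intro i
    induction i using Fin.induction with
    | zero => intro j; simp [hR0]
    | succ k ih =>
      intro j
      by_cases hj : j = l k
      · have hsk : e.symm j = k := by rw [hj, ← he]; exact e.symm_apply_apply k
        have h1 : R k.castSucc j = B j := by
          rw [ih j, hsk, if_pos (by simp)]
        have hne : R k.castSucc j ≠ R k.succ j := (hstep k j).mpr hj
        have h2 : R k.succ j = -R k.castSucc j := by
          rcases hsign k.castSucc j with ha | ha <;> rcases hsign k.succ j with hb | hb <;>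
            first
              | exact absurd (ha.trans hb.symm) hne
              | simp [ha, hb]
        rw [h2, h1, hsk, if_neg (by simp [Fin.val_succ])]
      · have heq : R k.castSucc j = R k.succ j :=
          not_not.mp fun hne => hj ((hstep k j).mp hne)
        have hsk : (e.symm j : ℕ) ≠ (k : ℕ) := by
          intro h
          apply hj
          have h' : e.symm j = k := Fin.ext h
          calc j = e (e.symm j) := (e.apply_symm_apply j).symm
            _ = l k := by rw [h', he]
        rw [← heq, ih j]
        exact if_congr (by simp only [Fin.coe_castSucc, Fin.val_succ]; omega) rfl rfl
  have main : ∀ T' : Fin t → ℝ,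
      ∃ x : Fin t → ℝ, Matrix.vecMul x M = T' ∧
        ((∀ j, T' j = -1 ∨ T' j = 1) → ∀ k, x k = -1 ∨ x k = 0 ∨ x k = 1) := by
    intro T'
    set F : ℕ → ℝ := fun n => if h : n < t then T' (l ⟨n, h⟩) * B (l ⟨n, h⟩) else 0 with hF
    obtain ⟨X, hX0, hXs⟩ :
        ∃ X : ℕ → ℝ, X 0 = (F 0 + F (t - 1)) / 2 ∧ ∀ m, X (m + 1) = (F (m + 1) - F m) / 2 :=
      ⟨fun n => match n with
        | 0 => (F 0 + F (t - 1)) / 2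
        | m + 1 => (F (m + 1) - F m) / 2, rfl, fun m => rfl⟩
    have hsum : ∀ n, n < t → ∑ k ∈ Finset.range (n + 1), X k = (F n + F (t - 1)) / 2 := by
      intro n hn
      induction n with
      | zero => simp [hX0]
      | succ m ih =>
        rw [Finset.sum_range_succ, ih (by omega), hXs]
        ring
    have hFval : (∀ j, T' j = -1 ∨ T' j = 1) → ∀ n, n < t → F n = -1 ∨ F n = 1 := by
      intro hT' n hn
      simp only [hF]
      rw [dif_pos hn]
      rcases hT' (l ⟨n, hn⟩) with h | h <;> rcases hB (l ⟨n, hn⟩) with h' | h' <;>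
        rw [h, h'] <;> norm_num
    refine ⟨fun k => X (k : ℕ), ?_, ?_⟩
    · funext j
      have hsj : ((e.symm j : Fin t) : ℕ) < t := (e.symm j).isLt
      set s := ((e.symm j : Fin t) : ℕ) with hs
      have hMval : ∀ k : Fin t, M k j = if (k : ℕ) ≤ s then B j else -B j := by
        intro k
        have := hRval k.castSucc j
        exact this
      have hstart : Matrix.vecMul (fun k : Fin t => X (k : ℕ)) M j
          = ∑ k : Fin t, X (k : ℕ) * M k j := by
        simp [Matrix.vecMul, dotProduct]
      have hconv : ∑ k : Fin t, X (k : ℕ) * M k j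
          = ∑ n ∈ Finset.range t, X n * (if n ≤ s then B j else -B j) := by
        rw [← Fin.sum_univ_eq_sum_range (fun n => X n * (if n ≤ s then B j else -B j)) t]
        exact Finset.sum_congr rfl fun k _ => by rw [hMval k]
      have h1 : ∑ n ∈ Finset.range (s + 1), X n * (if n ≤ s then B j else -B j)
          = (∑ n ∈ Finset.range (s + 1), X n) * B j := by
        rw [Finset.sum_mul]
        exact Finset.sum_congr rfl fun n hn => by
          rw [if_pos (Nat.lt_succ_iff.mp (Finset.mem_range.mp hn))]
      have h2 : ∑ n ∈ Finset.Ico (s + 1) t, X n * (if n ≤ s then B j else -B j)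
          = -(∑ n ∈ Finset.Ico (s + 1) t, X n) * B j := by
        rw [neg_mul, Finset.sum_mul, ← Finset.sum_neg_distrib]
        exact Finset.sum_congr rfl fun n hn => by
          rw [if_neg (by have := (Finset.mem_Ico.mp hn).1; omega)]
          ring
      have hIco : ∑ n ∈ Finset.Ico (s + 1) t, X n
          = (∑ n ∈ Finset.range t, X n) - ∑ n ∈ Finset.range (s + 1), X n := by
        rw [eq_sub_iff_add_eq, add_comm, Finset.range_eq_Ico, Finset.range_eq_Ico]
        exact Finset.sum_Ico_consecutive X (Nat.zero_le _) (by omega : s + 1 ≤ t)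
      have hS : ∑ n ∈ Finset.range t, X n = F (t - 1) := by
        have h := hsum (t - 1) (by omega)
        have ht' : t - 1 + 1 = t := by omega
        rw [ht'] at h
        rw [h]
        ring
      have hA := hsum s hsj
      have hFs : F s = T' j * B j := by
        have hj' : l ⟨s, hsj⟩ = j := by
          have h' : (⟨s, hsj⟩ : Fin t) = e.symm j := Fin.ext rfl
          rw [h', ← he, e.apply_symm_apply]
        simp only [hF]
        rw [dif_pos hsj, hj']
      rw [hstart, hconv, Finset.range_eq_Ico,
        ← Finset.sum_Ico_consecutive _ (Nat.zero_le (s + 1)) (by omega : s + 1 ≤ t),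
        ← Finset.range_eq_Ico, h1, h2, hA, hIco, hS, hA, hFs]
      linear_combination T' j * hBsq j
    · intro hT' k
      show X (k : ℕ) = -1 ∨ X (k : ℕ) = 0 ∨ X (k : ℕ) = 1
      cases hkv : (k : ℕ) with
      | zero =>
        rw [hX0]
        rcases hFval hT' 0 ht with h | h <;>
          rcases hFval hT' (t - 1) (by omega) with h' | h' <;> rw [h, h'] <;> norm_num
      | succ m =>
        have hm1 : m + 1 < t := by rw [← hkv]; exact k.isLt
        rw [hXs]
        rcases hFval hT' (m + 1) hm1 with h | h <;>
          rcases hFval hT' m (by omega) with h' | h' <;> rw [h, h'] <;> norm_num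
  have hMunit : IsUnit M := by
    rw [← Matrix.vecMul_surjective_iff_isUnit]
    intro T'
    obtain ⟨x, hx, -⟩ := main T'
    exact ⟨x, hx⟩
  obtain ⟨x, hx, hprop⟩ := main T
  have hxT : Matrix.vecMul T M⁻¹ = x := by
    rw [← hx, Matrix.vecMul_vecMul,
      Matrix.mul_nonsing_inv _ ((Matrix.isUnit_iff_isUnit_det M).mp hMunit),
      Matrix.vecMul_one]
  intro i
  rw [hxT]
  exact hprop hT i
end

section
/- With B, (R^0,…,R^t), M as above, define R^{k+t} := -R^k for 0 ≤ k ≤ t-1, giving the vertex set V(R) := {R^0,…,R^{2t-1}} of a symmetric cycle. Then for every T ∈ {-1,1}^t there exists a subset Q(T,R) ⊆ V(R) of odd cardinality consisting of linearly independent vectors such that T = Σ_{Q ∈ Q(T,R)} Q; explicitly Q(T,R) = {x_i · R^{i-1} : x_i ≠ 0} where x = T·M^{-1} ∈ {-1,0,1}^t. -/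
open Finset Matrix

theorem stmt_5 (t : ℕ) (ht : 0 < t)
    (B : Fin t → ℝ) (hB : ∀ j, B j = -1 ∨ B j = 1)
    (R : Fin (t + 1) → Fin t → ℝ)
    (hsign : ∀ k j, R k j = -1 ∨ R k j = 1)
    (hR0 : R 0 = B) (hRt : R (Fin.last t) = -B)
    (l : Fin t → Fin t) (hl : Function.Bijective l)
    (hstep : ∀ (k : Fin t) (j : Fin t), R k.castSucc j ≠ R k.succ j ↔ j = l k)
    (T : Fin t → ℝ) (hT : ∀ j, T j = -1 ∨ T j = 1)
    (x : Fin t → ℝ)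
    (hx : x = Matrix.vecMul T (Matrix.of fun i j : Fin t => R i.castSucc j)⁻¹)
    (V Q : Finset (Fin t → ℝ))
    (hV : V = (Finset.univ.image fun k : Fin t => R k.castSucc)
        ∪ (Finset.univ.image fun k : Fin t => -(R k.castSucc)))
    (hQ : Q = (Finset.univ.filter fun i : Fin t => x i ≠ 0).image
        fun i => x i • R i.castSucc) :
    Q ⊆ V ∧ Odd Q.card ∧
    LinearIndependent ℝ (fun q : {v // v ∈ Q} => (q : Fin t → ℝ)) ∧
    ∑ q ∈ Q, q = T := by
  obtain ⟨n, rfl⟩ : ∃ n, t = n + 1 := ⟨t - 1, by omega⟩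
  set M : Matrix (Fin (n + 1)) (Fin (n + 1)) ℝ :=
    Matrix.of fun i j : Fin (n + 1) => R i.castSucc j with hMdef
  set e : Fin (n + 1) ≃ Fin (n + 1) := Equiv.ofBijective l hl with hedef
  have he : ∀ k, e k = l k := fun _ => rfl
  -- the column indexed l k is constant before step k and flips at step k
  have hcol : ∀ (k : Fin (n + 1)) (i : Fin (n + 1 + 1)),
      R i (l k) = if (i : ℕ) ≤ (k : ℕ) then B (l k) else -B (l k) := by
    intro k i
    induction i using Fin.induction with
    | zero => simp [hR0]
    | succ i ih =>
      simp only [Fin.coe_castSucc] at ih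
      by_cases hik : k = i
      · subst hik
        have hne : R k.castSucc (l k) ≠ R k.succ (l k) := (hstep k (l k)).mpr rfl
        rw [ih, if_pos le_rfl] at hne
        have h1 : ¬ ((k.succ : ℕ) ≤ (k : ℕ)) := by simp [Fin.val_succ]
        rw [if_neg h1]
        rcases hsign k.succ (l k) with h | h <;> rcases hB (l k) with h' | h' <;>
          simp_all
      · have heq : R i.castSucc (l k) = R i.succ (l k) := by
          by_contra h
          exact hik (hl.injective ((hstep i (l k)).mp h))
        have hkv : (k : ℕ) ≠ (i : ℕ) := fun h => hik (Fin.ext h)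
        rw [← heq, ih]
        simp only [Fin.val_succ]
        split_ifs <;> first | rfl | omega
  have hMcol : ∀ (i k : Fin (n + 1)),
      M i (l k) = B (l k) * (if (i : ℕ) ≤ (k : ℕ) then 1 else -1) := by
    intro i k
    have := hcol k i.castSucc
    simp only [Fin.coe_castSucc] at this
    show R i.castSucc (l k) = _
    rw [this]
    split_ifs <;> ring
  set N : Matrix (Fin (n + 1)) (Fin (n + 1)) ℝ :=
    Matrix.of (fun j i : Fin (n + 1) => (B j / 2) *
      ((if e.symm j = i then 1 else 0) +
        (if i = 0 then 1 else -1) * (if e.symm j = i - 1 then 1 else 0))) with hNdef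
  have hMN : M * N = 1 := by
    ext i i'
    rw [Matrix.mul_apply]
    rw [← Equiv.sum_comp e (fun j => M i j * N j i')]
    have hterm : ∀ k : Fin (n + 1), M i (e k) * N (e k) i' =
        (if (i : ℕ) ≤ (k : ℕ) then 1 else -1) / 2 *
          ((if k = i' then 1 else 0) +
            (if i' = 0 then 1 else -1) * (if k = i' - 1 then 1 else 0)) := by
      intro k
      rw [he, hMcol, hNdef]
      simp only [Matrix.of_apply, hedef, Equiv.ofBijective_symm_apply_apply]
      rcases hB (l k) with h | h <;> rw [h] <;> ring
    rw [Finset.sum_congr rfl fun k _ => hterm k]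
    have hsplit : ∀ k : Fin (n + 1),
        (if (i : ℕ) ≤ (k : ℕ) then (1:ℝ) else -1) / 2 *
          ((if k = i' then 1 else 0) +
            (if i' = 0 then 1 else -1) * (if k = i' - 1 then 1 else 0)) =
        (if k = i' then (if (i : ℕ) ≤ (k : ℕ) then (1:ℝ) else -1) / 2 else 0) +
        (if k = i' - 1 then (if i' = 0 then 1 else -1) *
            (if (i : ℕ) ≤ (k : ℕ) then (1:ℝ) else -1) / 2 else 0) := by
      intro k
      split_ifs <;> ring
    rw [Finset.sum_congr rfl fun k _ => hsplit k, Finset.sum_add_distrib,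
      Finset.sum_ite_eq' Finset.univ i', Finset.sum_ite_eq' Finset.univ (i' - 1)]
    simp only [Finset.mem_univ, if_true, Matrix.one_apply]
    have hsub : ((i' - 1 : Fin (n + 1)) : ℕ) = if i' = 0 then n else (i' : ℕ) - 1 :=
      Fin.coe_sub_one i'
    rw [hsub]
    have hi := i.isLt
    have hi' := i'.isLt
    simp only [Fin.ext_iff, Fin.val_zero]
    split_ifs <;> first | (exfalso; omega) | norm_num
  have hNM : N * M = 1 := mul_eq_one_comm.mp hMN
  have hMinv : M⁻¹ = N := Matrix.inv_eq_right_inv hMN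
  have hxM : Matrix.vecMul x M = T := by
    rw [hx, hMinv, Matrix.vecMul_vecMul, hNM, Matrix.vecMul_one]
  have hvec : ∀ g : Fin (n + 1) → ℝ,
      (∑ i, g i • R i.castSucc) = Matrix.vecMul g M := by
    intro g
    funext j
    rw [Finset.sum_apply]
    simp only [Pi.smul_apply, smul_eq_mul]
    rw [Matrix.vecMul, dotProduct]
    rfl
  have hsum : (∑ i, x i • R i.castSucc) = T := by rw [hvec, hxM]
  have hx_val : ∀ i, x i = -1 ∨ x i = 0 ∨ x i = 1 := by
    intro i
    have hxi : x i = (T (l i) * B (l i) +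
        (if i = 0 then 1 else -1) * (T (l (i - 1)) * B (l (i - 1)))) / 2 := by
      rw [hx, hMinv]
      rw [Matrix.vecMul, dotProduct]
      rw [← Equiv.sum_comp e (fun j => T j * N j i)]
      have hterm : ∀ k : Fin (n + 1), T (e k) * N (e k) i =
          (if k = i then T (l k) * B (l k) / 2 else 0) +
          (if k = i - 1 then
            (if i = 0 then 1 else -1) * (T (l k) * B (l k)) / 2 else 0) := by
        intro k
        rw [he, hNdef]
        simp only [Matrix.of_apply, hedef, Equiv.ofBijective_symm_apply_apply]
        split_ifs <;> ring
      rw [Finset.sum_congr rfl fun k _ => hterm k, Finset.sum_add_distrib,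
        Finset.sum_ite_eq' Finset.univ i, Finset.sum_ite_eq' Finset.univ (i - 1)]
      simp only [Finset.mem_univ, if_true]
      ring
    rw [hxi]
    rcases hT (l i) with h1 | h1 <;> rcases hB (l i) with h2 | h2 <;>
      rcases hT (l (i - 1)) with h3 | h3 <;> rcases hB (l (i - 1)) with h4 | h4 <;>
      rw [h1, h2, h3, h4] <;> split_ifs <;> norm_num
  have hLI : LinearIndependent ℝ (fun i : Fin (n + 1) => R i.castSucc) := by
    rw [Fintype.linearIndependent_iff]
    intro g hg i
    have hgM : Matrix.vecMul g M = 0 := by rw [← hvec, hg]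
    have hg0 : g = 0 := by
      calc g = Matrix.vecMul g 1 := (Matrix.vecMul_one g).symm
      _ = Matrix.vecMul g (M * N) := by rw [hMN]
      _ = Matrix.vecMul (Matrix.vecMul g M) N := (Matrix.vecMul_vecMul g M N).symm
      _ = Matrix.vecMul 0 N := by rw [hgM]
      _ = 0 := Matrix.zero_vecMul N
    exact congrFun hg0 i
  have hLI2 : LinearIndependent ℝ
      (fun i : Fin (n + 1) => (if x i = 0 then (1 : ℝ) else x i) • R i.castSucc) := by
    rw [Fintype.linearIndependent_iff]
    intro g hg i
    have h1 := Fintype.linearIndependent_iff.mp hLI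
      (fun i => g i * (if x i = 0 then (1 : ℝ) else x i)) ?_ i
    · have hc : (if x i = 0 then (1 : ℝ) else x i) ≠ 0 := by
        split_ifs with h
        · norm_num
        · exact h
      exact (mul_eq_zero.mp h1).resolve_right hc
    · rw [← hg]
      exact Finset.sum_congr rfl fun i _ => (smul_smul _ _ _).symm
  have hinj : ∀ i i' : Fin (n + 1), x i ≠ 0 → x i' ≠ 0 →
      x i • R i.castSucc = x i' • R i'.castSucc → i = i' := by
    intro i i' hi hi' h
    apply hLI2.injective
    simp only [if_neg hi, if_neg hi']
    exact h
  set F : Finset (Fin (n + 1)) := Finset.univ.filter fun i => x i ≠ 0 with hFdef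
  have hmemF : ∀ i, i ∈ F ↔ x i ≠ 0 := by
    intro i; rw [hFdef, Finset.mem_filter]; simp
  have hinjF : ∀ i ∈ F, ∀ i' ∈ F,
      x i • R i.castSucc = x i' • R i'.castSucc → i = i' := by
    intro i hi i' hi' h
    exact hinj i i' ((hmemF i).mp hi) ((hmemF i').mp hi') h
  have hQF : Q = F.image fun i => x i • R i.castSucc := hQ
  refine ⟨?_, ?_, ?_, ?_⟩
  · -- Q ⊆ V
    intro q hq
    rw [hQF] at hq
    obtain ⟨i, hiF, rfl⟩ := Finset.mem_image.mp hq
    have hxi : x i ≠ 0 := (hmemF i).mp hiF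
    rw [hV, Finset.mem_union]
    rcases hx_val i with h | h | h
    · right
      rw [Finset.mem_image]
      exact ⟨i, Finset.mem_univ i, by rw [h]; simp⟩
    · exact absurd h hxi
    · left
      rw [Finset.mem_image]
      exact ⟨i, Finset.mem_univ i, by rw [h, one_smul]⟩
  · -- Odd Q.card
    have hcard : Q.card = F.card := by
      rw [hQF]; exact Finset.card_image_of_injOn fun i hi i' hi' h => hinjF i hi i' hi' h
    set A : Finset (Fin (n + 1)) := F.filter fun i => x i = 1 with hAdef
    set C : Finset (Fin (n + 1)) := F.filter fun i => ¬ x i = 1 with hCdef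
    have hFAC : A.card + C.card = F.card := by
      rw [hAdef, hCdef]
      exact Finset.card_filter_add_card_filter_not (p := fun i => x i = 1)
    have hsumA : ∑ i ∈ A, x i = (A.card : ℝ) := by
      rw [Finset.sum_congr rfl (fun i hi => (Finset.mem_filter.mp hi).2)]
      simp [hAdef]
    have hsumC : ∑ i ∈ C, x i = -(C.card : ℝ) := by
      have : ∀ i ∈ C, x i = -1 := by
        intro i hi
        obtain ⟨hiF, hne⟩ := Finset.mem_filter.mp hi
        have hxi := (hmemF i).mp hiF
        rcases hx_val i with h | h | h
        · exact h
        · exact absurd h hxi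
        · exact absurd h hne
      rw [Finset.sum_congr rfl this]
      simp
    have hsumF : ∑ i ∈ F, x i = (A.card : ℝ) - (C.card : ℝ) := by
      rw [← Finset.sum_filter_add_sum_filter_not F (fun i => x i = 1), ← hAdef, ← hCdef,
        hsumA, hsumC]
      ring
    have hsumU : ∑ i ∈ F, x i = ∑ i, x i := by
      apply Finset.sum_subset (Finset.subset_univ F)
      intro i _ hiF
      by_contra h
      exact hiF ((hmemF i).mpr h)
    set klast : Fin (n + 1) := ⟨n, by omega⟩ with hkl
    have hTl : T (l klast) = (∑ i, x i) * B (l klast) := by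
      have h1 : T (l klast) = (∑ i, x i • R i.castSucc) (l klast) := by rw [hsum]
      rw [Finset.sum_apply] at h1
      have h2 : ∀ i : Fin (n + 1), (x i • R i.castSucc) (l klast) = x i * B (l klast) := by
        intro i
        have h3 := hcol klast i.castSucc
        simp only [Fin.coe_castSucc] at h3
        have h4 : (i : ℕ) ≤ (klast : ℕ) := by
          rw [hkl]
          exact Nat.lt_succ_iff.mp i.isLt
        rw [if_pos h4] at h3
        simp [h3]
      rw [Finset.sum_congr rfl fun i _ => h2 i] at h1
      rw [h1, Finset.sum_mul]
    have hsum1 : (∑ i, x i) = -1 ∨ (∑ i, x i) = 1 := by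
      rcases hT (l klast) with h1 | h1 <;> rcases hB (l klast) with h2 | h2 <;>
        rw [h1, h2] at hTl
      · right; linarith
      · left; linarith
      · left; linarith
      · right; linarith
    rw [hcard, ← hFAC, Nat.odd_iff]
    rw [← hsumU, hsumF] at hsum1
    rcases hsum1 with h | h
    · have : (A.card : ℝ) = (C.card : ℝ) - 1 := by linarith
      have hAC : (C.card : ℕ) = A.card + 1 := by
        have := this
        have h2 : (C.card : ℝ) = (A.card : ℝ) + 1 := by linarith
        exact_mod_cast h2
      omega
    · have h2 : (A.card : ℝ) = (C.card : ℝ) + 1 := by linarith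
      have hAC : (A.card : ℕ) = C.card + 1 := by exact_mod_cast h2
      omega
  · -- linear independence
    rw [Fintype.linearIndependent_iff]
    intro g hg q
    set g' : (Fin (n + 1) → ℝ) → ℝ := fun v => if h : v ∈ Q then g ⟨v, h⟩ else 0 with hg'def
    have hg'q : ∀ q : {v // v ∈ Q}, g' (q : Fin (n + 1) → ℝ) = g q := by
      rintro ⟨v, hv⟩
      simp [hg'def, hv]
    have hgQ : ∑ v ∈ Q, g' v • v = 0 := by
      rw [← Finset.sum_coe_sort Q (fun v => g' v • v)]
      rw [← hg]
      exact Finset.sum_congr rfl fun q _ => by rw [hg'q]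
    rw [hQF, Finset.sum_image hinjF] at hgQ
    set G : Fin (n + 1) → ℝ := fun i =>
      if x i = 0 then 0 else g' (x i • R i.castSucc) * x i with hGdef
    have hGsum : ∑ i, G i • R i.castSucc = 0 := by
      have h1 : ∑ i ∈ F, G i • R i.castSucc = ∑ i, G i • R i.castSucc := by
        apply Finset.sum_subset (Finset.subset_univ F)
        intro i _ hiF
        have hxi : x i = 0 := by by_contra h; exact hiF ((hmemF i).mpr h)
        simp [hGdef, hxi]
      have h2 : ∑ i ∈ F, G i • R i.castSucc =
          ∑ i ∈ F, g' (x i • R i.castSucc) • (x i • R i.castSucc) := by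
        apply Finset.sum_congr rfl
        intro i hiF
        have hxi : x i ≠ 0 := (hmemF i).mp hiF
        rw [hGdef]
        simp only [if_neg hxi]
        exact (smul_smul _ _ _).symm
      rw [← h1, h2, hgQ]
    have hG0 := Fintype.linearIndependent_iff.mp hLI G hGsum
    obtain ⟨v, hv⟩ := q
    have hv' := hv
    rw [hQF] at hv'
    obtain ⟨i, hiF, hfi⟩ := Finset.mem_image.mp hv'
    have hxi : x i ≠ 0 := (hmemF i).mp hiF
    have hGi := hG0 i
    rw [hGdef] at hGi
    simp only [if_neg hxi] at hGi
    have hgv : g' (x i • R i.castSucc) = 0 := by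
      rcases mul_eq_zero.mp hGi with h | h
      · exact h
      · exact absurd h hxi
    rw [hfi] at hgv
    rw [← hg'q ⟨v, hv⟩]
    exact hgv
  · -- sum
    rw [hQF, Finset.sum_image hinjF]
    rw [Finset.sum_subset (Finset.subset_univ F) (fun i _ hiF => by
      have hxi : x i = 0 := by by_contra h; exact hiF ((hmemF i).mpr h)
      rw [hxi, zero_smul]), hsum]
end

section
/- With the notation above, the subset Q(T,R) ⊆ V(R) with T = Σ_{Q ∈ Q(T,R)} Q is the unique inclusion-minimal subset of V(R) whose elements sum to T: if S ⊆ V(R) satisfies Σ_{Q ∈ S} Q = T, then Q(T,R) ⊆ S. -/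
open Finset Matrix

private lemma aux0 (t : ℕ) (c : Fin t → ℝ)
    (hG : ∀ m : Fin t, ∑ i, c i * (if (i : ℕ) ≤ (m : ℕ) then (1:ℝ) else -1) = 0) :
    c = 0 := by
  rcases Nat.eq_zero_or_pos t with h0 | htpos
  · subst h0; funext i; exact i.elim0
  have hg : ∀ m : Fin t, (∑ i : Fin t, if (i : ℕ) ≤ (m : ℕ) then c i else 0) = (∑ i, c i)/2 := by
    intro m
    have h1 := hG m
    have h2 : ∀ i : Fin t, c i * (if (i : ℕ) ≤ (m : ℕ) then (1:ℝ) else -1)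
        = 2*(if (i : ℕ) ≤ (m : ℕ) then c i else 0) - c i := by
      intro i; split_ifs <;> ring
    rw [Finset.sum_congr rfl (fun i _ => h2 i), Finset.sum_sub_distrib, ← Finset.mul_sum] at h1
    linarith
  have hA : (∑ i, c i) = 0 := by
    have hm := hg ⟨t-1, by omega⟩
    have heq : (∑ i : Fin t, if (i : ℕ) ≤ ((⟨t-1, by omega⟩ : Fin t) : ℕ) then c i else 0)
        = ∑ i, c i := by
      apply Finset.sum_congr rfl; intro i _
      rw [if_pos]; have := i.isLt; simp; omega
    rw [heq] at hm; linarith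
  have hg0 : ∀ m : Fin t, (∑ i : Fin t, if (i : ℕ) ≤ (m : ℕ) then c i else 0) = 0 := by
    intro m; rw [hg m, hA]; norm_num
  have key : ∀ n : ℕ, ∀ i : Fin t, (i : ℕ) = n → c i = 0 := by
    intro n
    induction n using Nat.strong_induction_on with
    | _ n ih =>
      intro i hi
      have h1 := hg0 i
      have h2 : ∀ j : Fin t, (if (j : ℕ) ≤ (i : ℕ) then c j else 0)
          = (if j = i then c j else 0) + (if (j : ℕ) < (i : ℕ) then c j else 0) := by
        intro j
        simp only [Fin.ext_iff]
        split_ifs <;> first | ring1 | (exfalso; omega)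
      rw [Finset.sum_congr rfl (fun j _ => h2 j), Finset.sum_add_distrib,
        Finset.sum_ite_eq' Finset.univ i c, if_pos (Finset.mem_univ i)] at h1
      have h3 : (∑ j : Fin t, if (j : ℕ) < (i : ℕ) then c j else 0) = 0 := by
        apply Finset.sum_eq_zero; intro j _
        split_ifs with hj
        · exact ih (j : ℕ) (by omega) j rfl
        · rfl
      rw [h3] at h1; linarith
  funext i; exact key (i : ℕ) i rfl

theorem stmt_6 (t : ℕ) (ht : 0 < t)
    (B : Fin t → ℝ) (hB : ∀ j, B j = -1 ∨ B j = 1)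
    (R : Fin (t + 1) → Fin t → ℝ)
    (hsign : ∀ k j, R k j = -1 ∨ R k j = 1)
    (hR0 : R 0 = B) (hRt : R (Fin.last t) = -B)
    (l : Fin t → Fin t) (hl : Function.Bijective l)
    (hstep : ∀ (k : Fin t) (j : Fin t), R k.castSucc j ≠ R k.succ j ↔ j = l k)
    (T : Fin t → ℝ) (hT : ∀ j, T j = -1 ∨ T j = 1)
    (x : Fin t → ℝ)
    (hx : x = Matrix.vecMul T (Matrix.of fun i j : Fin t => R i.castSucc j)⁻¹)
    (V Q : Finset (Fin t → ℝ))
    (hV : V = (Finset.univ.image fun k : Fin t => R k.castSucc)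
        ∪ (Finset.univ.image fun k : Fin t => -(R k.castSucc)))
    (hQ : Q = (Finset.univ.filter fun i : Fin t => x i ≠ 0).image
        fun i => x i • R i.castSucc) :
    ∑ q ∈ Q, q = T ∧
    ∀ S : Finset (Fin t → ℝ), S ⊆ V → (∑ q ∈ S, q) = T → Q ⊆ S := by
  set M : Matrix (Fin t) (Fin t) ℝ := Matrix.of fun i j : Fin t => R i.castSucc j with hMdef
  have hMR : ∀ i j : Fin t, M i j = R i.castSucc j := fun i j => rfl
  set e : Fin t ≃ Fin t := Equiv.ofBijective l hl with hedef
  have hel : ∀ k, e k = l k := fun k => rfl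
  have hB0 : ∀ j, B j ≠ 0 := by intro j; rcases hB j with h | h <;> rw [h] <;> norm_num
  -- the explicit formula for R
  have hform : ∀ (k : Fin (t+1)) (j : Fin t),
      R k j = if (k : ℕ) ≤ ((e.symm j : Fin t) : ℕ) then B j else -B j := by
    intro k
    induction k using Fin.induction with
    | zero => intro j; rw [hR0]; simp
    | succ k ihk =>
      intro j
      by_cases hj : j = l k
      · have hsm : e.symm j = k := by rw [hj, ← hel, Equiv.symm_apply_apply]
        have hne : R k.castSucc j ≠ R k.succ j := (hstep k j).mpr hj
        have hkc : R k.castSucc j = B j := by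
          rw [ihk j, hsm, if_pos]; simp
        have hval : R k.succ j = -B j := by
          rcases hsign k.castSucc j with h1 | h1 <;> rcases hsign k.succ j with h2 | h2
          · exact absurd (h1.trans h2.symm) hne
          · rw [h2, ← hkc, h1]; try norm_num
          · rw [h2, ← hkc, h1]; try norm_num
          · exact absurd (h1.trans h2.symm) hne
        rw [hval, hsm, if_neg]
        simp [Fin.val_succ]
      · have heq : R k.castSucc j = R k.succ j := by
          by_contra hne; exact hj ((hstep k j).mp hne)
        have hsm : (e.symm j : Fin t) ≠ k := by
          intro hc
          apply hj
          rw [← hel, ← hc, Equiv.apply_symm_apply]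
        have hsm' : ((e.symm j : Fin t) : ℕ) ≠ (k : ℕ) := fun hc => hsm (Fin.ext hc)
        rw [← heq, ihk j]
        have hk1 : (k.castSucc : ℕ) = (k : ℕ) := rfl
        have hk2 : (k.succ : ℕ) = (k : ℕ) + 1 := rfl
        split_ifs with h1 h2 h2 <;> first | rfl | (exfalso; omega)
  have hMform : ∀ i j : Fin t, M i j = if (i : ℕ) ≤ ((e.symm j : Fin t) : ℕ) then B j else -B j := by
    intro i j; rw [hMR, hform]; rfl
  -- linear independence of the rows of M
  have hli : LinearIndependent ℝ (fun i => M i) := by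
    rw [Fintype.linearIndependent_iff]
    intro c hc
    have hc' : ∀ j, ∑ i, c i * M i j = 0 := by
      intro j
      have := congrFun hc j
      simpa [Finset.sum_apply] using this
    have hG : ∀ m : Fin t, ∑ i, c i * (if (i : ℕ) ≤ (m : ℕ) then (1:ℝ) else -1) = 0 := by
      intro m
      have h1 := hc' (l m)
      have hsm : e.symm (l m) = m := by rw [← hel, Equiv.symm_apply_apply]
      have h2 : ∀ i : Fin t, c i * M i (l m)
          = B (l m) * (c i * (if (i : ℕ) ≤ (m : ℕ) then (1:ℝ) else -1)) := by
        intro i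
        rw [hMform, hsm]
        split_ifs <;> ring
      rw [Finset.sum_congr rfl (fun i _ => h2 i), ← Finset.mul_sum] at h1
      rcases mul_eq_zero.mp h1 with h | h
      · exact absurd h (hB0 (l m))
      · exact h
    have := aux0 t c hG
    exact fun i => congrFun this i
  have hvinj : Function.Injective M.vecMul := Matrix.vecMul_injective_iff.mpr hli
  have hMu : IsUnit M := Matrix.vecMul_injective_iff_isUnit.mp hvinj
  have hdet : IsUnit M.det := (Matrix.isUnit_iff_isUnit_det M).mp hMu
  have hvm : ∀ (c : Fin t → ℝ) (j : Fin t), Matrix.vecMul c M j = ∑ i, c i * M i j := by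
    intro c j; simp [Matrix.vecMul, dotProduct]
  have hxT : Matrix.vecMul x M = T := by
    rw [hx, Matrix.vecMul_vecMul, Matrix.nonsing_inv_mul M hdet, Matrix.vecMul_one]
  -- key pairwise lemma
  have hpair : ∀ (a b : ℝ) (i i' : Fin t), a • R i.castSucc = b • R i'.castSucc →
      (i = i' ∧ a = b) ∨ (a = 0 ∧ b = 0) := by
    intro a b i i' h
    set c : Fin t → ℝ := fun k => (if k = i then a else 0) - (if k = i' then b else 0) with hcdef
    have h0 : Matrix.vecMul c M = Matrix.vecMul 0 M := by
      rw [Matrix.zero_vecMul]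
      funext j
      rw [hvm]
      have hj := congrFun h j
      simp only [Pi.smul_apply, smul_eq_mul] at hj
      have hs : (∑ k, c k * M k j) = a * M i j - b * M i' j := by
        simp only [hcdef, sub_mul, Finset.sum_sub_distrib, ite_mul, zero_mul]
        rw [Finset.sum_ite_eq' Finset.univ i (fun k => a * M k j),
          Finset.sum_ite_eq' Finset.univ i' (fun k => b * M k j)]
        simp
      rw [hs, hMR, hMR, hj, Pi.zero_apply]
      ring
    have hc0 : c = 0 := hvinj h0
    by_cases hii : i = i'
    · left
      subst hii
      refine ⟨rfl, ?_⟩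
      have hci := congrFun hc0 i
      simp [hcdef] at hci
      linarith
    · right
      have h1 := congrFun hc0 i
      have h2 := congrFun hc0 i'
      simp only [hcdef, Pi.zero_apply] at h1 h2
      simp [hii, Ne.symm hii] at h1 h2
      exact ⟨h1, h2⟩
  -- the sum over Q equals T
  have hsumT : (∑ i, x i • R i.castSucc) = T := by
    funext j
    rw [← hxT, hvm, Finset.sum_apply]
    apply Finset.sum_congr rfl
    intro i _
    simp [hMR]
  have hQsum : ∑ q ∈ Q, q = T := by
    rw [hQ, Finset.sum_image]
    · rw [Finset.sum_subset (Finset.filter_subset _ _)]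
      · exact hsumT
      · intro i _ hi
        simp only [Finset.mem_filter, Finset.mem_univ, true_and, not_not] at hi
        rw [hi, zero_smul]
    · intro i hi i' hi' hf
      simp only [Finset.mem_coe, Finset.mem_filter, Finset.mem_univ, true_and] at hi hi'
      rcases hpair _ _ _ _ hf with ⟨h, _⟩ | ⟨h, _⟩
      · exact h
      · exact absurd h hi
  refine ⟨hQsum, ?_⟩
  -- minimality
  intro S hSV hST
  set c : Fin t → ℝ := fun i =>
    (if R i.castSucc ∈ S then (1:ℝ) else 0) - (if -R i.castSucc ∈ S then (1:ℝ) else 0) with hcdef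
  have hinj1 : ∀ i i' : Fin t, R i.castSucc = R i'.castSucc → i = i' := by
    intro i i' h
    rcases hpair 1 1 i i' (by rw [one_smul, one_smul, h]) with ⟨h1, _⟩ | ⟨h1, _⟩
    · exact h1
    · norm_num at h1
  have hinj2 : ∀ i i' : Fin t, R i.castSucc ≠ -R i'.castSucc := by
    intro i i' h
    rcases hpair 1 (-1) i i' (by rw [one_smul, neg_one_smul, h]) with ⟨_, h1⟩ | ⟨h1, _⟩
    · norm_num at h1
    · norm_num at h1
  have hScM : ∑ q ∈ S, q = ∑ i, c i • R i.castSucc := by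
    have hVS : ∑ q ∈ S, q = ∑ q ∈ V, (if q ∈ S then q else 0) := by
      rw [Finset.sum_ite_mem, Finset.inter_eq_right.mpr hSV]
    rw [hVS, hV, Finset.sum_union]
    · rw [Finset.sum_image (fun i _ i' _ h => hinj1 i i' h),
        Finset.sum_image (fun i _ i' _ h => hinj1 i i' (by rwa [neg_inj] at h))]
      rw [← Finset.sum_add_distrib]
      apply Finset.sum_congr rfl
      intro i _
      rw [hcdef]
      by_cases hp : R i.castSucc ∈ S <;> by_cases hq2 : -R i.castSucc ∈ S <;>
        simp [hp, hq2, sub_smul]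
    · rw [Finset.disjoint_left]
      intro q h1 h2
      simp only [Finset.mem_image, Finset.mem_univ, true_and] at h1 h2
      obtain ⟨i, rfl⟩ := h1
      obtain ⟨i', hi'⟩ := h2
      exact hinj2 i i' hi'.symm
  have hcT : Matrix.vecMul c M = T := by
    funext j
    rw [hvm, ← hST, hScM, Finset.sum_apply]
    apply Finset.sum_congr rfl
    intro i _
    simp [hMR]
  have hcx : c = x := hvinj (hcT.trans hxT.symm)
  intro q hq
  rw [hQ] at hq
  simp only [Finset.mem_image, Finset.mem_filter, Finset.mem_univ, true_and] at hq
  obtain ⟨i, hxi, rfl⟩ := hq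
  have hci : c i = x i := congrFun hcx i
  by_cases hp : R i.castSucc ∈ S <;> by_cases hq' : -R i.castSucc ∈ S
  · exfalso
    apply hxi
    rw [← hci, hcdef]
    simp [hp, hq']
  · have : x i = 1 := by rw [← hci, hcdef]; simp [hp, hq']
    rw [this, one_smul]
    exact hp
  · have : x i = -1 := by rw [← hci, hcdef]; simp [hp, hq']
    rw [this, neg_one_smul]
    exact hq'
  · exfalso
    apply hxi
    rw [← hci, hcdef]
    simp [hp, hq']
end

section
/- With the notation above, for every T ∈ {-1,1}^t the set Q(T,R) has odd cardinality 2m+1 for some m ≥ 0, and its elements are linearly independent over ℝ. -/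
open Finset Matrix

private def psum (t : ℕ) (c : Fin t → ℝ) (n : ℕ) : ℝ :=
  ∑ k ∈ Finset.univ.filter (fun k : Fin t => (k : ℕ) < n), c k

private lemma psum_zero (t : ℕ) (c : Fin t → ℝ) : psum t c 0 = 0 := by
  simp [psum]

private lemma psum_succ (t : ℕ) (c : Fin t → ℝ) (n : ℕ) (hn : n < t) :
    psum t c (n + 1) = psum t c n + c ⟨n, hn⟩ := by
  unfold psum
  have h : Finset.univ.filter (fun k : Fin t => (k : ℕ) < n + 1)
      = insert (⟨n, hn⟩ : Fin t) (Finset.univ.filter (fun k : Fin t => (k : ℕ) < n)) := by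
    ext k
    simp only [Finset.mem_filter, Finset.mem_univ, true_and, Finset.mem_insert, Fin.ext_iff]
    omega
  rw [h, Finset.sum_insert (by simp)]
  ring

private lemma psum_top (t : ℕ) (c : Fin t → ℝ) : psum t c t = ∑ k, c k := by
  unfold psum
  apply Finset.sum_congr _ (fun _ _ => rfl)
  ext k
  simp [k.isLt]

theorem stmt_7 (t : ℕ) (ht : 0 < t)
    (B : Fin t → ℝ) (hB : ∀ j, B j = -1 ∨ B j = 1)
    (R : Fin (t + 1) → Fin t → ℝ)
    (hsign : ∀ k j, R k j = -1 ∨ R k j = 1)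
    (hR0 : R 0 = B) (hRt : R (Fin.last t) = -B)
    (l : Fin t → Fin t) (hl : Function.Bijective l)
    (hstep : ∀ (k : Fin t) (j : Fin t), R k.castSucc j ≠ R k.succ j ↔ j = l k)
    (T : Fin t → ℝ) (hT : ∀ j, T j = -1 ∨ T j = 1)
    (x : Fin t → ℝ)
    (hx : x = Matrix.vecMul T (Matrix.of fun i j : Fin t => R i.castSucc j)⁻¹)
    (V Q : Finset (Fin t → ℝ))
    (hV : V = (Finset.univ.image fun k : Fin t => R k.castSucc)
        ∪ (Finset.univ.image fun k : Fin t => -(R k.castSucc)))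
    (hQ : Q = (Finset.univ.filter fun i : Fin t => x i ≠ 0).image
        fun i => x i • R i.castSucc) :
    (∃ m : ℕ, Q.card = 2 * m + 1) ∧
    LinearIndependent ℝ (fun q : {v // v ∈ Q} => (q : Fin t → ℝ)) := by
  set M : Matrix (Fin t) (Fin t) ℝ := Matrix.of (fun i j : Fin t => R i.castSucc j) with hMdef
  set v : Fin t → ℕ := fun j => (((Equiv.ofBijective l hl).symm j : Fin t) : ℕ) with hvdef
  have hvlt : ∀ j, v j < t := fun j => ((Equiv.ofBijective l hl).symm j).isLt
  have hvinv : ∀ j : Fin t, l ⟨v j, hvlt j⟩ = j := fun j =>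
    (Equiv.ofBijective l hl).apply_symm_apply j
  have hveq : ∀ m : Fin t, v (l m) = (m : ℕ) := by
    intro m
    exact congrArg Fin.val (hl.injective (hvinv (l m)))
  -- flip/same structure
  have hflip : ∀ k : Fin t, R k.succ (l k) = -(R k.castSucc (l k)) := by
    intro k
    have hne : R k.castSucc (l k) ≠ R k.succ (l k) := (hstep k (l k)).mpr rfl
    rcases hsign k.castSucc (l k) with h1 | h1 <;> rcases hsign k.succ (l k) with h2 | h2 <;>
      rw [h1, h2] at hne ⊢ <;> (norm_num at hne) <;> norm_num
  have hsame : ∀ (k : Fin t) (j : Fin t), j ≠ l k → R k.succ j = R k.castSucc j := by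
    intro k j hj
    by_contra h
    exact hj ((hstep k j).mp fun hh => h hh.symm)
  -- column structure
  have hcol : ∀ (j : Fin t) (n : ℕ) (hn : n < t + 1),
      R ⟨n, hn⟩ j = if n < v j + 1 then R 0 j else -(R 0 j) := by
    intro j n
    induction n with
    | zero =>
      intro hn
      rw [if_pos (by omega)]
      rfl
    | succ n ih =>
      intro hn
      have hnt : n < t := by omega
      have hprev := ih (by omega)
      have hsc : (⟨n+1, hn⟩ : Fin (t+1)) = (⟨n, hnt⟩ : Fin t).succ := rfl
      have hcs : (⟨n, by omega⟩ : Fin (t+1)) = (⟨n, hnt⟩ : Fin t).castSucc := rfl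
      by_cases hj : j = l ⟨n, hnt⟩
      · have hvj : v j = n := by
          rw [hj, hveq]
        rw [hsc, hj, hflip ⟨n, hnt⟩, ← hj, ← hcs, hprev, hvj]
        rw [if_pos (by omega), if_neg (by omega)]
      · have hvj : v j ≠ n := by
          intro hcon
          apply hj
          conv_lhs => rw [← hvinv j]
          congr 1
          exact Fin.ext hcon
        rw [hsc, hsame ⟨n, hnt⟩ j hj, ← hcs, hprev]
        by_cases hc : n + 1 < v j + 1
        · rw [if_pos (by omega), if_pos hc]
        · rw [if_neg (by omega), if_neg hc]
  -- sum formula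
  have hsum : ∀ (c : Fin t → ℝ) (j : Fin t),
      Matrix.vecMul c M j = R 0 j * (2 * psum t c (v j + 1) - ∑ k, c k) := by
    intro c j
    have h0 : Matrix.vecMul c M j = ∑ k : Fin t, c k * R k.castSucc j := by
      simp [Matrix.vecMul, dotProduct, hMdef]
    rw [h0]
    have h1 : ∀ k : Fin t, c k * R k.castSucc j
        = c k * (if (k : ℕ) < v j + 1 then R 0 j else -(R 0 j)) := by
      intro k
      congr 1
      have hk : k.castSucc = (⟨(k : ℕ), by omega⟩ : Fin (t+1)) := rfl
      rw [hk, hcol j (k : ℕ) (by omega)]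
    rw [Finset.sum_congr rfl fun k _ => h1 k]
    rw [← Finset.sum_filter_add_sum_filter_not univ (fun k : Fin t => (k : ℕ) < v j + 1)]
    have hA : ∑ k ∈ univ.filter (fun k : Fin t => (k : ℕ) < v j + 1),
        c k * (if (k : ℕ) < v j + 1 then R 0 j else -(R 0 j))
        = psum t c (v j + 1) * R 0 j := by
      rw [psum, Finset.sum_mul]
      exact Finset.sum_congr rfl fun k hk => by
        rw [if_pos (Finset.mem_filter.mp hk).2]
    have hBs : ∑ k ∈ univ.filter (fun k : Fin t => ¬((k : ℕ) < v j + 1)),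
        c k * (if (k : ℕ) < v j + 1 then R 0 j else -(R 0 j))
        = ((∑ k, c k) - psum t c (v j + 1)) * (-(R 0 j)) := by
      have hsplit := Finset.sum_filter_add_sum_filter_not univ
        (fun k : Fin t => (k : ℕ) < v j + 1) c
      have : ∑ k ∈ univ.filter (fun k : Fin t => ¬((k : ℕ) < v j + 1)), c k
          = (∑ k, c k) - psum t c (v j + 1) := by
        rw [psum] at *
        linarith
      rw [← this, Finset.sum_mul]
      exact Finset.sum_congr rfl fun k hk => by
        rw [if_neg (Finset.mem_filter.mp hk).2]
    rw [hA, hBs]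
    ring
  have hR0sq : ∀ j, R 0 j * R 0 j = 1 := fun j => by
    rcases hsign 0 j with h | h <;> rw [h] <;> norm_num
  have hR0ne : ∀ j : Fin t, R 0 j ≠ 0 := fun j => by
    rcases hsign 0 j with h | h <;> rw [h] <;> norm_num
  -- invertibility
  have hMunit : IsUnit M := by
    rw [← Matrix.vecMul_injective_iff_isUnit]
    intro a b hab
    have hz : Matrix.vecMul (a - b) M = 0 := by
      change Matrix.vecMul a M = Matrix.vecMul b M at hab
      rw [Matrix.sub_vecMul, hab, sub_self]
    set c := a - b with hc
    have hS : ∀ m : Fin t, 2 * psum t c ((m : ℕ) + 1) = ∑ k, c k := by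
      intro m
      have hj := congrFun hz (l m)
      rw [hsum c (l m), hveq m] at hj
      have h2 := mul_eq_zero.mp hj
      rcases h2 with h2 | h2
      · exact absurd h2 (hR0ne (l m))
      · linarith
    have hS0 : (∑ k, c k) = 0 := by
      have h1 := hS ⟨t - 1, by omega⟩
      have h2 : ((⟨t - 1, by omega⟩ : Fin t) : ℕ) + 1 = t := by
        simp only [Fin.val_mk]; omega
      rw [h2, psum_top] at h1
      linarith
    have hPz : ∀ n, n ≤ t → psum t c n = 0 := by
      intro n hn
      match n with
      | 0 => exact psum_zero t c
      | (n + 1) =>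
        have h1 := hS ⟨n, by omega⟩
        rw [hS0] at h1
        simpa using h1
    have hcz : c = 0 := by
      funext m
      have h1 := hPz ((m : ℕ) + 1) (by omega)
      have h2 := hPz (m : ℕ) (by omega)
      have h3 := psum_succ t c (m : ℕ) m.isLt
      have h4 : (⟨(m : ℕ), m.isLt⟩ : Fin t) = m := rfl
      rw [h4] at h3
      have : c m = 0 := by linarith
      simpa using this
    exact sub_eq_zero.mp hcz
  -- x · M = T
  have hxM : Matrix.vecMul x M = T := by
    rw [hx]
    rw [Matrix.vecMul_vecMul, Matrix.nonsing_inv_mul M ((Matrix.isUnit_iff_isUnit_det M).mp hMunit),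
      Matrix.vecMul_one]
  -- the sign sequence
  set δ : Fin t → ℝ := fun m => R 0 (l m) * T (l m) with hδdef
  have hδpm : ∀ m, δ m = -1 ∨ δ m = 1 := by
    intro m
    rw [hδdef]
    rcases hsign 0 (l m) with h1 | h1 <;> rcases hT (l m) with h2 | h2 <;>
      simp [h1, h2]
  have hδeq : ∀ m : Fin t, 2 * psum t x ((m : ℕ) + 1) - (∑ k, x k) = δ m := by
    intro m
    have hj := congrFun hxM (l m)
    rw [hsum x (l m), hveq m] at hj
    have h2 : R 0 (l m) * (R 0 (l m) * (2 * psum t x ((m : ℕ) + 1) - ∑ k, x k))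
        = R 0 (l m) * T (l m) := by rw [hj]
    rw [← mul_assoc, hR0sq, one_mul] at h2
    rw [hδdef]
    exact h2
  have hSval : (∑ k, x k) = δ ⟨t - 1, by omega⟩ := by
    have h1 := hδeq ⟨t - 1, by omega⟩
    have h2 : ((⟨t - 1, by omega⟩ : Fin t) : ℕ) + 1 = t := by
      simp only [Fin.val_mk]; omega
    rw [h2, psum_top] at h1
    linarith
  have hx0 : x ⟨0, ht⟩ = (δ ⟨t - 1, by omega⟩ + δ ⟨0, ht⟩) / 2 := by
    have h1 := hδeq ⟨0, ht⟩
    have h2 := psum_succ t x 0 ht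
    rw [psum_zero] at h2
    have h3 : ((⟨0, ht⟩ : Fin t) : ℕ) + 1 = 0 + 1 := rfl
    rw [h3, h2] at h1
    linarith [hSval]
  have hxn : ∀ (n : ℕ) (hn : n + 1 < t),
      x ⟨n + 1, hn⟩ = (δ ⟨n + 1, hn⟩ - δ ⟨n, by omega⟩) / 2 := by
    intro n hn
    have h1 := hδeq ⟨n + 1, hn⟩
    have h2 := hδeq ⟨n, by omega⟩
    have h3 := psum_succ t x (n + 1) hn
    simp only [Fin.val_mk] at h1 h2
    rw [h3] at h1
    linarith
  -- parity
  set N := (univ.filter fun i : Fin t => x i ≠ 0).card with hNdef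
  have hNodd : N % 2 = 1 := by
    set ε : Fin t → ZMod 2 := fun m => if δ m = 1 then 1 else 0 with hεdef
    set prev : Fin t → Fin t := fun m =>
      if h : (m : ℕ) = 0 then ⟨t - 1, by omega⟩ else ⟨(m : ℕ) - 1, by omega⟩ with hprevdef
    have hind : ∀ m : Fin t, (if x m ≠ 0 then (1 : ZMod 2) else 0)
        = (if (m : ℕ) = 0 then 1 else 0) + ε m + ε (prev m) := by
      rintro ⟨n, hn⟩
      match n, hn with
      | 0, hn =>
        have hp : prev ⟨0, hn⟩ = ⟨t - 1, by omega⟩ := by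
          rw [hprevdef]; simp
        rw [hp, if_pos rfl]
        have hx0' : x ⟨0, hn⟩ = (δ ⟨t - 1, by omega⟩ + δ ⟨0, ht⟩) / 2 := hx0
        rcases hδpm ⟨0, ht⟩ with h0 | h0 <;> rcases hδpm ⟨t - 1, (by omega : t - 1 < t)⟩ with h1 | h1 <;>
          · rw [hεdef]
            simp only [hx0', h0, h1]
            norm_num
            all_goals decide
      | (n + 1), hn =>
        have hp : prev ⟨n + 1, hn⟩ = ⟨n, by omega⟩ := by
          rw [hprevdef]; simp
        rw [hp]
        have hcond : ¬(((⟨n + 1, hn⟩ : Fin t) : ℕ) = 0) := Nat.succ_ne_zero n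
        rw [if_neg hcond]
        have hxn' := hxn n hn
        rcases hδpm ⟨n + 1, hn⟩ with h0 | h0 <;> rcases hδpm ⟨n, (by omega : n < t)⟩ with h1 | h1 <;>
          · rw [hεdef]
            simp only [hxn', h0, h1]
            norm_num
            all_goals decide
    have hprevbij : Function.Bijective prev := by
      refine Finite.injective_iff_bijective.mp ?_
      intro a b hab
      have hav := a.isLt
      have hbv := b.isLt
      have hv2 := congrArg Fin.val hab
      simp only [hprevdef] at hv2
      apply Fin.ext
      by_cases ha : (a : ℕ) = 0 <;> by_cases hb : (b : ℕ) = 0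
      · rw [dif_pos ha, dif_pos hb] at hv2; omega
      · rw [dif_pos ha, dif_neg hb] at hv2; simp only [Fin.val_mk] at hv2; omega
      · rw [dif_neg ha, dif_pos hb] at hv2; simp only [Fin.val_mk] at hv2; omega
      · rw [dif_neg ha, dif_neg hb] at hv2; simp only [Fin.val_mk] at hv2; omega
    have hsumprev : ∑ m : Fin t, ε (prev m) = ∑ m : Fin t, ε m :=
      Function.Bijective.sum_comp hprevbij ε
    have hsum0 : ∑ m : Fin t, (if (m : ℕ) = 0 then (1 : ZMod 2) else 0) = 1 := by
      have h := Finset.sum_ite_eq' (univ : Finset (Fin t)) (⟨0, ht⟩ : Fin t)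
        (fun _ => (1 : ZMod 2))
      rw [if_pos (Finset.mem_univ _)] at h
      refine Eq.trans ?_ h
      refine Finset.sum_congr rfl fun m _ => ?_
      by_cases hm : (m : ℕ) = 0
      · rw [if_pos hm, if_pos (Fin.ext hm)]
      · rw [if_neg hm, if_neg fun hc => hm (by rw [hc])]
    have haddself : ∀ a : ZMod 2, a + a = 0 := by decide
    have hNcast : (N : ZMod 2) = 1 := by
      have e1 : (N : ZMod 2) = ∑ m : Fin t, (if x m ≠ 0 then (1 : ZMod 2) else 0) := by
        rw [hNdef, Finset.card_filter, Nat.cast_sum]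
        exact Finset.sum_congr rfl fun m _ => by split <;> simp
      rw [e1]
      calc ∑ m : Fin t, (if x m ≠ 0 then (1 : ZMod 2) else 0)
          = ∑ m : Fin t, ((if (m : ℕ) = 0 then (1 : ZMod 2) else 0) + ε m + ε (prev m)) :=
            Finset.sum_congr rfl fun m _ => hind m
        _ = (∑ m : Fin t, (if (m : ℕ) = 0 then (1 : ZMod 2) else 0))
            + (∑ m : Fin t, ε m) + (∑ m : Fin t, ε (prev m)) := by
            rw [Finset.sum_add_distrib, Finset.sum_add_distrib]
        _ = 1 + ((∑ m : Fin t, ε m) + (∑ m : Fin t, ε m)) := by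
            rw [hsum0, hsumprev, add_assoc]
        _ = 1 := by rw [haddself, add_zero]
    rcases Nat.mod_two_eq_zero_or_one N with h | h
    · exfalso
      obtain ⟨q, hq⟩ : ∃ q, N = q + q := by
        refine ⟨N / 2, ?_⟩
        omega
      rw [hq] at hNcast
      rw [Nat.cast_add, haddself] at hNcast
      exact one_ne_zero hNcast.symm
    · exact h
  -- linear independence of rows, scaled family, image
  have rowsLI : LinearIndependent ℝ (fun i : Fin t => M i) :=
    Matrix.linearIndependent_rows_iff_isUnit.mpr hMunit
  have hsubLI : LinearIndependent ℝ
      (fun i : {i : Fin t // x i ≠ 0} => x (i : Fin t) • M (i : Fin t)) := by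
    have h1 : LinearIndependent ℝ (fun i : {i : Fin t // x i ≠ 0} => M (i : Fin t)) :=
      rowsLI.comp _ Subtype.val_injective
    have h2 := h1.units_smul fun i => Units.mk0 (x (i : Fin t)) i.prop
    convert h2 using 1
    funext i
    rfl
  have hinj : Set.InjOn (fun i : Fin t => x i • M i) {i : Fin t | x i ≠ 0} := by
    intro i hi j hj hij
    have := hsubLI.injective (a₁ := (⟨i, hi⟩ : {i : Fin t // x i ≠ 0}))
      (a₂ := (⟨j, hj⟩ : {i : Fin t // x i ≠ 0})) (by simpa using hij)
    exact congrArg Subtype.val this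
  have hcard : Q.card = N := by
    rw [hQ, hNdef]
    apply Finset.card_image_of_injOn
    intro i hi j hj hij
    exact hinj (by simpa using hi) (by simpa using hj) hij
  constructor
  · exact ⟨N / 2, by rw [hcard]; omega⟩
  · have himg : LinearIndependent ℝ
        (fun w : ((fun i : Fin t => x i • M i) '' {i : Fin t | x i ≠ 0}) => (w : Fin t → ℝ)) :=
      LinearIndepOn.id_image (v := fun i : Fin t => x i • M i) (s := {i : Fin t | x i ≠ 0}) hsubLI
    have hQset : ((Q : Set (Fin t → ℝ)))
        = (fun i : Fin t => x i • M i) '' {i : Fin t | x i ≠ 0} := by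
      rw [hQ, Finset.coe_image, Finset.coe_filter]
      simp only [Finset.mem_univ, true_and]
      rfl
    rw [← hQset] at himg
    exact himg
end

section
/- Let V(R) be the vertex set of a symmetric cycle as above, and consider V(R) as a subposet of {-1,1}^t ordered by T' ⪯ T'' iff S(T⁺,T') ⊆ S(T⁺,T''), i.e., by inclusion of negative parts (the base point being the all-ones vector T⁺). Then the set min V(R) of minimal elements of this subposet equals Q(T⁺, R), and consequently T⁺ = Σ_{Q ∈ min V(R)} Q. -/
open Finset Matrix

private noncomputable def dAux (t : ℕ) (R : Fin (t + 1) → Fin t → ℝ) (l : Fin t → Fin t) : ℕ → ℝ :=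
  fun n => if h : n < t then R 0 (l ⟨n, h⟩) else 1

private def riseAux (t : ℕ) (d : ℕ → ℝ) (k : Fin t) (s : ℝ) : Prop :=
  s * d (k : ℕ) = 1 ∧ if (k : ℕ) = 0 then s * d (t - 1) = 1 else s * d ((k : ℕ) - 1) = -1

private noncomputable def ecoAux (t : ℕ) (d : ℕ → ℝ) (n : ℕ) : ℝ :=
  if n = 0 then (d 0 + d (t - 1)) / 2 else (d n - d (n - 1)) / 2

theorem stmt_8 (t : ℕ) (ht : 0 < t)
    (R : Fin (t + 1) → Fin t → ℝ)
    (hsign : ∀ k j, R k j = -1 ∨ R k j = 1)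
    (hRt : R (Fin.last t) = -(R 0))
    (l : Fin t → Fin t) (hl : Function.Bijective l)
    (hstep : ∀ (k : Fin t) (j : Fin t), R k.castSucc j ≠ R k.succ j ↔ j = l k)
    (V : Finset (Fin t → ℝ))
    (hV : V = (Finset.univ.image fun k : Fin t => R k.castSucc)
        ∪ (Finset.univ.image fun k : Fin t => -(R k.castSucc)))
    (minV : Finset (Fin t → ℝ))
    (hmin : minV = V.filter fun O => ∀ P ∈ V,
      (Finset.univ.filter fun e => P e = -1) ⊆ (Finset.univ.filter fun e => O e = -1)
        → P = O) :
    (∑ q ∈ minV, q) = (fun _ => (1 : ℝ)) ∧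
    ∀ S : Finset (Fin t → ℝ), S ⊆ V → (∑ q ∈ S, q) = (fun _ => (1 : ℝ)) → minV ⊆ S := by
  classical
  set e : Fin t ≃ Fin t := Equiv.ofBijective l hl with he
  set q : Fin t → Fin t := fun j => e.symm j with hqdef
  have hlq : ∀ j, l (q j) = j := fun j => e.apply_symm_apply j
  have hql : ∀ k, q (l k) = k := fun k => e.symm_apply_apply k
  have hs1 : ∀ (k : Fin (t + 1)) (j : Fin t), R k j = 1 ∨ R k j = -1 := fun k j => (hsign k j).symm
  have hR0ne : ∀ j, R 0 j ≠ 0 := by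
    intro j; rcases hsign 0 j with h | h <;> rw [h] <;> norm_num
  have hflip : ∀ a b : ℝ, (a = 1 ∨ a = -1) → (b = 1 ∨ b = -1) → a ≠ b → a = -b := by
    rintro a b (rfl | rfl) (rfl | rfl) h <;> first | exact absurd rfl h | norm_num
  -- the structure formula for R
  have hR : ∀ (k : Fin (t + 1)) (j : Fin t),
      R k j = if (k : ℕ) ≤ (q j : ℕ) then R 0 j else -(R 0 j) := by
    intro k
    induction k using Fin.induction with
    | zero => intro j; simp
    | succ i ih =>
      intro j
      by_cases hj : j = l i
      · have hne : R i.castSucc j ≠ R i.succ j := (hstep i j).mpr hj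
        have h1 : R i.castSucc j = R 0 j := by
          rw [ih j, if_pos]
          subst hj; rw [hql]; simp
        have hne' : R i.succ j ≠ R 0 j := by rw [← h1]; exact fun hE => hne hE.symm
        have h2 : R i.succ j = -(R 0 j) := hflip _ _ (hs1 _ _) (hs1 _ _) hne'
        rw [h2, if_neg]
        subst hj; rw [hql]; simp
      · have hEq : R i.castSucc j = R i.succ j := by
          by_contra h; exact hj ((hstep i j).mp h)
        have hqv : (q j : ℕ) ≠ (i : ℕ) := by
          intro h
          apply hj
          have : q j = i := Fin.ext h
          rw [← hlq j, this]
        rw [← hEq, ih j]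
        simp only [Fin.coe_castSucc, Fin.val_succ]
        split_ifs with hA hB hB <;> first | rfl | (exfalso; omega)

  have hXval : ∀ (k : Fin t) (j : Fin t),
      R k.castSucc j = if (k : ℕ) ≤ (q j : ℕ) then R 0 j else -(R 0 j) := by
    intro k j
    rw [hR k.castSucc j]
    simp
  set d : ℕ → ℝ := dAux t R l with hd_def
  have hdval : ∀ (n : ℕ) (h : n < t), d n = R 0 (l ⟨n, h⟩) := fun n h => dif_pos h
  have hd1 : ∀ n, n < t → d n = 1 ∨ d n = -1 := by
    intro n h; rw [hdval n h]; exact hs1 0 _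
  have hdk : ∀ k : Fin t, d (k : ℕ) = R 0 (l k) := fun k => hdval _ k.isLt
  have hdj : ∀ j : Fin t, R 0 j = d ((q j : ℕ)) := by
    intro j
    have : d ((q j : ℕ)) = R 0 (l (q j)) := hdk (q j)
    rw [this, hlq]
  have hval : ∀ (k : Fin t) (s : ℝ), s = 1 ∨ s = -1 → ∀ j,
      s * R k.castSucc j = 1 ∨ s * R k.castSucc j = -1 := by
    intro k s hs j
    rw [hXval]
    rcases hs with rfl | rfl <;> rcases hs1 0 j with h | h <;> split_ifs <;> rw [h] <;> norm_num
  have hR0nene : ∀ j : Fin t, R 0 j ≠ -(R 0 j) := by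
    intro j h; exact hR0ne j (by linarith)
  have hdist : ∀ (k k' : Fin t) (s s' : ℝ), s = 1 ∨ s = -1 → s' = 1 ∨ s' = -1 →
      (fun j => s * R k.castSucc j) = (fun j => s' * R k'.castSucc j) → k = k' ∧ s = s' := by
    intro k k' s s' hs hs' hE
    have hEj : ∀ j, s * R k.castSucc j = s' * R k'.castSucc j := fun j => congrFun hE j
    have hsne : s ≠ 0 := by rcases hs with rfl | rfl <;> norm_num
    have hlt : t - 1 < t := by omega
    have hk := k.isLt
    have hk' := k'.isLt
    have hss' : s = s' := by
      have h0 := hEj (l ⟨t - 1, hlt⟩)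
      rw [hXval, hXval, hql] at h0
      rw [if_pos (by simp; omega), if_pos (by simp; omega)] at h0
      exact mul_right_cancel₀ (hR0ne _) h0
    subst hss'
    have hle1 : (k' : ℕ) ≤ (k : ℕ) := by
      have h0 := hEj (l k)
      rw [hXval, hXval, hql, if_pos (le_refl _)] at h0
      have h1 := mul_left_cancel₀ hsne h0
      by_contra hcon
      rw [if_neg (by omega)] at h1
      exact hR0nene _ h1
    have hle2 : (k : ℕ) ≤ (k' : ℕ) := by
      have h0 := hEj (l k')
      rw [hXval, hXval, hql, if_pos (le_refl _)] at h0
      have h1 := mul_left_cancel₀ hsne h0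
      by_contra hcon
      rw [if_neg (by omega)] at h1
      exact hR0nene _ h1.symm
    exact ⟨Fin.ext (by omega), rfl⟩

  have key : ∀ (k : Fin t) (s : ℝ), s = 1 ∨ s = -1 → riseAux t d k s →
      ∃ a b : Fin t, s * R k.castSucc a = 1 ∧ s * R k.castSucc b = 1 ∧
        ∀ (k' : Fin t) (s' : ℝ), s' = 1 ∨ s' = -1 →
          s' * R k'.castSucc a + s' * R k'.castSucc b
            = if k' = k then 2 * s * s' else 0 := by
    intro k s hs hrise
    have hss : s * s = 1 := by rcases hs with rfl | rfl <;> norm_num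
    obtain ⟨h1, h2⟩ := hrise
    have hk := k.isLt
    by_cases hk0 : (k : ℕ) = 0
    · rw [if_pos hk0] at h2
      have hlt : t - 1 < t := by omega
      have hRa : R 0 (l k) = s := by
        rw [← hdk k]; linear_combination s * h1 - d (k : ℕ) * hss
      have hRb : R 0 (l ⟨t - 1, hlt⟩) = s := by
        rw [← hdval (t - 1) hlt]; linear_combination s * h2 - d (t - 1) * hss
      refine ⟨l k, l ⟨t - 1, hlt⟩, ?_, ?_, ?_⟩
      · rw [hXval, hql, if_pos (le_refl _), hRa, hss]
      · rw [hXval, hql, hRb, if_pos (by simp; omega)]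
        exact hss
      · intro k' s' hs'
        have hk' := k'.isLt
        rw [hXval, hXval, hql, hql, hRa, hRb]
        rw [if_pos (show (k' : ℕ) ≤ ((⟨t - 1, hlt⟩ : Fin t) : ℕ) by simp; omega)]
        by_cases hkk : k' = k
        · subst hkk
          rw [if_pos rfl, if_pos (le_refl _)]
          ring
        · have hkv : (k' : ℕ) ≠ (k : ℕ) := fun h => hkk (Fin.ext h)
          rw [if_neg hkk, if_neg (by omega)]
          ring
    · rw [if_neg hk0] at h2
      have hlt : (k : ℕ) - 1 < t := by omega
      have hRa : R 0 (l k) = s := by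
        rw [← hdk k]; linear_combination s * h1 - d (k : ℕ) * hss
      have hRb : R 0 (l ⟨(k : ℕ) - 1, hlt⟩) = -s := by
        rw [← hdval ((k : ℕ) - 1) hlt]
        linear_combination s * h2 - d ((k : ℕ) - 1) * hss
      refine ⟨l k, l ⟨(k : ℕ) - 1, hlt⟩, ?_, ?_, ?_⟩
      · rw [hXval, hql, if_pos (le_refl _), hRa, hss]
      · rw [hXval, hql, hRb, if_neg (by simp; omega)]
        linear_combination hss
      · intro k' s' hs'
        have hk' := k'.isLt
        rw [hXval, hXval, hql, hql, hRa, hRb]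
        by_cases hkk : k' = k
        · subst hkk
          rw [if_pos rfl, if_pos (le_refl _), if_neg (by simp; omega)]
          ring
        · have hkv : (k' : ℕ) ≠ (k : ℕ) := fun h => hkk (Fin.ext h)
          rw [if_neg hkk]
          by_cases hcmp : (k' : ℕ) ≤ (k : ℕ)
          · rw [if_pos hcmp, if_pos (by simp; omega)]
            ring
          · rw [if_neg hcmp, if_neg (by simp; omega)]
            ring
    done

  have nonrise : ∀ (k : Fin t) (s : ℝ), s = 1 ∨ s = -1 → ¬ riseAux t d k s →
      ∃ (k'' : Fin t) (s'' : ℝ), (s'' = 1 ∨ s'' = -1) ∧ ¬(k'' = k ∧ s'' = s) ∧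
        ∀ j, s'' * R k''.castSucc j = -1 → s * R k.castSucc j = -1 := by
    intro k s hs hnr
    have hk := k.isLt
    have hsne : ∀ s0 : ℝ, s0 = 1 ∨ s0 = -1 → ¬ (-s0 = s0) := by
      rintro s0 (rfl | rfl) h <;> norm_num at h
    have hdk1 : d (k : ℕ) = 1 ∨ d (k : ℕ) = -1 := hd1 _ hk
    by_cases hA : s * d (k : ℕ) = 1
    · -- second condition fails
      by_cases hk0 : (k : ℕ) = 0
      · have hB : s * d (t - 1) = -1 := by
          have : ¬ s * d (t - 1) = 1 := fun h => hnr ⟨hA, by rw [if_pos hk0]; exact h⟩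
          rcases hd1 (t - 1) (by omega) with h | h <;> rcases hs with rfl | rfl <;>
            rw [h] at this ⊢
          all_goals norm_num at this
          all_goals norm_num
        have hlt : t - 1 < t := by omega
        refine ⟨⟨t - 1, hlt⟩, -s, ?_, ?_, ?_⟩
        · rcases hs with rfl | rfl
          · right; norm_num
          · left; norm_num
        · rintro ⟨hk1, hk2⟩; exact hsne s hs hk2
        · intro j hj
          rw [hXval] at hj ⊢
          have hqj := (q j).isLt
          rw [if_pos (by simp only [hk0]; omega)]
          by_cases hq : (q j : ℕ) = t - 1
          · exfalso
            rw [if_pos (by simp; omega), hdj j, hq] at hj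
            nlinarith [hj, hB]
          · rw [if_neg (by simp; omega)] at hj
            linarith [hj]
      · have hB : s * d ((k : ℕ) - 1) = 1 := by
          have : ¬ s * d ((k : ℕ) - 1) = -1 := fun h => hnr ⟨hA, by rw [if_neg hk0]; exact h⟩
          rcases hd1 ((k : ℕ) - 1) (by omega) with h | h <;> rcases hs with rfl | rfl <;>
            rw [h] at this ⊢
          all_goals norm_num at this
          all_goals norm_num
        have hlt : (k : ℕ) - 1 < t := by omega
        refine ⟨⟨(k : ℕ) - 1, hlt⟩, s, hs, ?_, ?_⟩
        · rintro ⟨hk1, hk2⟩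
          have := congrArg Fin.val hk1
          simp at this; omega
        · intro j hj
          rw [hXval] at hj ⊢
          have hqj := (q j).isLt
          by_cases hq : (q j : ℕ) = (k : ℕ) - 1
          · exfalso
            rw [if_pos (by simp; omega), hdj j, hq] at hj
            nlinarith [hj, hB]
          · by_cases hcmp : (k : ℕ) ≤ (q j : ℕ)
            · rw [if_pos (by simp; omega)] at hj
              rw [if_pos hcmp]; exact hj
            · rw [if_neg (by simp; omega)] at hj
              rw [if_neg hcmp]; exact hj
    · -- s * d k = -1 : successor witness
      have hA' : s * d (k : ℕ) = -1 := by
        rcases hdk1 with h | h <;> rcases hs with rfl | rfl <;>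
          rw [h] at hA ⊢
        all_goals norm_num at hA
        all_goals norm_num
      by_cases hk1 : (k : ℕ) + 1 < t
      · refine ⟨⟨(k : ℕ) + 1, hk1⟩, s, hs, ?_, ?_⟩
        · rintro ⟨hc, -⟩
          have := congrArg Fin.val hc
          simp at this
        · intro j hj
          rw [hXval] at hj ⊢
          have hqj := (q j).isLt
          by_cases hq : (q j : ℕ) = (k : ℕ)
          · rw [if_pos (by omega), hdj j, hq]; exact hA'
          · by_cases hcmp : (k : ℕ) ≤ (q j : ℕ)
            · rw [if_pos (by simp; omega)] at hj
              rw [if_pos hcmp]; exact hj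
            · rw [if_neg (by simp; omega)] at hj
              rw [if_neg hcmp]; exact hj
      · -- k = t - 1 : witness (0, -s)
        refine ⟨⟨0, ht⟩, -s, ?_, ?_, ?_⟩
        · rcases hs with rfl | rfl
          · right; norm_num
          · left; norm_num
        · rintro ⟨-, hc⟩; exact hsne s hs hc
        · intro j hj
          rw [hXval] at hj ⊢
          have hqj := (q j).isLt
          rw [if_pos (by simp)] at hj
          by_cases hq : (q j : ℕ) = (k : ℕ)
          · exfalso
            rw [hdj j, hq] at hj
            nlinarith [hj, hA']
          · rw [if_neg (by omega)]
            linarith [hj]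
  have hmemV : ∀ P, P ∈ V ↔ ∃ (k : Fin t) (s : ℝ),
      (s = 1 ∨ s = -1) ∧ P = fun j => s * R k.castSucc j := by
    intro P
    rw [hV]
    simp only [Finset.mem_union, Finset.mem_image, Finset.mem_univ, true_and]
    constructor
    · rintro (⟨k, rfl⟩ | ⟨k, rfl⟩)
      · exact ⟨k, 1, Or.inl rfl, by funext j; rw [one_mul]⟩
      · exact ⟨k, -1, Or.inr rfl, by funext j; simp⟩
    · rintro ⟨k, s, (rfl | rfl), rfl⟩
      · exact Or.inl ⟨k, by funext j; rw [one_mul]⟩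
      · exact Or.inr ⟨k, by funext j; simp⟩
  have hminmem : ∀ O, O ∈ minV ↔ ∃ (k : Fin t) (s : ℝ),
      (s = 1 ∨ s = -1) ∧ riseAux t d k s ∧ O = fun j => s * R k.castSucc j := by
    intro O
    rw [hmin, Finset.mem_filter]
    constructor
    · rintro ⟨hOV, hmini⟩
      obtain ⟨k, s, hs, rfl⟩ := (hmemV O).mp hOV
      refine ⟨k, s, hs, ?_, rfl⟩
      by_contra hnr
      obtain ⟨k'', s'', hs'', hne, hsub⟩ := nonrise k s hs hnr
      have hPV : (fun j => s'' * R k''.castSucc j) ∈ V := (hmemV _).mpr ⟨k'', s'', hs'', rfl⟩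
      have hPO := hmini _ hPV ?_
      · obtain ⟨h1, h2⟩ := hdist k'' k s'' s hs'' hs hPO
        exact hne ⟨h1, h2⟩
      · intro x hx
        simp only [Finset.mem_filter, Finset.mem_univ, true_and] at hx ⊢
        exact hsub x hx
    · rintro ⟨k, s, hs, hrise, rfl⟩
      refine ⟨(hmemV _).mpr ⟨k, s, hs, rfl⟩, ?_⟩
      intro P hPV hsub
      obtain ⟨k', s', hs', rfl⟩ := (hmemV P).mp hPV
      obtain ⟨a, b, ha, hb, hform⟩ := key k s hs hrise
      have hsub' : ∀ x, s' * R k'.castSucc x = -1 → s * R k.castSucc x = -1 := by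
        intro x hx
        have hm := hsub (Finset.mem_filter.mpr ⟨Finset.mem_univ x, hx⟩)
        exact (Finset.mem_filter.mp hm).2
      have hPa : s' * R k'.castSucc a = 1 := by
        rcases hval k' s' hs' a with h | h
        · exact h
        · exact absurd (hsub' a h) (by rw [ha]; norm_num)
      have hPb : s' * R k'.castSucc b = 1 := by
        rcases hval k' s' hs' b with h | h
        · exact h
        · exact absurd (hsub' b h) (by rw [hb]; norm_num)
      have hsum := hform k' s' hs'
      rw [hPa, hPb] at hsum
      by_cases hkk : k' = k
      · rw [if_pos hkk] at hsum
        have hss' : s' = s := by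
          rcases hs with rfl | rfl <;> rcases hs' with rfl | rfl <;> first | rfl | (exfalso; norm_num at hsum)
        subst hkk; subst hss'; rfl
      · rw [if_neg hkk] at hsum; norm_num at hsum

  constructor
  · -- sum over minV equals all-ones
    have hminV_eq : minV =
        (Finset.univ.filter (fun k => riseAux t d k 1)).image (fun k => R k.castSucc)
        ∪ (Finset.univ.filter (fun k => riseAux t d k (-1))).image (fun k => -(R k.castSucc)) := by
      ext O
      rw [hminmem]
      simp only [Finset.mem_union, Finset.mem_image, Finset.mem_filter, Finset.mem_univ, true_and]
      constructor
      · rintro ⟨k, s, (rfl | rfl), hrise, rfl⟩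
        · exact Or.inl ⟨k, hrise, by funext j; rw [one_mul]⟩
        · exact Or.inr ⟨k, hrise, by funext j; simp⟩
      · rintro (⟨k, hrise, rfl⟩ | ⟨k, hrise, rfl⟩)
        · exact ⟨k, 1, Or.inl rfl, hrise, by funext j; rw [one_mul]⟩
        · exact ⟨k, -1, Or.inr rfl, hrise, by funext j; simp⟩
    have hinj1 : ∀ k k' : Fin t, R k.castSucc = R k'.castSucc → k = k' := by
      intro k k' h
      refine (hdist k k' 1 1 (Or.inl rfl) (Or.inl rfl) ?_).1
      funext j; rw [h]
    have hne12 : ∀ k k' : Fin t, R k.castSucc ≠ -(R k'.castSucc) := by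
      intro k k' h
      have := (hdist k k' 1 (-1) (Or.inl rfl) (Or.inr rfl) (by funext j; rw [h]; simp)).2
      norm_num at this
    have hdisj : Disjoint
        ((Finset.univ.filter (fun k => riseAux t d k 1)).image (fun k => R k.castSucc))
        ((Finset.univ.filter (fun k => riseAux t d k (-1))).image (fun k => -(R k.castSucc))) := by
      rw [Finset.disjoint_left]
      rintro O hO1 hO2
      obtain ⟨k, -, rfl⟩ := Finset.mem_image.mp hO1
      obtain ⟨k', -, hk'⟩ := Finset.mem_image.mp hO2
      exact hne12 k k' hk'.symm
    rw [hminV_eq, Finset.sum_union hdisj,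
      Finset.sum_image (fun k _ k' _ h => hinj1 k k' h),
      Finset.sum_image (fun k _ k' _ h => hinj1 k k' (by rw [← neg_neg (R k.castSucc), h, neg_neg]))]
    funext j
    rw [Pi.add_apply, Finset.sum_apply, Finset.sum_apply]
    simp only [Pi.neg_apply]
    rw [Finset.sum_filter, Finset.sum_filter, ← Finset.sum_add_distrib]
    set pv : ℕ := (q j : ℕ) with hpv
    have hpvt : pv < t := (q j).isLt
    have hsummand : ∀ k : Fin t,
        ((if riseAux t d k 1 then R k.castSucc j else 0) +
          (if riseAux t d k (-1) then -(R k.castSucc j) else 0))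
        = ecoAux t d (k : ℕ) * (if (k : ℕ) ≤ pv then d pv else -(d pv)) := by
      intro k
      have hXj : R k.castSucc j = if (k : ℕ) ≤ pv then d pv else -(d pv) := by
        rw [hXval, hdj j]
      rw [hXj]
      set w : ℝ := if (k : ℕ) ≤ pv then d pv else -(d pv) with hw
      by_cases hk0 : (k : ℕ) = 0
      · rcases hd1 0 (by omega) with h1 | h1 <;>
          rcases hd1 (t - 1) (by omega) with h2 | h2 <;>
          simp only [riseAux, ecoAux, hk0, h1, h2] <;> norm_num
      · rcases hd1 (k : ℕ) k.isLt with h1 | h1 <;>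
          rcases hd1 ((k : ℕ) - 1) (by omega) with h2 | h2 <;>
          simp only [riseAux, ecoAux, if_neg hk0, h1, h2] <;> norm_num
    rw [Finset.sum_congr rfl (fun k _ => hsummand k)]
    have hfin : ∑ k : Fin t, ecoAux t d (k : ℕ) * (if (k : ℕ) ≤ pv then d pv else -(d pv))
        = ∑ n ∈ Finset.range t, ecoAux t d n * (if n ≤ pv then d pv else -(d pv)) :=
      Fin.sum_univ_eq_sum_range (fun n => ecoAux t d n * (if n ≤ pv then d pv else -(d pv))) t
    rw [hfin]
    have hecosum : ∀ m, ∑ n ∈ Finset.range (m + 1), ecoAux t d n = (d m + d (t - 1)) / 2 := by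
      intro m
      rw [Finset.sum_range_succ']
      have h1 : ∀ i, ecoAux t d (i + 1) = d (i + 1) / 2 - d i / 2 := by
        intro i; simp only [ecoAux, Nat.succ_ne_zero, if_false, Nat.add_sub_cancel]; ring
      rw [Finset.sum_congr rfl (fun i _ => h1 i), Finset.sum_range_sub (fun n => d n / 2)]
      simp only [ecoAux, if_true, eq_self_iff_true]
      ring
    have hsplit : ∑ n ∈ Finset.range t, ecoAux t d n * (if n ≤ pv then d pv else -(d pv))
        = (∑ n ∈ Finset.range (pv + 1), ecoAux t d n) * d pv
          + (∑ n ∈ Finset.Ico (pv + 1) t, ecoAux t d n) * (-(d pv)) := by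
      rw [← Finset.sum_range_add_sum_Ico _ (show pv + 1 ≤ t by omega)]
      rw [Finset.sum_mul, Finset.sum_mul]
      congr 1
      · refine Finset.sum_congr rfl fun n hn => ?_
        rw [Finset.mem_range] at hn
        rw [if_pos (by omega)]
      · refine Finset.sum_congr rfl fun n hn => ?_
        rw [Finset.mem_Ico] at hn
        rw [if_neg (by omega)]
    rw [hsplit, hecosum pv]
    have htt : t = (t - 1) + 1 := by omega
    have hrt : ∑ n ∈ Finset.range t, ecoAux t d n = d (t - 1) := by
      rw [show Finset.range t = Finset.range ((t - 1) + 1) by rw [← htt], hecosum (t - 1)]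
      ring
    have hico : ∑ n ∈ Finset.Ico (pv + 1) t, ecoAux t d n = d (t - 1) / 2 - d pv / 2 := by
      have := Finset.sum_range_add_sum_Ico (fun n => ecoAux t d n) (show pv + 1 ≤ t by omega)
      rw [hecosum pv] at this
      rw [hrt] at this
      linarith [this]
    rw [hico]
    rcases hd1 pv hpvt with h | h <;> rw [h] <;> ring
  · -- uniqueness: any S ⊆ V summing to all-ones contains minV
    intro S hSV hSsum O hO
    obtain ⟨k, s, hs, hrise, rfl⟩ := (hminmem O).mp hO
    obtain ⟨a, b, ha, hb, hform⟩ := key k s hs hrise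
    have hsneg : -s = 1 ∨ -s = -1 := by
      rcases hs with rfl | rfl
      · right; norm_num
      · left; norm_num
    have hONe : (fun j => s * R k.castSucc j) ≠ (fun j => -s * R k.castSucc j) := by
      intro h
      have := (hdist k k s (-s) hs hsneg h).2
      rcases hs with rfl | rfl <;> norm_num at this
    have hterm : ∀ P ∈ S, P a + P b =
        (if P = (fun j => s * R k.castSucc j) then (2 : ℝ) else 0) +
        (if P = (fun j => -s * R k.castSucc j) then (-2 : ℝ) else 0) := by
      intro P hP
      obtain ⟨k', s', hs', rfl⟩ := (hmemV P).mp (hSV hP)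
      have hsum := hform k' s' hs'
      by_cases hkk : k' = k
      · subst hkk
        rw [if_pos rfl] at hsum
        by_cases hss' : s' = s
        · subst hss'
          rw [if_pos rfl, if_neg hONe, hsum]
          rcases hs' with rfl | rfl <;> norm_num
        · have hss'' : s' = -s := by
            rcases hs with rfl | rfl <;> rcases hs' with rfl | rfl <;> first | rfl | (exfalso; exact hss' rfl) | norm_num
          subst hss''
          rw [if_neg, if_pos rfl, hsum]
          · rcases hs with rfl | rfl <;> norm_num
          · intro h
            have := (hdist k' k' (-s) s hs' hs h).2
            rcases hs with rfl | rfl <;> norm_num at this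
      · rw [if_neg hkk] at hsum
        rw [hsum, if_neg, if_neg]
        · norm_num
        · intro h
          exact hkk (hdist k' k s' (-s) hs' hsneg h).1
        · intro h
          exact hkk (hdist k' k s' s hs' hs h).1
    have hsum2 : ∑ P ∈ S, (P a + P b) = 2 := by
      rw [Finset.sum_add_distrib]
      have h1 := congrFun hSsum a
      have h2 := congrFun hSsum b
      rw [Finset.sum_apply] at h1 h2
      rw [h1, h2]; norm_num
    rw [Finset.sum_congr rfl hterm, Finset.sum_add_distrib,
      Finset.sum_ite_eq' S _ (fun _ => (2 : ℝ)),
      Finset.sum_ite_eq' S _ (fun _ => (-2 : ℝ))] at hsum2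
    by_contra hnotin
    rw [if_neg hnotin] at hsum2
    split_ifs at hsum2 <;> norm_num at hsum2
end

section
/- Let V(R) be the vertex set of a symmetric cycle as above, and let B ∈ {-1,1}^t be arbitrary. Order V(R) by T' ⪯_B T'' iff S(B,T') ⊆ S(B,T''). Then the set min_B V(R) of minimal elements of (V(R), ⪯_B) equals Q(B,R), so B = Σ_{Q ∈ min_B V(R)} Q. -/
open Finset Matrix

open Classical in
noncomputable def riseCnt (g : ℕ → Prop) (a b : ℕ) : ℕ :=
  ((Finset.Ioc a b).filter fun u => g u ∧ ¬ g (u - 1)).card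

open Classical in
noncomputable def fallCnt (g : ℕ → Prop) (a b : ℕ) : ℕ :=
  ((Finset.Ioc a b).filter fun u => ¬ g u ∧ g (u - 1)).card

def inArcN (t i0 u : ℕ) : Prop :=
  if t ≤ i0 then (i0 - t < u ∧ u ≤ i0) else (u ≤ i0 ∨ i0 + t < u)

section cw

variable {t : ℕ} {g : ℕ → Prop}

lemma gper (hg : ∀ u, g (u + t) ↔ ¬ g u) (u : ℕ) : g (u + 2 * t) ↔ g u := by
  have h1 := hg u
  have h2 := hg (u + t)
  have h3 : u + t + t = u + 2 * t := by ring
  rw [h3] at h2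
  tauto

open Classical in
lemma tele (a b : ℕ) (hab : a ≤ b) :
    (riseCnt g a b : ℤ) - fallCnt g a b
      = (if g b then (1:ℤ) else 0) - (if g a then 1 else 0) := by
  classical
  induction b, hab using Nat.le_induction with
  | base => simp [riseCnt, fallCnt]
  | succ b hab ih =>
    have hIoc : Ioc a (b+1) = insert (b+1) (Ioc a b) := by
      ext x; simp only [mem_Ioc, mem_insert]; omega
    have hnm : (b+1) ∉ Ioc a b := by simp
    have hr : riseCnt g a (b+1)
        = riseCnt g a b + (if g (b+1) ∧ ¬ g b then 1 else 0) := by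
      unfold riseCnt
      rw [hIoc, filter_insert]
      simp only [Nat.add_sub_cancel]
      split_ifs with h
      · rw [card_insert_of_notMem (fun hx => hnm (mem_filter.1 hx).1)]
      · simp
    have hf : fallCnt g a (b+1)
        = fallCnt g a b + (if ¬ g (b+1) ∧ g b then 1 else 0) := by
      unfold fallCnt
      rw [hIoc, filter_insert]
      simp only [Nat.add_sub_cancel]
      split_ifs with h
      · rw [card_insert_of_notMem (fun hx => hnm (mem_filter.1 hx).1)]
      · simp
    rw [hr, hf]
    by_cases h1 : g (b+1) <;> by_cases h2 : g b <;>
      simp only [h1, h2, if_pos, if_neg, not_true, not_false_iff, true_and, false_and,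
        and_true, and_false, if_true, if_false, not_false_eq_true] at ih ⊢ <;>
      push_cast <;> omega

lemma riseCnt_shift (hg : ∀ u, g (u + t) ↔ ¬ g u) (a b : ℕ) :
    riseCnt g (a + t) (b + t) = fallCnt g a b := by
  classical
  unfold riseCnt fallCnt
  apply Finset.card_bij' (fun u _ => u - t) (fun u _ => u + t)
  · intro u hu
    simp only [mem_filter, mem_Ioc] at hu ⊢
    have hu1 : u - 1 = (u - t - 1) + t := by omega
    have h2 := hg (u - t)
    have h3 := hg (u - t - 1)
    rw [hu1] at hu
    constructor
    · omega
    · have h4 : u - t + t = u := by omega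
      rw [h4] at h2
      tauto
  · intro u hu
    simp only [mem_filter, mem_Ioc] at hu ⊢
    have h2 := hg u
    have h3 := hg (u - 1)
    have hu1 : u - 1 + t = u + t - 1 := by omega
    rw [hu1] at h3
    constructor
    · omega
    · tauto
  · intro u hu; simp only [mem_filter, mem_Ioc] at hu; omega
  · intro u hu; simp only [mem_filter, mem_Ioc] at hu; omega

lemma riseCnt_add (a b c : ℕ) (hab : a ≤ b) (hbc : b ≤ c) :
    riseCnt g a c = riseCnt g a b + riseCnt g b c := by
  classical
  unfold riseCnt
  rw [← Finset.Ioc_union_Ioc_eq_Ioc hab hbc, filter_union]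
  apply Finset.card_union_of_disjoint
  apply Finset.disjoint_filter_filter
  rw [Finset.disjoint_left]
  intro x hx hy
  simp only [mem_Ioc] at hx hy
  omega

open Classical in
lemma riseCnt_single (a : ℕ) :
    riseCnt g a (a+1) = if g (a+1) ∧ ¬ g a then 1 else 0 := by
  classical
  unfold riseCnt
  have h : Ioc a (a+1) = {a+1} := by
    ext x; simp only [mem_Ioc, mem_singleton]; omega
  rw [h, filter_singleton]
  simp only [Nat.add_sub_cancel]
  split_ifs with h1 h2 <;> first | rfl | simp

lemma riseCnt_window (hg : ∀ u, g (u + t) ↔ ¬ g u) (a : ℕ) :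
    riseCnt g a (a + 2 * t) = riseCnt g 0 (2 * t) := by
  induction a with
  | zero => simp
  | succ a ih =>
    rw [← ih]
    have h1 : riseCnt g a (a + 1 + 2 * t)
        = riseCnt g a (a+1) + riseCnt g (a+1) (a + 1 + 2*t) :=
      riseCnt_add _ _ _ (by omega) (by omega)
    have h2 : riseCnt g a (a + 1 + 2 * t)
        = riseCnt g a (a + 2*t) + riseCnt g (a + 2*t) (a + 1 + 2*t) :=
      riseCnt_add _ _ _ (by omega) (by omega)
    have h3 : riseCnt g (a + 2*t) (a + 1 + 2*t) = riseCnt g a (a+1) := by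
      have e1 : a + 1 + 2*t = (a + 2*t) + 1 := by ring
      rw [e1, riseCnt_single, riseCnt_single]
      have p1 : g (a + 2*t + 1) ↔ g (a+1) := by
        have h := gper hg (a+1)
        rwa [show (a+1)+2*t = a+2*t+1 by ring] at h
      have p2 : g (a + 2*t) ↔ g a := gper hg a
      split_ifs <;> tauto
    omega

lemma arcQ (hg : ∀ u, g (u + t) ↔ ¬ g u) (a : ℕ) (hga : ¬ g (a + t)) :
    2 * riseCnt g a (a + t) + 1 = riseCnt g 0 (2 * t) := by
  classical
  have hga' : g a := by have := hg a; tauto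
  have h1 : riseCnt g a (a + 2*t) = riseCnt g a (a+t) + riseCnt g (a+t) (a+2*t) :=
    riseCnt_add _ _ _ (by omega) (by omega)
  have h2 : riseCnt g (a+t) (a+2*t) = fallCnt g a (a+t) := by
    have := riseCnt_shift hg a (a+t)
    rwa [show a + t + t = a + 2*t by ring] at this
  have h3 := tele (g := g) a (a+t) (by omega)
  rw [if_neg hga, if_pos hga'] at h3
  have h4 := riseCnt_window hg a
  omega

lemma arc_union (t u i01 i02 : ℕ) (ht : 0 < t) (hu : u < 2*t)
    (h1 : i01 = if u = 0 then 2*t - 1 else u - 1)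
    (h2 : i02 = if u < t then u + t else u - t)
    (v : ℕ) (hv : v < 2*t) (hne : v ≠ u) : inArcN t i01 v ∨ inArcN t i02 v := by
  subst h1 h2; unfold inArcN; split_ifs <;> omega

lemma arc_inter (t u i01 i02 : ℕ) (ht : 0 < t) (hu : u < 2*t)
    (h1 : i01 = if u = 0 then 2*t - 1 else u - 1)
    (h2 : i02 = if u < t then u + t else u - t)
    (v : ℕ) (hv : v < 2*t) : (inArcN t i01 v ∧ inArcN t i02 v) ↔ v = i02 := by
  subst h1 h2; unfold inArcN; split_ifs <;> omega

lemma arc_self (t u i01 i02 : ℕ) (ht : 0 < t) (hu : u < 2*t)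
    (h1 : i01 = if u = 0 then 2*t - 1 else u - 1)
    (h2 : i02 = if u < t then u + t else u - t) :
    ¬ inArcN t i01 u ∧ ¬ inArcN t i02 u := by
  subst h1 h2; unfold inArcN; split_ifs <;> omega

lemma arc_step1 (t u v i0 : ℕ) (ht : 0 < t) (hu : u < 2*t)
    (hv : v = if u = 0 then 2*t-1 else u-1) (hi0 : i0 < 2*t) (hne : v ≠ i0)
    (h : inArcN t i0 v) : inArcN t i0 u := by
  subst hv; unfold inArcN at *; split_ifs at * <;> omega

lemma arc_step2 (t u v i0 : ℕ) (ht : 0 < t) (hu : u < 2*t)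
    (hv : v = if u = 2*t-1 then 0 else u+1) (hi0 : i0 < 2*t)
    (hne1 : i0 < t → u ≠ i0 + t) (hne2 : t ≤ i0 → u ≠ i0 - t)
    (h : inArcN t i0 v) : inArcN t i0 u := by
  subst hv; unfold inArcN at *; split_ifs at * <;> omega

end cw

set_option maxHeartbeats 1000000 in
theorem stmt_9 (t : ℕ) (ht : 0 < t)
    (R : Fin (t + 1) → Fin t → ℝ)
    (hsign : ∀ k j, R k j = -1 ∨ R k j = 1)
    (hRt : R (Fin.last t) = -(R 0))
    (l : Fin t → Fin t) (hl : Function.Bijective l)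
    (hstep : ∀ (k : Fin t) (j : Fin t), R k.castSucc j ≠ R k.succ j ↔ j = l k)
    (V : Finset (Fin t → ℝ))
    (hV : V = (Finset.univ.image fun k : Fin t => R k.castSucc)
        ∪ (Finset.univ.image fun k : Fin t => -(R k.castSucc)))
    (B : Fin t → ℝ) (hB : ∀ j, B j = -1 ∨ B j = 1)
    (minV : Finset (Fin t → ℝ))
    (hmin : minV = V.filter fun O => ∀ P ∈ V,
      (Finset.univ.filter fun e => B e ≠ P e) ⊆ (Finset.univ.filter fun e => B e ≠ O e)
        → P = O) :
    (∑ q ∈ minV, q) = B ∧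
    ∀ S : Finset (Fin t → ℝ), S ⊆ V → (∑ q ∈ S, q) = B → minV ⊆ S := by
  classical
  set e : Fin t ≃ Fin t := Equiv.ofBijective l hl with hedef
  have hel : ∀ p : Fin t, e p = l p := fun p => rfl
  have hle : ∀ j : Fin t, l (e.symm j) = j := fun j => by
    rw [← hel]; exact e.apply_symm_apply j
  have hsel : ∀ p : Fin t, e.symm (l p) = p := fun p => by
    rw [← hel]; exact e.symm_apply_apply p
  -- structure of the cycle
  have hstruct : ∀ (k : Fin (t+1)) (j : Fin t),
      R k j = if ((e.symm j : Fin t) : ℕ) < (k : ℕ) then -(R 0 j) else R 0 j := by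
    intro k
    induction k using Fin.induction with
    | zero => intro j; simp
    | succ k ih =>
      intro j
      by_cases hj : j = l k
      · have hne : R k.castSucc j ≠ R k.succ j := (hstep k j).2 hj
        have hsym : e.symm j = k := by rw [hj, hsel]
        have h1 : R k.castSucc j = R 0 j := by
          rw [ih j, hsym, if_neg (by simp)]
        rw [hsym]
        simp only [Fin.val_succ]
        rw [if_pos (by omega)]
        rw [h1] at hne
        rcases hsign k.succ j with h2 | h2 <;> rcases hsign 0 j with h3 | h3 <;>
          rw [h2, h3] at hne ⊢ <;> first | exact absurd rfl hne | norm_num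
      · have heq : R k.castSucc j = R k.succ j := by
          by_contra hc; exact hj ((hstep k j).1 hc)
        have hsym : ((e.symm j : Fin t) : ℕ) ≠ (k : ℕ) := by
          intro hc
          apply hj
          have : e.symm j = k := Fin.ext hc
          rw [← this, hle]
        rw [← heq, ih j]
        simp only [Fin.coe_castSucc, Fin.val_succ]
        congr 1
        · simp only [eq_iff_iff]; omega
  -- the 2t vertices
  set w : ℕ → Fin t → ℝ := fun u j =>
    if ((e.symm j : Fin t) : ℕ) < u ∧ u ≤ ((e.symm j : Fin t) : ℕ) + t
    then -(R 0 j) else R 0 j with hwdef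
  have hw1 : ∀ k : Fin t, w (k : ℕ) = R k.castSucc := by
    intro k
    funext j
    rw [hstruct k.castSucc j, hwdef]
    simp only [Fin.coe_castSucc]
    by_cases h : ((e.symm j : Fin t) : ℕ) < (k : ℕ)
    · rw [if_pos ⟨h, by have := (e.symm j).isLt; omega⟩, if_pos h]
    · rw [if_neg (by tauto), if_neg h]
  have hw2 : ∀ k : Fin t, w ((k : ℕ) + t) = -(R k.castSucc) := by
    intro k
    funext j
    rw [Pi.neg_apply, hstruct k.castSucc j, hwdef]
    simp only [Fin.coe_castSucc]
    have hjt := (e.symm j).isLt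
    have hkt := k.isLt
    by_cases h : ((e.symm j : Fin t) : ℕ) < (k : ℕ)
    · rw [if_neg (by omega), if_pos h, neg_neg]
    · rw [if_pos (by omega), if_neg h]
  have hVw : V = (Finset.range (2*t)).image w := by
    rw [hV]
    ext x
    simp only [mem_union, mem_image, mem_range, mem_univ, true_and]
    constructor
    · rintro (⟨k, hk⟩ | ⟨k, hk⟩)
      · exact ⟨(k:ℕ), by have := k.isLt; omega, by rw [hw1 k, hk]⟩
      · exact ⟨(k:ℕ) + t, by have := k.isLt; omega, by rw [hw2 k, hk]⟩
    · rintro ⟨u, hu, hx⟩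
      by_cases h : u < t
      · left; exact ⟨⟨u, h⟩, by rw [← hx, ← hw1 ⟨u, h⟩]⟩
      · right
        refine ⟨⟨u - t, by omega⟩, ?_⟩
        have h2 := hw2 ⟨u - t, by omega⟩
        have harg : ((⟨u - t, by omega⟩ : Fin t) : ℕ) + t = u := by
          show u - t + t = u
          omega
        rw [harg] at h2
        rw [← h2]
        exact hx
  -- the circular word
  set q' : Fin t → Prop := fun p => B (l p) = R 0 (l p) with hq'def
  set pc : ℕ → Prop := fun n => ∃ hn : n < t, q' ⟨n, hn⟩ with hpcdef
  set g : ℕ → Prop := fun u => (u / t % 2 = 0 ↔ pc (u % t)) with hgdef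
  have hpcq : ∀ p : Fin t, pc (p : ℕ) ↔ q' p := by
    intro p
    simp only [hpcdef]
    constructor
    · rintro ⟨hn, hq⟩
      have h : (⟨(p : ℕ), hn⟩ : Fin t) = p := Fin.ext rfl
      rwa [h] at hq
    · intro hq
      refine ⟨p.isLt, ?_⟩
      have h : (⟨(p : ℕ), p.isLt⟩ : Fin t) = p := Fin.ext rfl
      rwa [h]
  have hg : ∀ u, g (u + t) ↔ ¬ g u := by
    intro u
    simp only [hgdef, Nat.add_div_right u ht, Nat.add_mod_right]
    have hpar : ((u / t + 1) % 2 = 0) ↔ ¬ (u / t % 2 = 0) := by omega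
    rw [hpar]
    tauto
  have hgsm : ∀ p : Fin t, (g (p : ℕ) ↔ q' p) := by
    intro p
    simp only [hgdef, Nat.div_eq_of_lt p.isLt, Nat.mod_eq_of_lt p.isLt, Nat.zero_mod]
    rw [hpcq p]
    simp
  set i0f : Fin t → ℕ := fun p => if q' p then (p : ℕ) + t else (p : ℕ) with hi0def
  have hi0lt : ∀ p : Fin t, i0f p < 2 * t := by
    intro p
    have := p.isLt
    simp only [hi0def]
    split_ifs <;> omega
  have hgi0 : ∀ p : Fin t, ¬ g (i0f p) := by
    intro p
    by_cases hq : q' p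
    · simp only [hi0def, if_pos hq]
      intro hgx
      exact ((hg (p : ℕ)).1 hgx) ((hgsm p).2 hq)
    · simp only [hi0def, if_neg hq]
      intro hgx
      exact hq ((hgsm p).1 hgx)
  have hi0surj : ∀ i0, i0 < 2 * t → ¬ g i0 → ∃ p : Fin t, i0f p = i0 := by
    intro i0 hlt hgneg
    by_cases h : i0 < t
    · refine ⟨⟨i0, h⟩, ?_⟩
      simp only [hi0def]
      rw [if_neg (fun hq => hgneg ((hgsm ⟨i0, h⟩).2 hq))]
    · refine ⟨⟨i0 - t, by omega⟩, ?_⟩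
      have hq : q' ⟨i0 - t, by omega⟩ := by
        rw [← hgsm ⟨i0 - t, by omega⟩]
        have h2 := hg (i0 - t)
        have harg : i0 - t + t = i0 := by omega
        rw [harg] at h2
        by_contra hc
        exact hgneg (by tauto)
      simp only [hi0def, if_pos hq]
      show i0 - t + t = i0
      omega
  -- sign facts
  have hBne : ∀ j, B j ≠ 0 := by
    intro j
    rcases hB j with h | h <;> rw [h] <;> norm_num
  have hR0sign := hsign 0
  have hwB : ∀ (u : ℕ) (j : Fin t),
      w u j = if inArcN t (i0f (e.symm j)) u then -(B j) else B j := by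
    intro u j
    have hlj : l (e.symm j) = j := hle j
    have hpl := (e.symm j).isLt
    by_cases hq : q' (e.symm j)
    · have hBj : B j = R 0 j := by rw [← hlj]; exact hq
      have harc : inArcN t (i0f (e.symm j)) u
          ↔ (((e.symm j : Fin t) : ℕ) < u ∧ u ≤ ((e.symm j : Fin t) : ℕ) + t) := by
        simp only [hi0def, if_pos hq]
        unfold inArcN
        rw [if_pos (by omega : t ≤ ((e.symm j : Fin t) : ℕ) + t)]
        omega
      simp only [hwdef]
      by_cases hc : (((e.symm j : Fin t) : ℕ) < u ∧ u ≤ ((e.symm j : Fin t) : ℕ) + t)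
      · rw [if_pos hc, if_pos (harc.2 hc), hBj]
      · rw [if_neg hc, if_neg (fun hx => hc (harc.1 hx)), hBj]
    · have hBj : B j = -(R 0 j) := by
        have h1 : B (l (e.symm j)) ≠ R 0 (l (e.symm j)) := hq
        rw [hlj] at h1
        rcases hB j with h | h <;> rcases hR0sign j with h2 | h2 <;>
          rw [h, h2] at h1 ⊢ <;> first | exact absurd rfl h1 | norm_num
      have hR0j : R 0 j = -(B j) := by rw [hBj, neg_neg]
      have harc : inArcN t (i0f (e.symm j)) u
          ↔ ¬ (((e.symm j : Fin t) : ℕ) < u ∧ u ≤ ((e.symm j : Fin t) : ℕ) + t) := by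
        simp only [hi0def, if_neg hq]
        unfold inArcN
        rw [if_neg (by omega : ¬ t ≤ ((e.symm j : Fin t) : ℕ))]
        omega
      simp only [hwdef]
      by_cases hc : (((e.symm j : Fin t) : ℕ) < u ∧ u ≤ ((e.symm j : Fin t) : ℕ) + t)
      · rw [if_pos hc, if_neg (fun hx => (harc.1 hx) hc), hBj]
      · rw [if_neg hc, if_pos (harc.2 hc), hR0j]
  have hmem : ∀ (u : ℕ) (j : Fin t), (B j ≠ w u j) ↔ inArcN t (i0f (e.symm j)) u := by
    intro u j
    rw [hwB u j]
    by_cases hc : inArcN t (i0f (e.symm j)) u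
    · rw [if_pos hc]
      constructor
      · intro _; exact hc
      · intro _ hx
        have h0 : B j = 0 := by linarith
        exact hBne j h0
    · rw [if_neg hc]
      constructor
      · intro hx; exact absurd rfl hx
      · intro hx; exact absurd hx hc
  -- injectivity of w on positions
  have hwinj : ∀ u, u < 2*t → ∀ v, v < 2*t → w u = w v → u = v := by
    have key : ∀ u v, u < 2*t → v < 2*t → u < v →
        (∀ pn, pn < t → ((pn < u ∧ u ≤ pn + t) ↔ (pn < v ∧ v ≤ pn + t))) → False := by
      intro u v hu hv huv hiff
      by_cases h1 : u < t
      · by_cases h2 : v ≤ u + t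
        · have := hiff u h1
          omega
        · have := hiff (v - t) (by omega)
          omega
      · have := hiff (u - t) (by omega)
        omega
    intro u hu v hv heq
    have hiff : ∀ pn, pn < t → ((pn < u ∧ u ≤ pn + t) ↔ (pn < v ∧ v ≤ pn + t)) := by
      intro pn hpn
      set p : Fin t := ⟨pn, hpn⟩ with hpdef
      have hc := congrFun heq (l p)
      simp only [hwdef, hsel p] at hc
      have hR0 : R 0 (l p) ≠ -(R 0 (l p)) := by
        rcases hR0sign (l p) with h | h <;> rw [h] <;> norm_num
      by_cases c1 : ((p:ℕ) < u ∧ u ≤ (p:ℕ) + t) <;> by_cases c2 : ((p:ℕ) < v ∧ v ≤ (p:ℕ) + t)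
      · exact iff_of_true c1 c2
      · rw [if_pos c1, if_neg c2] at hc
        exact absurd hc.symm hR0
      · rw [if_neg c1, if_pos c2] at hc
        exact absurd hc hR0
      · exact iff_of_false c1 c2
    rcases Nat.lt_trichotomy u v with h | h | h
    · exact absurd (key u v hu hv h hiff) (fun x => x)
    · exact h
    · exact absurd (key v u hv hu h (fun pn hpn => (hiff pn hpn).symm)) (fun x => x)
  -- subset of separating sets vs arcs
  have hsubset : ∀ u v : ℕ,
      ((Finset.univ.filter fun j => B j ≠ w v j) ⊆ (Finset.univ.filter fun j => B j ≠ w u j))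
        ↔ (∀ p : Fin t, inArcN t (i0f p) v → inArcN t (i0f p) u) := by
    intro u v
    constructor
    · intro hsub p harc
      have hj : (l p) ∈ Finset.univ.filter fun j => B j ≠ w v j := by
        rw [mem_filter]
        refine ⟨mem_univ _, ?_⟩
        rw [hmem v (l p), hsel p]
        exact harc
      have := hsub hj
      rw [mem_filter] at this
      have h2 := this.2
      rw [hmem u (l p), hsel p] at h2
      exact h2
    · intro harc j hj
      rw [mem_filter] at hj ⊢
      refine ⟨mem_univ _, ?_⟩
      rw [hmem u j]
      rw [hmem v j] at hj
      exact harc (e.symm j) hj.2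
  -- sum criterion
  have hsum : ∀ P : Finset ℕ, ((∑ u ∈ P, w u) = B ↔
      ∀ p : Fin t, P.card = 2 * (P.filter (fun u => inArcN t (i0f p) u)).card + 1) := by
    intro P
    have hkey : ∀ j : Fin t, (∑ u ∈ P, w u) j
        = ((P.card : ℝ) - 2 * ((P.filter (fun u => inArcN t (i0f (e.symm j)) u)).card : ℝ)) * B j := by
      intro j
      rw [Finset.sum_apply]
      have h1 : ∀ u ∈ P, w u j = if inArcN t (i0f (e.symm j)) u then -(B j) else B j :=
        fun u _ => hwB u j
      rw [Finset.sum_congr rfl h1, Finset.sum_ite, Finset.sum_const, Finset.sum_const]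
      have h2 : (P.filter (fun u => inArcN t (i0f (e.symm j)) u)).card
          + (P.filter (fun u => ¬ inArcN t (i0f (e.symm j)) u)).card = P.card :=
        Finset.card_filter_add_card_filter_not _
      have h3 : ((P.filter (fun u => ¬ inArcN t (i0f (e.symm j)) u)).card : ℝ)
          = (P.card : ℝ) - ((P.filter (fun u => inArcN t (i0f (e.symm j)) u)).card : ℝ) := by
        rw [← h2]; push_cast; ring
      rw [nsmul_eq_mul, nsmul_eq_mul, h3]
      ring
    constructor
    · intro hsb p
      have hj := hkey (l p)
      rw [hsb] at hj
      rw [hsel p] at hj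
      have hBj := hBne (l p)
      have h4 : ((P.card : ℝ) - 2 * ((P.filter (fun u => inArcN t (i0f p) u)).card : ℝ)) = 1 := by
        have h5 : ((P.card : ℝ) - 2 * ((P.filter (fun u => inArcN t (i0f p) u)).card : ℝ)) * B (l p)
            = 1 * B (l p) := by rw [one_mul]; exact hj.symm
        exact mul_right_cancel₀ hBj h5
      have h6 : (P.card : ℝ) = 2 * ((P.filter (fun u => inArcN t (i0f p) u)).card : ℝ) + 1 := by
        linarith
      exact_mod_cast h6
    · intro hcnt
      funext j
      rw [hkey j]
      have := hcnt (e.symm j)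
      have h6 : ((P.card : ℝ) - 2 * ((P.filter (fun u => inArcN t (i0f (e.symm j)) u)).card : ℝ)) = 1 := by
        have : (P.card : ℝ) = 2 * ((P.filter (fun u => inArcN t (i0f (e.symm j)) u)).card : ℝ) + 1 := by
          exact_mod_cast this
        linarith
      rw [h6, one_mul]
  -- the set of "rise" positions
  set Rises : Finset ℕ := (Finset.range (2*t)).filter (fun u => g u ∧ ¬ g (u + 2*t - 1)) with hRdef
  have hgp : ∀ u, g (u + 2*t) ↔ g u := gper hg
  have hgp1 : ∀ u, 1 ≤ u → (g (u + 2*t - 1) ↔ g (u - 1)) := by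
    intro u hu
    have h := hgp (u - 1)
    have harg : u - 1 + 2*t = u + 2*t - 1 := by omega
    rwa [harg] at h
  have hRsub : Rises ⊆ Finset.range (2*t) := by
    rw [hRdef]; exact Finset.filter_subset _ _
  have hrcEq : ∀ a b : ℕ, riseCnt g a b
      = ((Finset.Ioc a b).filter (fun u => g u ∧ ¬ g (u-1))).card := by
    intro a b
    unfold riseCnt
    congr 1
    apply Finset.filter_congr_decidable
  have hcard1 : Rises.card = riseCnt g 0 (2*t) := by
    rw [hRdef]
    unfold riseCnt
    apply Finset.card_bij (fun u _ => if u = 0 then 2*t else u)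
    · intro u hu
      simp only [mem_filter, mem_range] at hu
      simp only [mem_filter, mem_Ioc]
      by_cases h0 : u = 0
      · subst h0
        rw [if_pos rfl]
        refine ⟨by omega, ?_, ?_⟩
        · rw [show 2*t = 0 + 2*t by omega, hgp 0]
          exact hu.2.1
        · have : 2*t - 1 = 0 + 2*t - 1 := by omega
          rw [this]
          exact hu.2.2
      · rw [if_neg h0]
        refine ⟨by omega, hu.2.1, ?_⟩
        intro hc
        exact hu.2.2 ((hgp1 u (by omega)).2 hc)
    · intro u hu v hv hee
      simp only [mem_filter, mem_range] at hu hv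
      by_cases h0 : u = 0 <;> by_cases h1 : v = 0
      · omega
      · rw [if_pos h0, if_neg h1] at hee; omega
      · rw [if_neg h0, if_pos h1] at hee; omega
      · rw [if_neg h0, if_neg h1] at hee; exact hee
    · intro v hv
      simp only [mem_filter, mem_Ioc] at hv
      by_cases h2 : v = 2*t
      · refine ⟨0, ?_, ?_⟩
        · simp only [mem_filter, mem_range]
          subst h2
          refine ⟨by omega, ?_, ?_⟩
          · rw [← hgp 0, show 0 + 2*t = 2*t by omega]
            exact hv.2.1
          · have : 0 + 2*t - 1 = 2*t - 1 := by omega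
            rw [this]
            exact hv.2.2
        · rw [if_pos rfl, h2]
      · refine ⟨v, ?_, ?_⟩
        · simp only [mem_filter, mem_range]
          refine ⟨by omega, hv.2.1, ?_⟩
          intro hc
          exact hv.2.2 ((hgp1 v (by omega)).1 hc)
        · rw [if_neg (by omega)]
  have hcard2 : ∀ p : Fin t,
      2 * (Rises.filter (fun u => inArcN t (i0f p) u)).card + 1 = riseCnt g 0 (2*t) := by
    intro p
    obtain ⟨i0, hi0eq⟩ : ∃ x, i0f p = x := ⟨_, rfl⟩
    simp only [hi0eq]
    have hi0lt' : i0 < 2*t := hi0eq ▸ hi0lt p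
    have hgi0' : ¬ g i0 := hi0eq ▸ hgi0 p
    by_cases hcase : t ≤ i0
    · have hfeq : Rises.filter (fun u => inArcN t i0 u)
          = (Finset.Ioc (i0 - t) i0).filter (fun u => g u ∧ ¬ g (u - 1)) := by
        ext u
        rw [hRdef]
        simp only [mem_filter, mem_range, mem_Ioc, filter_filter]
        unfold inArcN
        rw [if_pos hcase]
        constructor
        · rintro ⟨hu2t, ⟨hgu, hgprev⟩, harc⟩
          refine ⟨⟨harc.1, harc.2⟩, hgu, ?_⟩
          intro hc
          exact hgprev ((hgp1 u (by omega)).2 hc)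
        · rintro ⟨⟨h1, h2⟩, hgu, hgprev⟩
          refine ⟨by omega, ⟨hgu, ?_⟩, by omega, by omega⟩
          intro hc
          exact hgprev ((hgp1 u (by omega)).1 hc)
      rw [hfeq]
      have harcq := arcQ hg (i0 - t) (by rw [show i0 - t + t = i0 by omega]; exact hgi0')
      rw [show i0 - t + t = i0 by omega] at harcq
      rw [← harcq, hrcEq]
    · push_neg at hcase
      have hccc : (Rises.filter (fun u => inArcN t i0 u)).card
          = ((Finset.Ioc (i0 + t) (i0 + 2*t)).filter (fun u => g u ∧ ¬ g (u - 1))).card := by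
        apply Finset.card_bij (fun u _ => if u ≤ i0 then u + 2*t else u)
        · intro u hu
          rw [hRdef] at hu
          simp only [mem_filter, mem_range, filter_filter] at hu
          obtain ⟨hu2t, ⟨hgu, hgprev⟩, harc⟩ := hu
          unfold inArcN at harc
          rw [if_neg (by omega)] at harc
          simp only [mem_filter, mem_Ioc]
          by_cases hle : u ≤ i0
          · rw [if_pos hle]
            refine ⟨⟨by omega, by omega⟩, ?_, ?_⟩
            · rw [hgp u]; exact hgu
            · intro hc
              exact hgprev hc
          · rw [if_neg hle]
            refine ⟨⟨by omega, by omega⟩, hgu, ?_⟩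
            intro hc
            exact hgprev ((hgp1 u (by omega)).2 hc)
        · intro u hu v hv hee
          rw [hRdef] at hu hv
          simp only [mem_filter, mem_range, filter_filter] at hu hv
          by_cases h0 : u ≤ i0 <;> by_cases h1 : v ≤ i0
          · rw [if_pos h0, if_pos h1] at hee; omega
          · rw [if_pos h0, if_neg h1] at hee; omega
          · rw [if_neg h0, if_pos h1] at hee; omega
          · rw [if_neg h0, if_neg h1] at hee; exact hee
        · intro v hv
          simp only [mem_filter, mem_Ioc] at hv
          obtain ⟨⟨hv1, hv2⟩, hgv, hgprev⟩ := hv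
          by_cases h2t : v < 2*t
          · refine ⟨v, ?_, by rw [if_neg (by omega)]⟩
            rw [hRdef]
            simp only [mem_filter, mem_range, filter_filter]
            refine ⟨by omega, ⟨hgv, ?_⟩, ?_⟩
            · intro hc
              exact hgprev ((hgp1 v (by omega)).1 hc)
            · unfold inArcN
              rw [if_neg (by omega)]
              omega
          · refine ⟨v - 2*t, ?_, by rw [if_pos (by omega), show v - 2*t + 2*t = v by omega]⟩
            rw [hRdef]
            simp only [mem_filter, mem_range, filter_filter]
            refine ⟨by omega, ⟨?_, ?_⟩, ?_⟩
            · rw [← hgp (v - 2*t), show v - 2*t + 2*t = v by omega]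
              exact hgv
            · rw [show v - 2*t + 2*t - 1 = v - 1 by omega]
              exact hgprev
            · unfold inArcN
              rw [if_neg (by omega)]
              omega
      rw [hccc]
      have harcq := arcQ hg (i0 + t) ?_
      · rw [show i0 + t + t = i0 + 2*t by ring] at harcq
        rw [← harcq, hrcEq]
      · rw [show i0 + t + t = i0 + 2*t by ring, hgp i0]
        exact hgi0'
  have hg2t1 : ∀ u, u < 2*t → (g (u + 2*t - 1) ↔ g (if u = 0 then 2*t - 1 else u - 1)) := by
    intro u hu
    by_cases h0 : u = 0
    · subst h0
      rw [if_pos rfl, Nat.zero_add]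
    · rw [if_neg h0]
      exact hgp1 u (by omega)
  have hminimal : ∀ u, u < 2*t → (g u ∧ ¬ g (u + 2*t - 1)) → ∀ v, v < 2*t →
      (∀ p : Fin t, inArcN t (i0f p) v → inArcN t (i0f p) u) → v = u := by
    rintro u hu ⟨hgu, hgprev⟩ v hv himp
    by_contra hne
    obtain ⟨i01, hi01⟩ : ∃ x, x = (if u = 0 then 2*t - 1 else u - 1) := ⟨_, rfl⟩
    obtain ⟨i02, hi02⟩ : ∃ x, x = (if u < t then u + t else u - t) := ⟨_, rfl⟩
    have hgi01 : ¬ g i01 := by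
      rw [hi01, ← hg2t1 u hu]
      exact hgprev
    have hgi02 : ¬ g i02 := by
      rw [hi02]
      by_cases hcs : u < t
      · rw [if_pos hcs, hg u]
        exact fun hc => hc hgu
      · rw [if_neg hcs]
        have h2 := hg (u - t)
        rw [show u - t + t = u by omega] at h2
        exact fun hc => (h2.1 hgu) hc
    have hlt01 : i01 < 2*t := by rw [hi01]; split_ifs <;> omega
    have hlt02 : i02 < 2*t := by rw [hi02]; split_ifs <;> omega
    obtain ⟨p1, hp1⟩ := hi0surj i01 hlt01 hgi01
    obtain ⟨p2, hp2⟩ := hi0surj i02 hlt02 hgi02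
    have hself := arc_self t u i01 i02 ht hu hi01 hi02
    rcases arc_union t u i01 i02 ht hu hi01 hi02 v hv hne with hin | hin
    · have h3 := himp p1 (by rw [hp1]; exact hin)
      rw [hp1] at h3
      exact hself.1 h3
    · have h3 := himp p2 (by rw [hp2]; exact hin)
      rw [hp2] at h3
      exact hself.2 h3
  have hnotmin : ∀ u, u < 2*t → ¬ (g u ∧ ¬ g (u + 2*t - 1)) → ∃ v, v < 2*t ∧ v ≠ u ∧
      (∀ p : Fin t, inArcN t (i0f p) v → inArcN t (i0f p) u) := by
    intro u hu hnr
    by_cases hgprev : g (u + 2*t - 1)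
    · refine ⟨if u = 0 then 2*t - 1 else u - 1, by split_ifs <;> omega, by split_ifs <;> omega, ?_⟩
      intro p harc
      have hgv : g (if u = 0 then 2*t-1 else u-1) := (hg2t1 u hu).1 hgprev
      have hne : (if u = 0 then 2*t-1 else u-1) ≠ i0f p := fun hc => (hgi0 p) (hc ▸ hgv)
      exact arc_step1 t u _ (i0f p) ht hu rfl (hi0lt p) hne harc
    · have hgu : ¬ g u := by tauto
      refine ⟨if u = 2*t-1 then 0 else u+1, by split_ifs <;> omega, by split_ifs <;> omega, ?_⟩
      intro p harc
      refine arc_step2 t u _ (i0f p) ht hu rfl (hi0lt p) ?_ ?_ harc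
      · intro _ hc
        rw [hc] at hgu
        exact hgu ((hg (i0f p)).2 (hgi0 p))
      · intro _ hc
        have h2 := hg (i0f p - t)
        rw [show i0f p - t + t = i0f p by omega] at h2
        have h3 : g (i0f p - t) := by
          by_contra hcc
          exact hgi0 p (h2.2 hcc)
        rw [hc] at hgu
        exact hgu h3
  -- minV is the image of the rises
  have hminV : minV = Rises.image w := by
    rw [hmin]
    ext x
    simp only [mem_filter, Finset.mem_image]
    constructor
    · rintro ⟨hxV, hcond⟩
      rw [hVw] at hxV
      obtain ⟨u, hu, hux⟩ := Finset.mem_image.1 hxV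
      rw [mem_range] at hu
      refine ⟨u, ?_, hux⟩
      rw [hRdef]
      simp only [mem_filter, mem_range]
      refine ⟨hu, ?_⟩
      by_contra hnr
      obtain ⟨v, hv, hvne, himp⟩ := hnotmin u hu hnr
      have hPV : w v ∈ V := by
        rw [hVw]
        exact Finset.mem_image_of_mem w (by rw [mem_range]; exact hv)
      have hsub2 : (Finset.univ.filter (fun j => B j ≠ (w v) j))
          ⊆ (Finset.univ.filter (fun j => B j ≠ x j)) := by
        rw [← hux]
        exact (hsubset u v).2 himp
      have heq2 := hcond (w v) hPV hsub2
      exact hvne (hwinj v hv u hu (by rw [heq2, ← hux]))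
    · rintro ⟨u, huR, hux⟩
      rw [hRdef] at huR
      simp only [mem_filter, mem_range] at huR
      obtain ⟨hu, hrise⟩ := huR
      refine ⟨by rw [hVw, ← hux]; exact Finset.mem_image_of_mem w (by rw [mem_range]; exact hu), ?_⟩
      intro P hPV hsub
      rw [hVw] at hPV
      obtain ⟨v, hv, hvP⟩ := Finset.mem_image.1 hPV
      rw [mem_range] at hv
      rw [← hvP, ← hux] at hsub
      have himp := (hsubset u v).1 hsub
      have hveq := hminimal u hu hrise v hv himp
      rw [← hvP, ← hux, hveq]
  constructor
  · -- part 1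
    rw [hminV]
    rw [Finset.sum_image (fun x hx y hy hxy =>
      hwinj x (mem_range.1 (hRsub hx)) y (mem_range.1 (hRsub hy)) hxy)]
    apply (hsum Rises).2
    intro p
    have h1 := hcard2 p
    have h2 := hcard1
    omega
  · -- part 2
    intro S hS hsumS
    set PS : Finset ℕ := (Finset.range (2*t)).filter (fun u => w u ∈ S) with hPSdef
    have hSP : S = PS.image w := by
      ext x
      constructor
      · intro hx
        have hxV := hS hx
        rw [hVw] at hxV
        obtain ⟨u, hu, hux⟩ := Finset.mem_image.1 hxV
        refine Finset.mem_image.2 ⟨u, ?_, hux⟩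
        rw [hPSdef]
        simp only [mem_filter]
        exact ⟨hu, by rw [hux]; exact hx⟩
      · intro hx
        obtain ⟨u, hu, hux⟩ := Finset.mem_image.1 hx
        rw [hPSdef] at hu
        simp only [mem_filter] at hu
        rw [← hux]
        exact hu.2
    have hPSlt : ∀ v ∈ PS, v < 2*t := by
      intro v hv
      rw [hPSdef] at hv
      simp only [mem_filter, mem_range] at hv
      exact hv.1
    have hinjPS : ∀ x ∈ PS, ∀ y ∈ PS, w x = w y → x = y := by
      intro x hx y hy
      exact hwinj x (hPSlt x hx) y (hPSlt y hy)
    have hsum2 : (∑ u ∈ PS, w u) = B := by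
      rw [hSP] at hsumS
      rwa [Finset.sum_image hinjPS] at hsumS
    have hcnt := (hsum PS).1 hsum2
    intro x hx
    rw [hminV] at hx
    obtain ⟨u, huR, hux⟩ := Finset.mem_image.1 hx
    rw [hRdef] at huR
    simp only [mem_filter, mem_range] at huR
    obtain ⟨hu, hgu, hgprev⟩ := huR
    by_cases huPS : u ∈ PS
    · rw [hSP]
      exact Finset.mem_image.2 ⟨u, huPS, hux⟩
    exfalso
    obtain ⟨i01, hi01⟩ : ∃ y, y = (if u = 0 then 2*t - 1 else u - 1) := ⟨_, rfl⟩
    obtain ⟨i02, hi02⟩ : ∃ y, y = (if u < t then u + t else u - t) := ⟨_, rfl⟩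
    have hgi01 : ¬ g i01 := by
      rw [hi01, ← hg2t1 u hu]
      exact hgprev
    have hgi02 : ¬ g i02 := by
      rw [hi02]
      by_cases hcs : u < t
      · rw [if_pos hcs, hg u]
        exact fun hc => hc hgu
      · rw [if_neg hcs]
        have h2 := hg (u - t)
        rw [show u - t + t = u by omega] at h2
        exact fun hc => (h2.1 hgu) hc
    have hlt01 : i01 < 2*t := by rw [hi01]; split_ifs <;> omega
    have hlt02 : i02 < 2*t := by rw [hi02]; split_ifs <;> omega
    obtain ⟨p1, hp1⟩ := hi0surj i01 hlt01 hgi01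
    obtain ⟨p2, hp2⟩ := hi0surj i02 hlt02 hgi02
    have hc1 := hcnt p1
    rw [hp1] at hc1
    have hc2 := hcnt p2
    rw [hp2] at hc2
    have hcup : (PS.filter (fun v => inArcN t i01 v ∨ inArcN t i02 v)) = PS.erase u := by
      ext v
      simp only [mem_filter, Finset.mem_erase]
      constructor
      · rintro ⟨hvPS, hor⟩
        refine ⟨?_, hvPS⟩
        intro hc
        subst hc
        have hself := arc_self t v i01 i02 ht (hPSlt v hvPS) hi01 hi02
        tauto
      · rintro ⟨hvne, hvPS⟩
        exact ⟨hvPS, arc_union t u i01 i02 ht hu hi01 hi02 v (hPSlt v hvPS) hvne⟩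
    have hcap : (PS.filter (fun v => inArcN t i01 v ∧ inArcN t i02 v))
        = PS.filter (fun v => v = i02) := by
      ext v
      simp only [mem_filter]
      constructor
      · rintro ⟨hvPS, hand⟩
        exact ⟨hvPS, (arc_inter t u i01 i02 ht hu hi01 hi02 v (hPSlt v hvPS)).1 hand⟩
      · rintro ⟨hvPS, hveq⟩
        exact ⟨hvPS, (arc_inter t u i01 i02 ht hu hi01 hi02 v (hPSlt v hvPS)).2 hveq⟩
    have hkey : (PS.filter (fun v => inArcN t i01 v)).card + (PS.filter (fun v => inArcN t i02 v)).card
        = (PS.erase u).card + (PS.filter (fun v => v = i02)).card := by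
      rw [← hcup, ← hcap, Finset.filter_or, Finset.filter_and]
      exact (Finset.card_union_add_card_inter _ _).symm
    have herase : (PS.erase u).card = PS.card := by
      rw [Finset.erase_eq_of_notMem huPS]
    omega
end

section
/- With V(R) as above and base point T⁺ = (1,…,1), a vertex O ∈ V(R) is a minimal element of the subposet (V(R), ⪯_{T⁺}) if and only if for its two neighbors O', O'' on the symmetric cycle one has |O'⁻| = |O''⁻| = |O⁻| + 1, i.e., both neighbors have negative parts of cardinality one more than that of O. -/
open Finset

namespace Stmt10Aux

variable {t : ℕ} {D : ℤ → Fin t → ℝ} {l : Fin t → Fin t}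

lemma periodInt (hper : ∀ k : ℤ, D (k + 2 * t) = D k) :
    ∀ (q x : ℤ), D (x + 2 * t * q) = D x := by
  intro q
  induction q using Int.induction_on with
  | zero => simp
  | succ n ih =>
    intro x
    have h : x + 2*t*((n:ℤ)+1) = (x + 2*t*n) + 2*t := by ring
    rw [h, hper, ih]
  | pred n ih =>
    intro x
    have h := hper (x + 2*t*(-(n:ℤ)-1))
    have h1 : (x + 2*t*(-(n:ℤ)-1)) + 2*t = x + 2*t*(-(n:ℤ)) := by ring
    rw [h1] at h
    rw [← h, ih]

lemma perMod (hper : ∀ k : ℤ, D (k + 2 * t) = D k) (a b : ℤ)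
    (h : a % (2*t) = b % (2*t)) : D a = D b := by
  have ha := Int.emod_add_mul_ediv a (2*t)
  have hb := Int.emod_add_mul_ediv b (2*t)
  calc D a = D (a % (2*(t:ℤ)) + 2*t * (a / (2*t))) := by rw [ha]
    _ = D (a % (2*(t:ℤ))) := periodInt hper _ _
    _ = D (b % (2*(t:ℤ))) := by rw [h]
    _ = D (b % (2*(t:ℤ)) + 2*t*(b/(2*t))) := (periodInt hper _ _).symm
    _ = D b := by rw [hb]

def idx (ht : 0 < t) (m : ℤ) : Fin t := ⟨(m % t).toNat, by
  have h2 : m % t < t := Int.emod_lt_of_pos m (by exact_mod_cast ht)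
  omega⟩

lemma flipIff (ht : 0 < t) (hant : ∀ k : ℤ, D (k + t) = -(D k))
    (hstep : ∀ (k : Fin t) (j : Fin t), D (k : ℕ) j ≠ D ((k : ℕ) + 1) j ↔ j = l k)
    (m : ℤ) (j : Fin t) :
    D m j ≠ D (m + 1) j ↔ j = l (idx ht m) := by
  have flip_shift : ∀ x : ℤ, (D (x + t) j ≠ D (x + t + 1) j ↔ D x j ≠ D (x+1) j) := by
    intro x
    have h1 : D (x + t) j = -(D x j) := by rw [hant]; rfl
    have h2 : D (x + t + 1) j = -(D (x+1) j) := by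
      rw [show x + (t:ℤ) + 1 = (x+1) + t by ring, hant]; rfl
    rw [h1, h2]
    simp
  have flip_tper : ∀ q : ℤ, ∀ x : ℤ,
      (D (x + t*q) j ≠ D (x + t*q + 1) j ↔ D x j ≠ D (x+1) j) := by
    intro q
    induction q using Int.induction_on with
    | zero => simp
    | succ n ih =>
      intro x
      have h : x + (t:ℤ)*(n+1) = (x + t*n) + t := by ring
      rw [h, flip_shift]
      exact ih x
    | pred n ih =>
      intro x
      have h := flip_shift (x + (t:ℤ)*(-(n:ℤ)-1))
      have h1 : x + (t:ℤ)*(-(n:ℤ)-1) + t = x + t*(-(n:ℤ)) := by ring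
      rw [h1] at h
      rw [← h]
      exact ih x
  have hmod := Int.emod_add_mul_ediv m (t:ℤ)
  have h0 : 0 ≤ m % t := Int.emod_nonneg m (by exact_mod_cast ht.ne')
  have key : D m j ≠ D (m+1) j ↔ D (m % t) j ≠ D (m % t + 1) j := by
    conv_lhs => rw [show m = m % t + t * (m / t) by omega]
    exact flip_tper (m / t) (m % t)
  rw [key]
  have hcast : ((((idx ht m) : ℕ)) : ℤ) = m % t := by
    simp [idx]
    omega
  have := hstep (idx ht m) j
  rw [hcast] at this
  exact this

lemma arc (ht : 0 < t) (hant : ∀ k : ℤ, D (k + t) = -(D k))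
    (hstep : ∀ (k : Fin t) (j : Fin t), D (k : ℕ) j ≠ D ((k : ℕ) + 1) j ↔ j = l k)
    (hlinj : Function.Injective l) (m : ℤ) :
    ∀ d : ℕ, d < t → D (m + 1 + d) (l (idx ht m)) = D (m + 1) (l (idx ht m)) := by
  intro d
  induction d with
  | zero => simp
  | succ d ih =>
    intro hd
    set e := l (idx ht m) with he
    have hnf : D (m + 1 + d) e = D (m + 1 + d + 1) e := by
      by_contra hne
      have := (flipIff ht hant hstep (m + 1 + d) e).mp hne
      have hidx : idx ht m = idx ht (m + 1 + d) := hlinj (he ▸ this)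
      have hval : (m % t).toNat = ((m + 1 + d) % t).toNat := congrArg Fin.val hidx
      have h0 : 0 ≤ m % t := Int.emod_nonneg m (by exact_mod_cast ht.ne')
      have h0' : 0 ≤ (m + 1 + d) % t := Int.emod_nonneg _ (by exact_mod_cast ht.ne')
      have hmm : m % t = (m + 1 + d) % t := by omega
      have hsub := Int.emod_eq_emod_iff_emod_sub_eq_zero.mp hmm.symm
      rw [show m + 1 + (d:ℤ) - m = (d:ℤ)+1 by ring] at hsub
      rw [Int.emod_eq_of_lt (by positivity) (by exact_mod_cast hd)] at hsub
      omega
    have hgoal : m + 1 + ((d:ℤ)+1) = (m + 1 + d) + 1 := by ring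
    push_cast
    rw [hgoal, ← hnf]
    exact ih (by omega)


lemma stepDich (ht : 0 < t) (hsign : ∀ k j, D k j = -1 ∨ D k j = 1)
    (hant : ∀ k : ℤ, D (k + t) = -(D k))
    (hstep : ∀ (k : Fin t) (j : Fin t), D (k : ℕ) j ≠ D ((k : ℕ) + 1) j ↔ j = l k)
    (m : ℤ) :
    (D m (l (idx ht m)) = 1 ∧ D (m+1) (l (idx ht m)) = -1 ∧
      (univ.filter fun e => D (m+1) e = -1)
        = insert (l (idx ht m)) (univ.filter fun e => D m e = -1) ∧
      l (idx ht m) ∉ (univ.filter fun e => D m e = -1))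
  ∨ (D m (l (idx ht m)) = -1 ∧ D (m+1) (l (idx ht m)) = 1 ∧
      (univ.filter fun e => D (m+1) e = -1)
        = (univ.filter fun e => D m e = -1).erase (l (idx ht m))) := by
  set e := l (idx ht m) with he
  have hne : D m e ≠ D (m+1) e := (flipIff ht hant hstep m e).mpr he
  have heq : ∀ j : Fin t, j ≠ e → D m j = D (m+1) j := by
    intro j hj
    by_contra hc
    exact hj ((flipIff ht hant hstep m j).mp hc)
  rcases hsign m e with h | h
  · right
    have h1 : D (m+1) e = 1 := by rcases hsign (m+1) e with h' | h' <;> simp_all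
    refine ⟨h, h1, ?_⟩
    ext j
    simp only [mem_filter, mem_univ, true_and, mem_erase]
    by_cases hj : j = e
    · subst hj; rw [h1]; norm_num
    · rw [← heq j hj]; tauto
  · left
    have h1 : D (m+1) e = -1 := by rcases hsign (m+1) e with h' | h' <;> simp_all
    refine ⟨h, h1, ?_, ?_⟩
    · ext j
      simp only [mem_filter, mem_univ, true_and, mem_insert]
      by_cases hj : j = e
      · subst hj; rw [h1]; tauto
      · rw [← heq j hj]; tauto
    · simp only [mem_filter, mem_univ, true_and, h]
      norm_num

lemma memV (hper : ∀ k : ℤ, D (k + 2 * t) = D k) {V : Finset (Fin t → ℝ)}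
    (ht : 0 < t)
    (hV : V = (Finset.range (2 * t)).image fun k : ℕ => D k) (m : ℤ) : D m ∈ V := by
  have h2t : (0:ℤ) < 2*t := by positivity
  have h0 : 0 ≤ m % (2*(t:ℤ)) := Int.emod_nonneg m h2t.ne'
  have hlt : m % (2*(t:ℤ)) < 2*t := Int.emod_lt_of_pos m h2t
  set n := (m % (2*(t:ℤ))).toNat with hn
  have hcast : ((n:ℕ):ℤ) = m % (2*(t:ℤ)) := by omega
  have hD : D m = D (n:ℤ) := by
    apply perMod hper
    rw [hcast]
    exact (Int.emod_emod_of_dvd m dvd_rfl).symm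
  rw [hV]
  refine mem_image.mpr ⟨n, mem_range.mpr (by omega), ?_⟩
  exact hD.symm

end Stmt10Aux

theorem stmt_10 (t : ℕ) (ht : 2 ≤ t)
    (D : ℤ → Fin t → ℝ)
    (hsign : ∀ k j, D k j = -1 ∨ D k j = 1)
    (hper : ∀ k : ℤ, D (k + 2 * t) = D k)
    (hant : ∀ k : ℤ, D (k + t) = -(D k))
    (l : Fin t → Fin t) (hl : Function.Bijective l)
    (hstep : ∀ (k : Fin t) (j : Fin t), D (k : ℕ) j ≠ D ((k : ℕ) + 1) j ↔ j = l k)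
    (V : Finset (Fin t → ℝ))
    (hV : V = (Finset.range (2 * t)).image fun k : ℕ => D k) :
    ∀ k : ℤ,
      ((∀ P ∈ V,
          (Finset.univ.filter fun e => P e = -1)
              ⊆ (Finset.univ.filter fun e => D k e = -1) → P = D k) ↔
        ((Finset.univ.filter fun e => D (k - 1) e = -1).card
            = (Finset.univ.filter fun e => D k e = -1).card + 1 ∧
         (Finset.univ.filter fun e => D (k + 1) e = -1).card
            = (Finset.univ.filter fun e => D k e = -1).card + 1)) := by
  intro k
  have ht0 : 0 < t := by omega
  set e₂ := l (Stmt10Aux.idx ht0 k) with he₂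
  set e₁ := l (Stmt10Aux.idx ht0 (k-1)) with he₁
  have hdk := Stmt10Aux.stepDich ht0 hsign hant hstep k
  have hdk1 := Stmt10Aux.stepDich ht0 hsign hant hstep (k-1)
  rw [show k - 1 + 1 = k by ring] at hdk1
  rw [← he₂] at hdk
  rw [← he₁] at hdk1
  constructor
  · intro hmin
    constructor
    · rcases hdk1 with ⟨h1, h2, hset, hnot⟩ | ⟨h1, h2, hset⟩
      · exfalso
        have hsub : (univ.filter fun e => D (k-1) e = -1) ⊆ (univ.filter fun e => D k e = -1) := by
          rw [hset]; exact subset_insert _ _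
        have hEq := hmin (D (k-1)) (Stmt10Aux.memV hper ht0 hV (k-1)) hsub
        have hne : D (k-1) e₁ ≠ D k e₁ := by rw [h1, h2]; norm_num
        exact hne (by rw [hEq])
      · have hmem : e₁ ∈ (univ.filter fun e => D (k-1) e = -1) := by
          simp only [mem_filter, mem_univ, true_and]; exact h1
        rw [hset]
        exact (Finset.card_erase_add_one hmem).symm
    · rcases hdk with ⟨h1, h2, hset, hnot⟩ | ⟨h1, h2, hset⟩
      · rw [hset, Finset.card_insert_of_notMem hnot]
      · exfalso
        have hsub : (univ.filter fun e => D (k+1) e = -1) ⊆ (univ.filter fun e => D k e = -1) := by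
          rw [hset]; exact erase_subset _ _
        have hEq := hmin (D (k+1)) (Stmt10Aux.memV hper ht0 hV (k+1)) hsub
        have hne : D (k+1) e₂ ≠ D k e₂ := by rw [h1, h2]; norm_num
        exact hne (by rw [hEq])
  · rintro ⟨hL, hR⟩ P hP hsub
    have hk1 : D (k-1) e₁ = -1 ∧ D k e₁ = 1 := by
      rcases hdk1 with ⟨h1, h2, hset, hnot⟩ | ⟨h1, h2, hset⟩
      · exfalso
        rw [hset, Finset.card_insert_of_notMem hnot] at hL
        omega
      · exact ⟨h1, h2⟩
    have hk2 : D k e₂ = 1 ∧ D (k+1) e₂ = -1 := by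
      rcases hdk with ⟨h1, h2, hset, hnot⟩ | ⟨h1, h2, hset⟩
      · exact ⟨h1, h2⟩
      · exfalso
        have hmem : e₂ ∈ (univ.filter fun e => D k e = -1) := by
          simp only [mem_filter, mem_univ, true_and]; exact h1
        rw [hset] at hR
        have := Finset.card_erase_add_one hmem
        omega
    have arcR : ∀ d : ℕ, d < t → D (k + 1 + d) e₂ = -1 := by
      intro d hd
      rw [he₂, Stmt10Aux.arc ht0 hant hstep hl.1 k d hd, ← he₂]
      exact hk2.2
    have arcL : ∀ d : ℕ, d < t → D (k - 1 - t + 1 + d) e₁ = -1 := by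
      have hidx : Stmt10Aux.idx ht0 (k - 1 - t) = Stmt10Aux.idx ht0 (k-1) := by
        apply Fin.ext
        show ((k-1-(t:ℤ)) % t).toNat = ((k-1) % t).toNat
        rw [show k-1-(t:ℤ) = (k-1) + (-1)*t by ring, Int.add_mul_emod_self_right]
      have harc := Stmt10Aux.arc ht0 hant hstep hl.1 (k - 1 - t)
      rw [hidx, ← he₁] at harc
      have hc : (((t-1:ℕ)):ℤ) = (t:ℤ) - 1 := by omega
      have hlast := harc (t-1) (by omega)
      rw [hc, show k - 1 - (t:ℤ) + 1 + ((t:ℤ)-1) = k - 1 by ring] at hlast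
      have hval : D (k - 1 - (t:ℤ) + 1) e₁ = -1 := by rw [← hlast]; exact hk1.1
      intro d hd
      rw [harc d hd]
      exact hval
    have key : ∀ m : ℤ,
        (univ.filter fun e => D m e = -1) ⊆ (univ.filter fun e => D k e = -1) →
          D m = D k := by
      intro m hsubm
      obtain ⟨d, hd0, hdlt, hmd⟩ : ∃ d : ℤ, 0 ≤ d ∧ d < 2*(t:ℤ) ∧ D (k - t + d) = D m := by
        refine ⟨(m - (k - t)) % (2*t), Int.emod_nonneg _ (by positivity),
          Int.emod_lt_of_pos _ (by positivity), ?_⟩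
        apply Stmt10Aux.perMod hper
        rw [Int.emod_eq_emod_iff_emod_sub_eq_zero,
            show k - (t:ℤ) + ((m - (k - t)) % (2*t)) - m
              = ((m - (k-t)) % (2*(t:ℤ))) - (m - (k-t)) by ring,
            Int.sub_emod, Int.emod_emod_of_dvd _ dvd_rfl, sub_self, Int.zero_emod]
      rcases lt_trichotomy d (t:ℤ) with hcase | hcase | hcase
      · exfalso
        have hv : D (k - t + d) e₁ = -1 := by
          have h := arcL d.toNat (by omega)
          rw [Int.toNat_of_nonneg hd0,
            show k - 1 - (t:ℤ) + 1 + d = k - t + d by ring] at h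
          exact h
        rw [hmd] at hv
        have hmemm : e₁ ∈ (univ.filter fun e => D m e = -1) := by
          simp only [mem_filter, mem_univ, true_and]; exact hv
        have := (mem_filter.mp (hsubm hmemm)).2
        rw [hk1.2] at this
        norm_num at this
      · rw [hcase, show k - (t:ℤ) + t = k by ring] at hmd
        exact hmd.symm
      · exfalso
        have hv : D (k - t + d) e₂ = -1 := by
          have h := arcR (d - t - 1).toNat (by omega)
          rw [Int.toNat_of_nonneg (by omega : (0:ℤ) ≤ d - t - 1),
            show k + 1 + ((d:ℤ) - t - 1) = k - t + d by ring] at h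
          exact h
        rw [hmd] at hv
        have hmemm : e₂ ∈ (univ.filter fun e => D m e = -1) := by
          simp only [mem_filter, mem_univ, true_and]; exact hv
        have := (mem_filter.mp (hsubm hmemm)).2
        rw [hk2.1] at this
        norm_num at this
    rw [hV] at hP
    obtain ⟨n, hn, hPn⟩ := mem_image.mp hP
    rw [← hPn] at hsub ⊢
    exact key (n:ℤ) hsub
end

section
/- For any T ∈ {-1,1}^t and any symmetric cycle vertex set V(R) as above, the decomposition set satisfies Q(T,R) = {flip_{T⁻}(Q) : Q ∈ max⁺(flip_{T⁻}(V(R)))}, where flip_A negates coordinates in A; in particular T = Σ over this set. -/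
open Finset

namespace Stmt12

/-- A symmetric cycle sampled on ℕ. -/
structure Cyc (t : ℕ) where
  Z : ℕ → Fin t → ℝ
  l : Fin t → Fin t
  ht : 0 < t
  hbij : Function.Bijective l
  hsign : ∀ k j, Z k j = -1 ∨ Z k j = 1
  hshift : ∀ k, Z (k + t) = -(Z k)
  hstep : ∀ (k : ℕ) (j : Fin t), Z (k + 1) j ≠ Z k j ↔ j = l ⟨k % t, Nat.mod_lt k ht⟩

namespace Cyc

variable {t : ℕ} (C : Cyc t)

lemma hper (k : ℕ) : C.Z (k + 2 * t) = C.Z k := by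
  have h : k + 2 * t = k + t + t := by ring
  rw [h, C.hshift, C.hshift, neg_neg]

lemma zmod (k : ℕ) : C.Z k = C.Z (k % (2 * t)) := by
  conv_lhs => rw [← Nat.mod_add_div k (2 * t)]
  generalize k / (2 * t) = q
  induction q with
  | zero => simp
  | succ q ih =>
      have h : k % (2 * t) + 2 * t * (q + 1) = k % (2 * t) + 2 * t * q + 2 * t := by ring
      rw [h, C.hper, ih]

lemma congr_mod {k k' : ℕ} (h : k % (2 * t) = k' % (2 * t)) : C.Z k = C.Z k' := by
  rw [C.zmod k, C.zmod k', h]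

lemma sign_ne_zero (k : ℕ) (j : Fin t) : C.Z k j ≠ 0 := by
  rcases C.hsign k j with h | h <;> rw [h] <;> norm_num

lemma neg_of_ne {k k' : ℕ} {j : Fin t} (h : C.Z k j ≠ C.Z k' j) :
    C.Z k j = -C.Z k' j := by
  rcases C.hsign k j with h1 | h1 <;> rcases C.hsign k' j with h2 | h2 <;>
    simp [h1, h2] at h ⊢

noncomputable def linv : Fin t → Fin t := Function.surjInv C.hbij.2

lemma l_linv (j : Fin t) : C.l (C.linv j) = j := Function.surjInv_eq C.hbij.2 j

lemma linv_l (x : Fin t) : C.linv (C.l x) = x := C.hbij.1 (by rw [C.l_linv])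

/-- if none of the steps flips coordinate j, the value stays constant -/
lemma const (j : Fin t) (k : ℕ) :
    ∀ i : ℕ, (∀ d < i, (k + d) % t ≠ (C.linv j : ℕ)) → C.Z (k + i) j = C.Z k j := by
  intro i
  induction i with
  | zero => simp
  | succ i ih =>
      intro h
      have h1 : C.Z (k + i + 1) j = C.Z (k + i) j := by
        by_contra hne
        have h2 := (C.hstep (k + i) j).mp hne
        apply h i (by omega)
        have h3 := congrArg C.linv h2
        rw [C.linv_l] at h3
        rw [h3]
      have h3 : k + (i + 1) = k + i + 1 := by omega
      rw [h3, h1, ih (fun d hd => h d (by omega))]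

end Cyc


/-- helper: congruence mod t lifts to two cases mod 2t -/
lemma mod2t_cases {t : ℕ} (ht : 0 < t) (a b : ℕ) (h : a % t = b % t) :
    a % (2 * t) = b % (2 * t) ∨ a % (2 * t) = (b + t) % (2 * t) := by
  have h2t : 0 < 2 * t := by omega
  set A := a % (2 * t) with hA
  set B := b % (2 * t) with hB
  have hAlt : A < 2 * t := Nat.mod_lt _ h2t
  have hBlt : B < 2 * t := Nat.mod_lt _ h2t
  have hAm : A % t = a % t := by rw [hA, Nat.mod_mod_of_dvd _ ⟨2, by ring⟩]
  have hBm : B % t = b % t := by rw [hB, Nat.mod_mod_of_dvd _ ⟨2, by ring⟩]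
  have hbt : (b + t) % (2 * t) = (B + t) % (2 * t) := by
    conv_lhs => rw [← Nat.mod_add_mod]
  have key : A % t = B % t := by rw [hAm, hBm, h]
  have hqa := Nat.div_add_mod A t
  have hqb := Nat.div_add_mod B t
  have hqa2 : A / t < 2 := Nat.div_lt_of_lt_mul (by omega)
  have hqb2 : B / t < 2 := Nat.div_lt_of_lt_mul (by omega)
  have hra : A % t < t := Nat.mod_lt _ ht
  have hrb : B % t < t := Nat.mod_lt _ ht
  rcases Nat.le_one_iff_eq_zero_or_eq_one.mp (show A / t ≤ 1 by omega) with ha | ha <;> rcases Nat.le_one_iff_eq_zero_or_eq_one.mp (show B / t ≤ 1 by omega) with hb | hb <;>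
      rw [ha] at hqa <;> rw [hb] at hqb <;>
      simp only [Nat.mul_zero, Nat.mul_one, Nat.zero_add] at hqa hqb
  · left; omega
  · right
    rw [hbt, show B + t = B % t + 2 * t by omega, Nat.add_mod_right,
      Nat.mod_eq_of_lt (by omega)]
    omega
  · right
    rw [hbt, Nat.mod_eq_of_lt (by omega)]
    omega
  · left; omega

namespace Cyc
variable {t : ℕ} (C : Cyc t)

noncomputable def mj (j : Fin t) : ℕ := (C.linv j : ℕ)

lemma mj_lt (j : Fin t) : C.mj j < t := (C.linv j).isLt

noncomputable def b (j : Fin t) : ℕ :=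
  if C.Z (C.mj j + 1) j = 1 then C.mj j + 1 else C.mj j + 1 + t

lemma plateau (j : Fin t) : ∀ i < t, C.Z (C.mj j + 1 + i) j = C.Z (C.mj j + 1) j := by
  intro i hi
  apply C.const
  intro d hd
  show (C.mj j + 1 + d) % t ≠ C.mj j
  have hmj := C.mj_lt j
  by_cases h : C.mj j + 1 + d < t
  · rw [Nat.mod_eq_of_lt h]; omega
  · have h1 : C.mj j + 1 + d = (C.mj j + 1 + d - t) + t := by omega
    rw [h1, Nat.add_mod_right, Nat.mod_eq_of_lt (by omega)]
    omega

lemma arc1 (j : Fin t) : ∀ i < t, C.Z (C.b j + i) j = 1 := by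
  intro i hi
  unfold b
  split_ifs with h
  · rw [C.plateau j i hi, h]
  · have h1 : C.mj j + 1 + t + i = (C.mj j + 1 + i) + t := by omega
    rw [h1]
    have h2 := congrFun (C.hshift (C.mj j + 1 + i)) j
    rw [h2, Pi.neg_apply, C.plateau j i hi]
    rcases C.hsign (C.mj j + 1) j with h3 | h3
    · rw [h3]; norm_num
    · exact absurd h3 h

lemma arc2 (j : Fin t) : ∀ i < t, C.Z (C.b j + t + i) j = -1 := by
  intro i hi
  have h1 : C.b j + t + i = (C.b j + i) + t := by omega
  rw [h1]
  have h2 := congrFun (C.hshift (C.b j + i)) j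
  rw [h2, Pi.neg_apply, C.arc1 j i hi]

lemma arc1' (j : Fin t) (k i : ℕ) (hi : i < t)
    (h : k % (2 * t) = (C.b j + i) % (2 * t)) : C.Z k j = 1 := by
  rw [congrFun (C.congr_mod h) j]; exact C.arc1 j i hi

lemma arc2' (j : Fin t) (k i : ℕ) (hi : i < t)
    (h : k % (2 * t) = (C.b j + t + i) % (2 * t)) : C.Z k j = -1 := by
  rw [congrFun (C.congr_mod h) j]; exact C.arc2 j i hi

lemma mem_arc (j : Fin t) (k : ℕ) (h : C.Z k j = 1) :
    ∃ i < t, k % (2 * t) = (C.b j + i) % (2 * t) := by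
  have ht := C.ht
  have h2t : 0 < 2 * t := by omega
  set x := k % (2 * t) with hx
  set y := C.b j % (2 * t) with hy
  have hxlt : x < 2 * t := Nat.mod_lt _ h2t
  have hylt : y < 2 * t := Nat.mod_lt _ h2t
  set i1 := (x + 2 * t - y) % (2 * t) with hi1
  have hi1lt : i1 < 2 * t := Nat.mod_lt _ h2t
  have hcong : (C.b j + i1) % (2 * t) = x := by
    have e1 : (C.b j + i1) % (2 * t) = (y + (x + 2 * t - y)) % (2 * t) := by
      rw [hi1, Nat.add_mod_mod, hy, Nat.mod_add_mod]
    rw [e1, show y + (x + 2 * t - y) = x + 2 * t by omega, Nat.add_mod_right,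
      Nat.mod_eq_of_lt hxlt]
  by_cases hc : i1 < t
  · exact ⟨i1, hc, hcong.symm⟩
  · exfalso
    have h2 : C.Z k j = -1 := by
      apply C.arc2' j k (i1 - t) (by omega)
      rw [show C.b j + t + (i1 - t) = C.b j + i1 by omega, hcong]
    rw [h] at h2; norm_num at h2

lemma b_mod_t (j : Fin t) : C.b j % t = (C.mj j + 1) % t := by
  unfold b
  split_ifs
  · rfl
  · exact Nat.add_mod_right _ _

lemma eq_b (j : Fin t) (k : ℕ) (hk : k % t = (C.mj j + 1) % t) (h : C.Z k j = 1) :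
    k % (2 * t) = C.b j % (2 * t) := by
  have h1 : k % t = C.b j % t := by rw [hk, C.b_mod_t]
  rcases mod2t_cases C.ht k (C.b j) h1 with h2 | h2
  · exact h2
  · exfalso
    have h3 : C.Z k j = -1 := by
      apply C.arc2' j k 0 C.ht
      rw [h2, Nat.add_zero]
    rw [h] at h3; norm_num at h3

end Cyc

namespace Cyc
variable {t : ℕ} (C : Cyc t)

noncomputable def jc (k : ℕ) : Fin t := C.l ⟨(k + (t - 1)) % t, Nat.mod_lt _ C.ht⟩

lemma jc_add_t (k : ℕ) : C.jc (k + t) = C.jc k := by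
  unfold jc
  congr 1
  ext
  show (k + t + (t - 1)) % t = (k + (t - 1)) % t
  rw [show k + t + (t - 1) = (k + (t - 1)) + t by omega, Nat.add_mod_right]

lemma mj_jc (k : ℕ) : C.mj (C.jc k) = (k + (t - 1)) % t := by
  unfold jc mj
  rw [C.linv_l]

/-- a "gain" position k is congruent to b (jc k) mod 2t -/
lemma gain_eq_b (k : ℕ) (h : C.Z k (C.jc k) = 1) :
    k % (2 * t) = C.b (C.jc k) % (2 * t) := by
  apply C.eq_b _ _ _ h
  rw [C.mj_jc, Nat.mod_add_mod, show k + (t - 1) + 1 = k + t by have := C.ht; omega,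
    Nat.add_mod_right]

/-- a "loss" position k is congruent to b (jc k) + t mod 2t -/
lemma loss_eq_b (k : ℕ) (h : C.Z k (C.jc k) ≠ 1) :
    k % (2 * t) = (C.b (C.jc k) + t) % (2 * t) := by
  have h1 : k % t = C.b (C.jc k) % t := by
    rw [C.b_mod_t, C.mj_jc, Nat.mod_add_mod,
      show k + (t - 1) + 1 = k + t by have := C.ht; omega, Nat.add_mod_right]
  rcases mod2t_cases C.ht k (C.b (C.jc k)) h1 with h2 | h2
  · exfalso
    exact h (C.arc1' _ k 0 C.ht (by rw [h2, Nat.add_zero]))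
  · exact h2

def locMax (k : ℕ) : Prop := C.Z k (C.jc k) = 1 ∧ C.Z (k + 1) (C.jc (k + 1)) ≠ 1

lemma antipodal {k : ℕ} (h : C.locMax k) : ¬C.locMax (k + t) := by
  intro h2
  have h3 : C.Z (k + t) (C.jc (k + t)) = 1 := h2.1
  rw [C.jc_add_t, congrFun (C.hshift k) (C.jc k), Pi.neg_apply] at h3
  rw [h.1] at h3
  norm_num at h3

/-- Claim A: inclusion-maximality of the positive part is equivalent to being a local max -/
lemma maxpos_iff (k : ℕ) (hk : k < 2 * t) :
    (∀ P ∈ (range (2 * t)).image C.Z,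
        ((univ : Finset (Fin t)).filter fun e => C.Z k e = 1) ⊆
          (univ.filter fun e => P e = 1) →
        ((univ : Finset (Fin t)).filter fun e => C.Z k e = 1) =
          (univ.filter fun e => P e = 1)) ↔ C.locMax k := by
  classical
  have ht := C.ht
  constructor
  · -- not locMax → not maximal
    intro hcond
    by_contra hloc
    unfold locMax at hloc
    push_neg at hloc
    by_cases hA : C.Z k (C.jc k) = 1
    · -- then Z (k+1) (jc (k+1)) = 1 : the next vertex dominates strictly
      have hB := hloc hA
      -- step k → k+1 flips exactly jc (k+1)
      have hjc : C.jc (k + 1) = C.l ⟨k % t, Nat.mod_lt k C.ht⟩ := by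
        unfold jc
        congr 1
        ext
        show (k + 1 + (t - 1)) % t = k % t
        rw [show k + 1 + (t - 1) = k + t by omega, Nat.add_mod_right]
      have hflip : ∀ j : Fin t, j ≠ C.jc (k + 1) → C.Z (k + 1) j = C.Z k j := by
        intro j hj
        by_contra hne
        exact hj (by rw [hjc]; exact (C.hstep k j).mp hne)
      have hdiff : C.Z k (C.jc (k + 1)) ≠ C.Z (k + 1) (C.jc (k + 1)) := by
        intro he
        have := (C.hstep k (C.jc (k + 1))).mpr (by rw [hjc])
        exact this he.symm
      have hP : C.Z (k + 1) ∈ (range (2 * t)).image C.Z := by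
        refine mem_image.mpr ⟨(k + 1) % (2 * t), mem_range.mpr (Nat.mod_lt _ (by omega)), ?_⟩
        exact (C.zmod (k + 1)).symm
      have hsub : ((univ : Finset (Fin t)).filter fun e => C.Z k e = 1) ⊆
          (univ.filter fun e => C.Z (k + 1) e = 1) := by
        intro j hj
        rw [mem_filter] at hj ⊢
        refine ⟨mem_univ _, ?_⟩
        by_cases hje : j = C.jc (k + 1)
        · rw [hje]; exact hB
        · rw [hflip j hje]; exact hj.2
      have heq := hcond _ hP hsub
      have hmem : C.jc (k + 1) ∈ (univ : Finset (Fin t)).filter fun e => C.Z (k + 1) e = 1 := by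
        rw [mem_filter]; exact ⟨mem_univ _, hB⟩
      rw [← heq, mem_filter] at hmem
      rw [hB] at hdiff
      exact hdiff hmem.2
    · -- then the previous vertex dominates strictly
      set k' := k + (2 * t - 1) with hk'
      have hkk : k' + 1 = k + 2 * t := by omega
      have hZk1 : C.Z (k' + 1) = C.Z k := by rw [hkk]; exact C.hper k
      have hjc : C.jc k = C.l ⟨k' % t, Nat.mod_lt k' C.ht⟩ := by
        unfold jc
        congr 1
        ext
        show (k + (t - 1)) % t = k' % t
        rw [show k' = (k + (t - 1)) + t by omega, Nat.add_mod_right]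
      have hflip : ∀ j : Fin t, j ≠ C.jc k → C.Z k' j = C.Z k j := by
        intro j hj
        by_contra hne
        apply hj
        rw [hjc]
        refine (C.hstep k' j).mp ?_
        rw [hZk1]
        exact fun he => hne he.symm
      have hdiff : C.Z k (C.jc k) ≠ C.Z k' (C.jc k) := by
        intro he
        have h2 := (C.hstep k' (C.jc k)).mpr (by rw [hjc])
        rw [hZk1] at h2
        exact h2 he
      have hup : C.Z k' (C.jc k) = 1 := by
        rcases C.hsign k' (C.jc k) with h1 | h1
        · exfalso
          apply hdiff
          rcases C.hsign k (C.jc k) with h2 | h2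
          · rw [h1, h2]
          · exact absurd h2 hA
        · exact h1
      have hP : C.Z k' ∈ (range (2 * t)).image C.Z := by
        refine mem_image.mpr ⟨k' % (2 * t), mem_range.mpr (Nat.mod_lt _ (by omega)), ?_⟩
        exact (C.zmod k').symm
      have hsub : ((univ : Finset (Fin t)).filter fun e => C.Z k e = 1) ⊆
          (univ.filter fun e => C.Z k' e = 1) := by
        intro j hj
        rw [mem_filter] at hj ⊢
        refine ⟨mem_univ _, ?_⟩
        by_cases hje : j = C.jc k
        · exfalso; rw [hje] at hj; exact hA hj.2
        · rw [hflip j hje]; exact hj.2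
      have heq := hcond _ hP hsub
      have hmem : C.jc k ∈ (univ : Finset (Fin t)).filter fun e => C.Z k' e = 1 := by
        rw [mem_filter]; exact ⟨mem_univ _, hup⟩
      rw [← heq, mem_filter] at hmem
      exact hA hmem.2
  · -- locMax → maximal
    rintro ⟨h1, h2⟩ P hP hsub
    obtain ⟨m, hm, rfl⟩ := mem_image.mp hP
    rw [mem_range] at hm
    -- k is congruent to b j0
    have hb0 : k % (2 * t) = C.b (C.jc k) % (2 * t) := C.gain_eq_b k h1
    -- k+1 is congruent to b j1 + t, so k ≡ b j1 + (t-1)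
    have hb1 : (k + 1) % (2 * t) = (C.b (C.jc (k + 1)) + t) % (2 * t) := C.loss_eq_b (k + 1) h2
    have hb1' : k % (2 * t) = (C.b (C.jc (k + 1)) + (t - 1)) % (2 * t) := by
      have h3 : (k + 1 + (2 * t - 1)) % (2 * t) =
          (C.b (C.jc (k + 1)) + t + (2 * t - 1)) % (2 * t) := Nat.ModEq.add_right _ hb1
      rw [show k + 1 + (2 * t - 1) = k + 2 * t by omega, Nat.add_mod_right,
        show C.b (C.jc (k + 1)) + t + (2 * t - 1) = C.b (C.jc (k + 1)) + (t - 1) + 2 * t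
          by omega, Nat.add_mod_right] at h3
      exact h3
    -- m is in the positive arc of jc k
    have hm0 : C.Z m (C.jc k) = 1 := by
      have h3 : C.jc k ∈ (univ : Finset (Fin t)).filter fun e => C.Z m e = 1 :=
        hsub (by rw [mem_filter]; exact ⟨mem_univ _, h1⟩)
      exact (mem_filter.mp h3).2
    obtain ⟨i, hi, hmi⟩ := C.mem_arc (C.jc k) m hm0
    -- m is in the positive arc of jc (k+1)
    have hk1 : C.Z k (C.jc (k + 1)) = 1 :=
      C.arc1' (C.jc (k + 1)) k (t - 1) (by omega) hb1'
    have hm1 : C.Z m (C.jc (k + 1)) = 1 := by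
      have h3 : C.jc (k + 1) ∈ (univ : Finset (Fin t)).filter fun e => C.Z m e = 1 :=
        hsub (by rw [mem_filter]; exact ⟨mem_univ _, hk1⟩)
      exact (mem_filter.mp h3).2
    obtain ⟨i', hi', hmi'⟩ := C.mem_arc (C.jc (k + 1)) m hm1
    -- combine the two congruences for m
    have e1 : (k + i) % (2 * t) = m % (2 * t) := by
      rw [hmi, ← Nat.mod_add_mod, hb0, Nat.mod_add_mod]
    have e2 : (k + (1 + t + i')) % (2 * t) = m % (2 * t) := by
      rw [hmi']
      have h4 : (C.b (C.jc (k + 1)) + (t - 1) + (1 + t + i')) % (2 * t) =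
          (C.b (C.jc (k + 1)) + i') % (2 * t) := by
        rw [show C.b (C.jc (k + 1)) + (t - 1) + (1 + t + i') =
          (C.b (C.jc (k + 1)) + i') + 2 * t by omega, Nat.add_mod_right]
      rw [← h4, ← Nat.mod_add_mod, hb1', Nat.mod_add_mod]
    have e3 : i % (2 * t) = (1 + t + i') % (2 * t) := by
      have h5 : (k + i) % (2 * t) = (k + (1 + t + i')) % (2 * t) := by rw [e1, e2]
      exact Nat.ModEq.add_left_cancel' k h5
    have hi0 : i = 0 := by
      rw [Nat.mod_eq_of_lt (by omega)] at e3
      by_cases h6 : 1 + t + i' < 2 * t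
      · rw [Nat.mod_eq_of_lt h6] at e3; omega
      · rw [show 1 + t + i' = (1 + t + i' - 2 * t) + 2 * t by omega,
          Nat.add_mod_right, Nat.mod_eq_of_lt (by omega)] at e3
        omega
    have hkm : k = m := by
      rw [hi0, Nat.add_zero] at e1
      rw [Nat.mod_eq_of_lt hk, Nat.mod_eq_of_lt hm] at e1
      exact e1
    rw [hkm]

end Cyc


/-- shifting the summation window of a periodic function -/
lemma sum_shift {f : ℕ → ℝ} {n : ℕ} (hf : ∀ k, f (k + n) = f k) :
    ∀ b : ℕ, ∑ k ∈ range n, f (b + k) = ∑ k ∈ range n, f k := by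
  intro b
  induction b with
  | zero => simp
  | succ b ih =>
      have h1 : ∑ k ∈ range n, f (b + 1 + k) = ∑ k ∈ range n, f (b + (k + 1)) := by
        apply sum_congr rfl
        intro k _
        congr 1
        omega
      have h2 := Finset.sum_range_succ' (fun k => f (b + k)) n
      have h3 := Finset.sum_range_succ (fun k => f (b + k)) n
      have h4 : f (b + n) = f (b + 0) := by rw [Nat.add_zero, hf b]
      rw [h1]
      have : ∑ k ∈ range n, f (b + (k + 1)) = ∑ k ∈ range n, f (b + k) := by
        have := h2.symm.trans h3
        simp only [Nat.add_zero] at this h4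
        linarith [this, h4]
      rw [this, ih]

namespace Cyc
variable {t : ℕ} (C : Cyc t)

noncomputable def hB (k : ℕ) : ℝ := if C.Z k (C.jc k) = 1 then 1 else 0

lemma hB_shift (k : ℕ) : C.hB (k + t) = 1 - C.hB k := by
  unfold hB
  have h1 : C.Z (k + t) (C.jc (k + t)) = -C.Z k (C.jc k) := by
    rw [C.jc_add_t, congrFun (C.hshift k) (C.jc k), Pi.neg_apply]
  rcases C.hsign k (C.jc k) with h | h <;> rw [h] at h1 ⊢ <;> rw [h1] <;> norm_num

lemma hB_per (k : ℕ) : C.hB (k + 2 * t) = C.hB k := by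
  rw [show k + 2 * t = k + t + t by ring, C.hB_shift, C.hB_shift]
  ring

lemma hB_b (j : Fin t) : C.hB (C.b j) = 1 := by
  unfold hB
  have hjcb : C.jc (C.b j) = j := by
    unfold jc
    have h1 : (C.b j + (t - 1)) % t = C.mj j := by
      have h2 : (C.b j + (t - 1)) % t = (C.b j % t + (t - 1)) % t := by
        rw [Nat.mod_add_mod]
      rw [h2, C.b_mod_t, Nat.mod_add_mod,
        show C.mj j + 1 + (t - 1) = C.mj j + t by have := C.ht; omega,
        Nat.add_mod_right, Nat.mod_eq_of_lt (C.mj_lt j)]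
    conv_lhs => rw [show (⟨(C.b j + (t - 1)) % t, Nat.mod_lt _ C.ht⟩ : Fin t) =
      C.linv j from Fin.ext h1]
    exact C.l_linv j
  rw [hjcb, if_pos]
  have := C.arc1 j 0 C.ht
  rwa [Nat.add_zero] at this

lemma sum_locMax [DecidablePred C.locMax] (j : Fin t) :
    ∑ k ∈ (range (2 * t)).filter C.locMax, C.Z k j = 1 := by
  classical
  have ht := C.ht
  set G : ℕ → ℝ := fun k => C.hB k * (1 - C.hB (k + 1)) * C.Z k j with hG
  have hGper : ∀ k, G (k + 2 * t) = G k := by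
    intro k
    rw [hG]
    simp only
    rw [C.hB_per, show k + 2 * t + 1 = (k + 1) + 2 * t by ring, C.hB_per,
      congrFun (C.hper k) j]
  have step1 : ∑ k ∈ (range (2 * t)).filter C.locMax, C.Z k j = ∑ k ∈ range (2 * t), G k := by
    rw [sum_filter]
    apply sum_congr rfl
    intro k _
    rw [hG]
    simp only
    unfold locMax hB
    by_cases h1 : C.Z k (C.jc k) = 1 <;> by_cases h2 : C.Z (k + 1) (C.jc (k + 1)) = 1 <;>
      simp [h1, h2]
  have step2 : ∑ k ∈ range (2 * t), G k = ∑ k ∈ range (2 * t), G (C.b j + k) :=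
    (sum_shift hGper (C.b j)).symm
  have step3 : ∑ k ∈ range (2 * t), G (C.b j + k) =
      ∑ i ∈ range t, G (C.b j + i) + ∑ i ∈ range t, G (C.b j + (t + i)) := by
    rw [two_mul, Finset.sum_range_add]
  have pair : ∀ i < t, G (C.b j + i) + G (C.b j + (t + i)) =
      C.hB (C.b j + i) - C.hB (C.b j + i + 1) := by
    intro i hi
    have e1 : C.Z (C.b j + i) j = 1 := C.arc1 j i hi
    have e2 : C.Z (C.b j + (t + i)) j = -1 := by
      have := C.arc2 j i hi
      rwa [show C.b j + t + i = C.b j + (t + i) by ring] at this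
    have e3 : C.hB (C.b j + (t + i)) = 1 - C.hB (C.b j + i) := by
      rw [show C.b j + (t + i) = (C.b j + i) + t by ring, C.hB_shift]
    have e4 : C.hB (C.b j + (t + i) + 1) = 1 - C.hB (C.b j + i + 1) := by
      rw [show C.b j + (t + i) + 1 = (C.b j + i + 1) + t by ring, C.hB_shift]
    rw [hG]
    simp only
    rw [e1, e2, e3, e4]
    ring
  have step4 : ∑ i ∈ range t, G (C.b j + i) + ∑ i ∈ range t, G (C.b j + (t + i)) =
      ∑ i ∈ range t, (C.hB (C.b j + i) - C.hB (C.b j + i + 1)) := by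
    rw [← sum_add_distrib]
    exact sum_congr rfl fun i hi => pair i (mem_range.mp hi)
  have step5 : ∑ i ∈ range t, (C.hB (C.b j + i) - C.hB (C.b j + i + 1)) =
      C.hB (C.b j + 0) - C.hB (C.b j + t) := by
    have := Finset.sum_range_sub' (fun i => C.hB (C.b j + i)) t
    rw [← this]
    apply sum_congr rfl
    intro i _
    rfl
  rw [step1, step2, step3, step4, step5, Nat.add_zero, C.hB_b, C.hB_shift, C.hB_b]
  ring

/-- linear independence of the first t vertices -/
lemma indep {d : ℕ → ℝ} (h : ∀ j, ∑ k ∈ range t, d k * C.Z k j = 0) :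
    ∀ m < t, d m = 0 := by
  have ht := C.ht
  -- values of Z k at coordinate l m
  have hval : ∀ m (hm : m < t) k, k < t →
      C.Z k (C.l ⟨m, hm⟩) = (if k ≤ m then 1 else -1) * C.Z 0 (C.l ⟨m, hm⟩) := by
    intro m hm k hk
    have hmj : C.mj (C.l ⟨m, hm⟩) = m := by unfold mj; rw [C.linv_l]
    by_cases hkm : k ≤ m
    · rw [if_pos hkm, one_mul]
      have hside : ∀ e < k, (0 + e) % t ≠ (C.linv (C.l ⟨m, hm⟩) : ℕ) := by
        intro e he
        rw [Nat.zero_add, Nat.mod_eq_of_lt (by omega), C.linv_l]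
        exact (by omega : e ≠ m)
      have := C.const (C.l ⟨m, hm⟩) 0 k hside
      rwa [Nat.zero_add] at this
    · rw [if_neg hkm, neg_one_mul]
      have h1 : C.Z k (C.l ⟨m, hm⟩) = C.Z (m + 1) (C.l ⟨m, hm⟩) := by
        have hside : ∀ e < k - (m + 1), (m + 1 + e) % t ≠ (C.linv (C.l ⟨m, hm⟩) : ℕ) := by
          intro e he
          rw [Nat.mod_eq_of_lt (by omega), C.linv_l]
          exact (by omega : m + 1 + e ≠ m)
        have := C.const (C.l ⟨m, hm⟩) (m + 1) (k - (m + 1)) hside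
        rwa [show m + 1 + (k - (m + 1)) = k by omega] at this
      have h2 : C.Z (m + 1) (C.l ⟨m, hm⟩) = -C.Z m (C.l ⟨m, hm⟩) := by
        apply C.neg_of_ne
        apply (C.hstep m (C.l ⟨m, hm⟩)).mpr
        congr 1
        ext
        simp [Nat.mod_eq_of_lt hm]
      have h3 : C.Z m (C.l ⟨m, hm⟩) = C.Z 0 (C.l ⟨m, hm⟩) := by
        have hside : ∀ e < m, (0 + e) % t ≠ (C.linv (C.l ⟨m, hm⟩) : ℕ) := by
          intro e he
          rw [Nat.zero_add, Nat.mod_eq_of_lt (by omega), C.linv_l]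
          exact (by omega : e ≠ m)
        have := C.const (C.l ⟨m, hm⟩) 0 m hside
        rwa [Nat.zero_add] at this
      rw [h1, h2, h3]
  -- partial-sum identities
  have hQ : ∀ m < t, ∑ k ∈ range t, (if k ≤ m then d k else -d k) = 0 := by
    intro m hm
    have h0 := h (C.l ⟨m, hm⟩)
    have h1 : ∑ k ∈ range t, d k * C.Z k (C.l ⟨m, hm⟩) =
        (∑ k ∈ range t, (if k ≤ m then d k else -d k)) * C.Z 0 (C.l ⟨m, hm⟩) := by
      rw [sum_mul]
      apply sum_congr rfl
      intro k hk
      rw [hval m hm k (mem_range.mp hk)]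
      by_cases hkm : k ≤ m <;> simp [hkm] <;> ring
    rw [h1] at h0
    rcases mul_eq_zero.mp h0 with h2 | h2
    · exact h2
    · exact absurd h2 (C.sign_ne_zero 0 _)
  -- conclude d = 0
  have hpos : ∀ m, 0 < m → m < t → d m = 0 := by
    intro m hm0 hmt
    have hq1 := hQ m hmt
    have hq2 := hQ (m - 1) (by omega)
    have h3 : ∑ k ∈ range t, ((if k ≤ m then d k else -d k) -
        (if k ≤ m - 1 then d k else -d k)) = 0 := by
      rw [sum_sub_distrib, hq1, hq2, sub_zero]
    have h4 : ∀ k ∈ range t, ((if k ≤ m then d k else -d k) -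
        (if k ≤ m - 1 then d k else -d k)) = if k = m then 2 * d k else 0 := by
      intro k _
      by_cases h5 : k = m
      · rw [if_pos h5, if_pos (by omega), if_neg (by omega)]; ring
      · rw [if_neg h5]
        by_cases h6 : k ≤ m - 1
        · rw [if_pos (by omega), if_pos h6]; ring
        · rw [if_neg (by omega), if_neg h6]; ring
    rw [sum_congr rfl h4] at h3
    rw [Finset.sum_ite_eq' (range t) m (fun k => 2 * d k), if_pos (mem_range.mpr hmt)] at h3
    linarith
  intro m hm
  rcases Nat.eq_zero_or_pos m with hm0 | hm0
  · -- d 0 = 0 : total sum is zero and all the others vanish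
    subst hm0
    have htot := hQ (t - 1) (by omega)
    have h5 : ∀ k ∈ range t, (if k ≤ t - 1 then d k else -d k) = d k := by
      intro k hk
      rw [if_pos (by have := mem_range.mp hk; omega)]
    rw [sum_congr rfl h5] at htot
    have h6 : ∀ k ∈ range t, d k = if k = 0 then d k else 0 := by
      intro k hk
      by_cases h7 : k = 0
      · rw [if_pos h7]
      · rw [if_neg h7, hpos k (by omega) (mem_range.mp hk)]
    rw [sum_congr rfl h6, Finset.sum_ite_eq' (range t) 0 (fun k => d k),
      if_pos (mem_range.mpr ht)] at htot
    exact htot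
  · exact hpos m hm0 hm

/-- injectivity on a period -/
lemma inj {k m : ℕ} (hk : k < 2 * t) (hm : m < 2 * t) (h : C.Z k = C.Z m) : k = m := by
  have ht := C.ht
  have j0 : Fin t := ⟨0, ht⟩
  -- two base facts
  have fact1 : ∀ a b, a < t → b < t → C.Z a = C.Z b → a = b := by
    intro a b ha hb hab
    by_contra hne
    have hsum : ∀ j, ∑ x ∈ range t,
        (((if x = a then (1:ℝ) else 0) - (if x = b then 1 else 0)) * C.Z x j) = 0 := by
      intro j
      have e1 : ∀ x ∈ range t, ((if x = a then (1:ℝ) else 0) - (if x = b then 1 else 0)) *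
          C.Z x j = (if x = a then C.Z x j else 0) - (if x = b then C.Z x j else 0) := by
        intro x _
        by_cases h1 : x = a
        · by_cases h2 : x = b
          · exact absurd (h1.symm.trans h2) hne
          · rw [if_pos h1, if_neg h2, if_pos h1, if_neg h2]; ring
        · by_cases h2 : x = b
          · rw [if_neg h1, if_pos h2, if_neg h1, if_pos h2]; ring
          · rw [if_neg h1, if_neg h2, if_neg h1, if_neg h2]; ring
      rw [sum_congr rfl e1, sum_sub_distrib,
        Finset.sum_ite_eq' (range t) a (fun x => C.Z x j), if_pos (mem_range.mpr ha),
        Finset.sum_ite_eq' (range t) b (fun x => C.Z x j), if_pos (mem_range.mpr hb),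
        congrFun hab j, sub_self]
    have := C.indep hsum a ha
    rw [if_pos rfl, if_neg hne] at this
    norm_num at this
  have fact2 : ∀ a b, a < t → b < t → C.Z a = -C.Z b → False := by
    intro a b ha hb hab
    by_cases hne : a = b
    · subst hne
      have := congrFun hab ⟨0, ht⟩
      rw [Pi.neg_apply] at this
      rcases C.hsign a ⟨0, ht⟩ with h1 | h1 <;> rw [h1] at this <;> norm_num at this
    · have hsum : ∀ j, ∑ x ∈ range t,
          (((if x = a then (1:ℝ) else 0) + (if x = b then 1 else 0)) * C.Z x j) = 0 := by
        intro j
        have e1 : ∀ x ∈ range t, ((if x = a then (1:ℝ) else 0) + (if x = b then 1 else 0)) *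
            C.Z x j = (if x = a then C.Z x j else 0) + (if x = b then C.Z x j else 0) := by
          intro x _
          by_cases h1 : x = a
          · by_cases h2 : x = b
            · exact absurd (h1.symm.trans h2) hne
            · rw [if_pos h1, if_neg h2, if_pos h1, if_neg h2]; ring
          · by_cases h2 : x = b
            · rw [if_neg h1, if_pos h2, if_neg h1, if_pos h2]; ring
            · rw [if_neg h1, if_neg h2, if_neg h1, if_neg h2]; ring
        rw [sum_congr rfl e1, sum_add_distrib,
          Finset.sum_ite_eq' (range t) a (fun x => C.Z x j), if_pos (mem_range.mpr ha),
          Finset.sum_ite_eq' (range t) b (fun x => C.Z x j), if_pos (mem_range.mpr hb),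
          congrFun hab j, Pi.neg_apply, neg_add_cancel]
      have := C.indep hsum a ha
      rw [if_pos rfl, if_neg hne] at this
      norm_num at this
  by_cases h1 : k < t <;> by_cases h2 : m < t
  · exact fact1 k m h1 h2 h
  · exfalso
    apply fact2 k (m - t) h1 (by omega)
    rw [h]
    conv_lhs => rw [show m = (m - t) + t by omega]
    rw [C.hshift]
  · exfalso
    apply fact2 m (k - t) h2 (by omega)
    rw [← h]
    conv_lhs => rw [show k = (k - t) + t by omega]
    rw [C.hshift]
  · have h3 : C.Z (k - t) = C.Z (m - t) := by
      have e1 : C.Z k = -C.Z (k - t) := by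
        conv_lhs => rw [show k = (k - t) + t by omega]
        rw [C.hshift]
      have e2 : C.Z m = -C.Z (m - t) := by
        conv_lhs => rw [show m = (m - t) + t by omega]
        rw [C.hshift]
      rw [e1, e2] at h
      exact neg_inj.mp h
    have := fact1 (k - t) (m - t) (by omega) (by omega) h3
    omega

end Cyc


lemma build (t : ℕ) (ht : 0 < t)
    (R : Fin (t + 1) → Fin t → ℝ)
    (hsign : ∀ k j, R k j = -1 ∨ R k j = 1)
    (hRt : R (Fin.last t) = -(R 0))
    (l : Fin t → Fin t) (hl : Function.Bijective l)
    (hstep : ∀ (k : Fin t) (j : Fin t), R k.castSucc j ≠ R k.succ j ↔ j = l k) :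
    ∃ C : Cyc t, C.l = l ∧ ∀ (k : ℕ) (h : k < t), C.Z k = R (Fin.castSucc ⟨k, h⟩) := by
  refine ⟨⟨fun k j => (if (k / t) % 2 = 0 then (1 : ℝ) else -1) *
      R (Fin.castSucc ⟨k % t, Nat.mod_lt k ht⟩) j, l, ht, hl, ?_, ?_, ?_⟩, rfl, ?_⟩
  · -- signs
    intro k j
    rcases hsign (Fin.castSucc ⟨k % t, Nat.mod_lt k ht⟩) j with h | h <;>
      rw [h] <;> split_ifs <;> norm_num
  · -- shift
    intro k
    funext j
    dsimp only [Pi.neg_apply]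
    have hd : (k + t) / t = k / t + 1 := Nat.add_div_right _ ht
    have hc : Fin.castSucc ⟨(k + t) % t, Nat.mod_lt (k + t) ht⟩ =
        Fin.castSucc ⟨k % t, Nat.mod_lt k ht⟩ := by
      ext
      exact Nat.add_mod_right _ _
    rw [hd, hc]
    by_cases he : (k / t) % 2 = 0
    · rw [if_pos he, if_neg (by omega)]
      ring
    · rw [if_neg he, if_pos (by omega)]
      ring
  · -- step
    intro k j
    have hr : k % t < t := Nat.mod_lt k ht
    have hkey := Nat.div_add_mod k t
    have hd1 : (k + 1) / t = k / t + (k % t + 1) / t := by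
      conv_lhs => rw [show k + 1 = t * (k / t) + (k % t + 1) by omega]
      rw [Nat.mul_add_div ht]
    have hm1 : (k + 1) % t = (k % t + 1) % t := by
      conv_lhs => rw [show k + 1 = t * (k / t) + (k % t + 1) by omega]
      rw [Nat.mul_add_mod]
    have hcc : Fin.castSucc (⟨k % t, Nat.mod_lt k ht⟩ : Fin t) =
        Fin.castSucc (⟨k % t, hr⟩ : Fin t) := rfl
    by_cases hc : k % t + 1 < t
    · -- within a block
      have hd2 : (k + 1) / t = k / t := by rw [hd1, Nat.div_eq_of_lt hc, Nat.add_zero]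
      have hm2 : (k + 1) % t = k % t + 1 := by rw [hm1, Nat.mod_eq_of_lt hc]
      have hfs : Fin.castSucc ⟨(k + 1) % t, Nat.mod_lt (k + 1) ht⟩ =
          (⟨k % t, hr⟩ : Fin t).succ := by
        ext
        simp only [Fin.coe_castSucc, Fin.val_succ]
        exact hm2
      rw [hd2, hfs, hcc]
      rw [← hstep ⟨k % t, hr⟩ j]
      by_cases hp : (k / t) % 2 = 0
      · rw [if_pos hp]
        constructor
        · intro hx hy
          apply hx
          rw [hy]
        · intro hx hy
          apply hx
          rw [one_mul, one_mul] at hy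
          rw [hy]
      · rw [if_neg hp]
        constructor
        · intro hx hy
          apply hx
          rw [hy]
        · intro hx hy
          apply hx
          rw [neg_one_mul, neg_one_mul] at hy
          exact (neg_injective hy).symm
    · -- block boundary : k % t = t - 1
      have hc2 : k % t = t - 1 := by omega
      have hd2 : (k + 1) / t = k / t + 1 := by
        rw [hd1, show k % t + 1 = t by omega, Nat.div_self ht]
      have hm2 : (k + 1) % t = 0 := by
        rw [hm1, show k % t + 1 = t by omega, Nat.mod_self]
      have hf0 : (⟨(k + 1) % t, Nat.mod_lt (k + 1) ht⟩ : Fin t).castSucc = (0 : Fin (t + 1)) := by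
        ext
        exact hm2
      have hzero : R (Fin.castSucc ⟨(k + 1) % t, Nat.mod_lt (k + 1) ht⟩) = R 0 := by
        rw [hf0]
      have hRlast : -(R 0 j) = R (⟨k % t, hr⟩ : Fin t).succ j := by
        have h1 : Fin.last t = (⟨k % t, hr⟩ : Fin t).succ := by
          ext
          simp only [Fin.val_last, Fin.val_succ]
          omega
        rw [← h1, hRt, Pi.neg_apply]
      rw [hd2, hzero, hcc]
      rw [← hstep ⟨k % t, hr⟩ j]
      constructor
      · intro hx hy
        apply hx
        rw [hy, ← hRlast]
        by_cases h1 : (k / t) % 2 = 0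
        · rw [if_pos h1, if_neg (by omega)]
          ring
        · rw [if_neg h1, if_pos (by omega)]
          ring
      · intro hy hx
        apply hy
        by_cases h1 : (k / t) % 2 = 0
        · rw [if_neg (by omega : ¬(k / t + 1) % 2 = 0), if_pos h1, one_mul, neg_one_mul] at hx
          rw [← neg_eq_iff_eq_neg.mpr hx.symm] at hRlast
          rw [← hRlast]
          ring
        · rw [if_pos (by omega : (k / t + 1) % 2 = 0), if_neg h1, one_mul, neg_one_mul] at hx
          rw [hx] at hRlast
          rw [← hRlast]
          ring
  · -- values on the first block
    intro k h
    funext j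
    dsimp only
    rw [Nat.div_eq_of_lt h, if_pos (by norm_num), one_mul]
    have h1 : (⟨k % t, Nat.mod_lt k ht⟩ : Fin t) = ⟨k, h⟩ := by
      ext
      exact Nat.mod_eq_of_lt h
    rw [h1]


end Stmt12

open Finset Matrix

theorem stmt_12 (t : ℕ) (ht : 0 < t)
    (R : Fin (t + 1) → Fin t → ℝ)
    (hsign : ∀ k j, R k j = -1 ∨ R k j = 1)
    (hRt : R (Fin.last t) = -(R 0))
    (l : Fin t → Fin t) (hl : Function.Bijective l)
    (hstep : ∀ (k : Fin t) (j : Fin t), R k.castSucc j ≠ R k.succ j ↔ j = l k)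
    (V : Finset (Fin t → ℝ))
    (hV : V = (Finset.univ.image fun k : Fin t => R k.castSucc)
        ∪ (Finset.univ.image fun k : Fin t => -(R k.castSucc)))
    (T : Fin t → ℝ) (hT : ∀ j, T j = -1 ∨ T j = 1)
    (W F : Finset (Fin t → ℝ))
    (hW : W = V.image fun X j => if T j = -1 then -X j else X j)
    (hF : F = (W.filter fun O => ∀ P ∈ W,
        (Finset.univ.filter fun e => O e = 1) ⊆ (Finset.univ.filter fun e => P e = 1)
          → (Finset.univ.filter fun e => O e = 1)
              = (Finset.univ.filter fun e => P e = 1)).image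
      fun X j => if T j = -1 then -X j else X j) :
    (∑ q ∈ F, q) = T ∧
    ∀ S : Finset (Fin t → ℝ), S ⊆ V → (∑ q ∈ S, q) = T → F ⊆ S := by
  classical
  obtain ⟨CX, hCXl, hCXv⟩ := Stmt12.build t ht R hsign hRt l hl hstep
  have hTne : ∀ j, T j ≠ 0 := by
    intro j; rcases hT j with h | h <;> rw [h] <;> norm_num
  have hTT : ∀ j, T j * T j = 1 := by
    intro j; rcases hT j with h | h <;> rw [h] <;> norm_num
  -- V is the image of the cycle
  have hVX : V = (range (2 * t)).image CX.Z := by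
    rw [hV]
    ext q
    simp only [mem_union, mem_image, mem_univ, true_and, mem_range]
    constructor
    · rintro (⟨k, rfl⟩ | ⟨k, rfl⟩)
      · refine ⟨(k : ℕ), by omega, ?_⟩
        rw [hCXv k k.isLt]
      · refine ⟨(k : ℕ) + t, by omega, ?_⟩
        rw [CX.hshift, hCXv k k.isLt]
    · rintro ⟨k, hk, rfl⟩
      by_cases h : k < t
      · left
        exact ⟨⟨k, h⟩, (hCXv k h).symm⟩
      · right
        refine ⟨⟨k - t, by omega⟩, ?_⟩
        conv_rhs => rw [show k = (k - t) + t by omega]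
        rw [CX.hshift, hCXv (k - t) (by omega)]
  -- the flipped cycle
  obtain ⟨CY, hCYl, hCYv⟩ : ∃ C : Stmt12.Cyc t, C.l = l ∧
      C.Z = fun k j => T j * CX.Z k j := by
    refine ⟨⟨fun k j => T j * CX.Z k j, l, ht, hl, ?_, ?_, ?_⟩, rfl, rfl⟩
    · intro k j
      rcases hT j with h | h <;> rcases CX.hsign k j with h2 | h2 <;> rw [h, h2] <;> norm_num
    · intro k
      funext j
      dsimp only [Pi.neg_apply]
      rw [congrFun (CX.hshift k) j, Pi.neg_apply]
      ring
    · intro k j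
      constructor
      · intro hx
        have h3 := (CX.hstep k j).mp (fun he => hx (by rw [he]))
        rw [hCXl] at h3
        exact h3
      · intro hy he
        have h3 : j = CX.l ⟨k % t, Nat.mod_lt k CX.ht⟩ := by rw [hCXl]; exact hy
        exact (CX.hstep k j).mpr h3 (mul_left_cancel₀ (hTne j) he)
  -- flip facts
  have hflipXY : ∀ k, (fun j => if T j = -1 then -CX.Z k j else CX.Z k j) = CY.Z k := by
    intro k
    funext j
    rw [hCYv]
    dsimp only
    rcases hT j with h | h <;> rw [h] <;> norm_num
  have hflipYX : ∀ k, (fun j => if T j = -1 then -CY.Z k j else CY.Z k j) = CX.Z k := by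
    intro k
    funext j
    rw [hCYv]
    dsimp only
    rcases hT j with h | h <;> rw [h] <;> norm_num
  -- W is the image of the flipped cycle
  have hWY : W = (range (2 * t)).image CY.Z := by
    rw [hW, hVX, Finset.image_image]
    apply Finset.image_congr
    intro k _
    exact hflipXY k
  -- F as an image over the local maxima
  set MF : Finset ℕ := (range (2 * t)).filter CY.locMax with hMF
  have hWfilter : (W.filter fun O => ∀ P ∈ W,
      (Finset.univ.filter fun e => O e = 1) ⊆ (Finset.univ.filter fun e => P e = 1)
        → (Finset.univ.filter fun e => O e = 1)
            = (Finset.univ.filter fun e => P e = 1)) = MF.image CY.Z := by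
    rw [hWY, Finset.filter_image]
    congr 1
    apply Finset.filter_congr
    intro k hk
    exact CY.maxpos_iff k (mem_range.mp hk)
  have hFX : F = MF.image CX.Z := by
    rw [hF, hWfilter, Finset.image_image]
    apply Finset.image_congr
    intro k _
    exact hflipYX k
  -- injectivity on any subset of range (2t)
  have hinj : ∀ (A : Finset ℕ), A ⊆ range (2 * t) →
      ∀ x ∈ A, ∀ y ∈ A, CX.Z x = CX.Z y → x = y := by
    intro A hA x hx y hy hxy
    exact CX.inj (mem_range.mp (hA hx)) (mem_range.mp (hA hy)) hxy
  have hMFsub : MF ⊆ range (2 * t) := filter_subset _ _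
  -- the sum over F equals T
  have hFsum : ∀ j, ∑ k ∈ MF, CX.Z k j = T j := by
    intro j
    have h1 : ∀ k ∈ MF, CX.Z k j = T j * CY.Z k j := by
      intro k _
      rw [hCYv]
      dsimp only
      rw [← mul_assoc, hTT j, one_mul]
    rw [sum_congr rfl h1, ← mul_sum, CY.sum_locMax j, mul_one]
  have goal1 : (∑ q ∈ F, q) = T := by
    funext j
    rw [Finset.sum_apply, hFX, Finset.sum_image (hinj MF hMFsub)]
    exact hFsum j
  refine ⟨goal1, ?_⟩
  -- minimality
  intro S hS hsum
  set K : Finset ℕ := (range (2 * t)).filter (fun k => CX.Z k ∈ S) with hK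
  have hKsub : K ⊆ range (2 * t) := filter_subset _ _
  have hSK : S = K.image CX.Z := by
    ext q
    constructor
    · intro hq
      have h1 : q ∈ (range (2 * t)).image CX.Z := by rw [← hVX]; exact hS hq
      obtain ⟨k, hk, rfl⟩ := mem_image.mp h1
      exact mem_image.mpr ⟨k, mem_filter.mpr ⟨hk, hq⟩, rfl⟩
    · intro hq
      obtain ⟨k, hk, rfl⟩ := mem_image.mp hq
      exact (mem_filter.mp hk).2
  -- representation over range t
  have key : ∀ (A : Finset ℕ), A ⊆ range (2 * t) → ∀ j, ∑ k ∈ A, CX.Z k j =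
      ∑ k ∈ range t, (((if k ∈ A then (1 : ℝ) else 0) -
        (if k + t ∈ A then 1 else 0)) * CX.Z k j) := by
    intro A hA j
    have h1 : ∑ k ∈ A, CX.Z k j = ∑ k ∈ range (2 * t), (if k ∈ A then CX.Z k j else 0) := by
      rw [Finset.sum_ite_mem, Finset.inter_eq_right.mpr hA]
    rw [h1, two_mul, Finset.sum_range_add, ← sum_add_distrib]
    apply sum_congr rfl
    intro i _
    have h2 : CX.Z (t + i) j = -CX.Z i j := by
      rw [add_comm t i, congrFun (CX.hshift i) j, Pi.neg_apply]
    rw [h2, add_comm t i]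
    by_cases hi1 : i ∈ A <;> by_cases hi2 : i + t ∈ A <;>
      simp only [hi1, hi2, if_true, if_false] <;> ring
  have hSsum : ∀ j, ∑ k ∈ K, CX.Z k j = T j := by
    intro j
    have h1 := congrFun hsum j
    rw [Finset.sum_apply, hSK, Finset.sum_image (hinj K hKsub)] at h1
    exact h1
  -- equality of coefficients
  have hcoef : ∀ k < t, ((if k ∈ MF then (1 : ℝ) else 0) - (if k + t ∈ MF then 1 else 0)) =
      ((if k ∈ K then (1 : ℝ) else 0) - (if k + t ∈ K then 1 else 0)) := by
    have h0 : ∀ j, ∑ k ∈ range t,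
        ((((if k ∈ MF then (1 : ℝ) else 0) - (if k + t ∈ MF then 1 else 0)) -
          ((if k ∈ K then (1 : ℝ) else 0) - (if k + t ∈ K then 1 else 0))) * CX.Z k j) = 0 := by
      intro j
      have h1 := key MF hMFsub j
      have h2 := key K hKsub j
      rw [hFsum j] at h1
      rw [hSsum j] at h2
      have h3 : ∀ k ∈ range t,
          ((((if k ∈ MF then (1 : ℝ) else 0) - (if k + t ∈ MF then 1 else 0)) -
            ((if k ∈ K then (1 : ℝ) else 0) - (if k + t ∈ K then 1 else 0))) * CX.Z k j) =
          (((if k ∈ MF then (1 : ℝ) else 0) - (if k + t ∈ MF then 1 else 0)) * CX.Z k j) -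
          (((if k ∈ K then (1 : ℝ) else 0) - (if k + t ∈ K then 1 else 0)) * CX.Z k j) := by
        intro k _
        ring
      rw [sum_congr rfl h3, sum_sub_distrib, ← h1, ← h2, sub_self]
    intro k hk
    have := CX.indep h0 k hk
    linarith [this]
  -- conclude F ⊆ S
  intro q hq
  rw [hFX] at hq
  obtain ⟨k, hkM, rfl⟩ := mem_image.mp hq
  have hk2t : k < 2 * t := mem_range.mp (hMFsub hkM)
  have hkloc : CY.locMax k := (mem_filter.mp hkM).2
  by_cases hklt : k < t
  · have hnot : k + t ∉ MF := by
      intro hmem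
      exact CY.antipodal hkloc (mem_filter.mp hmem).2
    have h1 := hcoef k hklt
    rw [if_pos hkM, if_neg hnot] at h1
    have h2 : k ∈ K := by
      by_contra hc
      rw [if_neg hc] at h1
      by_cases hc2 : k + t ∈ K
      · rw [if_pos hc2] at h1; norm_num at h1
      · rw [if_neg hc2] at h1; norm_num at h1
    rw [hSK]
    exact mem_image.mpr ⟨k, h2, rfl⟩
  · set k' := k - t with hk'
    have hkk : k = k' + t := by omega
    have hnot : k' ∉ MF := by
      intro hmem
      apply CY.antipodal (mem_filter.mp hmem).2
      rw [← hkk]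
      exact hkloc
    have h1 := hcoef k' (by omega)
    rw [if_neg hnot, if_pos (by rw [← hkk]; exact hkM)] at h1
    have h2 : k' + t ∈ K := by
      by_contra hc
      rw [if_neg hc] at h1
      by_cases hc2 : k' ∈ K
      · rw [if_pos hc2] at h1; norm_num at h1
      · rw [if_neg hc2] at h1; norm_num at h1
    rw [hSK]
    refine mem_image.mpr ⟨k' + t, h2, ?_⟩
    rw [← hkk]
end
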